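/- arXiv:2502.01761 — 5 statements merged into one kernel-verified Lean document; each statement's English description precedes it below -/
import Mathlib

section
/- Let R₂ ⊂ R₁ be real matrix systems on ℂ^n and π : H(R₁) → H(R₂) the orthogonal projection with respect to the Frobenius inner product. Then π(C(R₁)^∨) = C(R₂)^∨ and π(D(R₁)) = D(R₂). -/
open Matrix ComplexOrder

/-- The dual cone `C(R)^∨` of the positive cone of a real matrix system `R`,
inside the hermitian part of `R`, w.r.t. the inner product `Re tr(A* B)`. -/
def dualCone (n : ℕ) (R : Set (Matrix (Fin n) (Fin n) ℂ)) :
    Set (Matrix (Fin n) (Fin n) ℂ) :=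
  {A | A ∈ R ∧ Aᴴ = A ∧ ∀ B ∈ R, B.PosSemidef → 0 ≤ ((A * B).trace).re}

/-- The density matrices `D(R)` of a real matrix system `R`. -/
def dmat (n : ℕ) (R : Set (Matrix (Fin n) (Fin n) ℂ)) :
    Set (Matrix (Fin n) (Fin n) ℂ) :=
  {ρ | ρ ∈ dualCone n R ∧ ρ.trace = 1}

variable {n : ℕ}

abbrev Esp (n : ℕ) := EuclideanSpace ℝ (Fin n × Fin n × Fin 2)

noncomputable def phi (n : ℕ) : Matrix (Fin n) (Fin n) ℂ ≃ₗ[ℝ] Esp n where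
  toFun A := WithLp.toLp 2 fun p : Fin n × Fin n × Fin 2 => if p.2.2 = 0 then (A p.1 p.2.1).re else (A p.1 p.2.1).im
  invFun x := fun i j => ⟨x (i, j, 0), x (i, j, 1)⟩
  map_add' A B := by
    ext p; by_cases h : p.2.2 = 0 <;> simp [h]
  map_smul' c A := by
    ext p; by_cases h : p.2.2 = 0 <;> simp [h]
  left_inv A := by
    funext i j; apply Complex.ext <;> simp
  right_inv x := by
    ext p
    obtain ⟨i, j, k⟩ := p
    fin_cases k <;> simp

lemma phi_inner (A B : Matrix (Fin n) (Fin n) ℂ) :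
    (inner ℝ (phi n A) (phi n B) : ℝ) = ((Aᴴ * B).trace).re := by
  simp only [PiLp.inner_apply, RCLike.inner_apply', starRingEnd_apply, star_trivial]
  have hr : ((Aᴴ * B).trace).re
      = ∑ j, ∑ i, ((A i j).re * (B i j).re + (A i j).im * (B i j).im) := by
    rw [Matrix.trace, Complex.re_sum]
    refine Finset.sum_congr rfl fun j _ => ?_
    rw [Matrix.diag_apply, Matrix.mul_apply, Complex.re_sum]
    refine Finset.sum_congr rfl fun i _ => ?_
    simp [Matrix.conjTranspose_apply, Complex.mul_re]
  have hl : (∑ p : Fin n × Fin n × Fin 2,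
        phi n A p * phi n B p)
      = ∑ i, ∑ j, ((A i j).re * (B i j).re + (A i j).im * (B i j).im) := by
    simp only [Fintype.sum_prod_type]
    refine Finset.sum_congr rfl fun i _ => ?_
    refine Finset.sum_congr rfl fun j _ => ?_
    rw [Fin.sum_univ_two]
    simp [phi]; rfl
  rw [hl, hr]
  exact Finset.sum_comm


lemma quad_conj {X : Matrix (Fin n) (Fin n) ℂ} (hX : Xᴴ = X) (v : Fin n → ℂ) :
    (star v ⬝ᵥ X *ᵥ v).im = 0 := by
  rw [← Complex.conj_eq_iff_im]
  simp only [dotProduct, mulVec, Pi.star_apply, Complex.star_def, map_sum, _root_.map_mul,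
    Finset.mul_sum, Complex.conj_conj]
  rw [Finset.sum_comm]
  refine Finset.sum_congr rfl fun i _ => Finset.sum_congr rfl fun j _ => ?_
  have hx : (starRingEnd ℂ) (X j i) = X i j := by
    have := congrFun (congrFun hX i) j
    simpa [Matrix.conjTranspose_apply] using this
  rw [hx]
  ring

lemma quad_re_bound (X : Matrix (Fin n) (Fin n) ℂ) (v : Fin n → ℂ) :
    |(star v ⬝ᵥ X *ᵥ v).re| ≤ (∑ i, ∑ j, ‖X i j‖) * (∑ i, Complex.normSq (v i)) := by
  set S := ∑ i, Complex.normSq (v i) with hS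
  have hS0 : 0 ≤ S := Finset.sum_nonneg fun i _ => Complex.normSq_nonneg _
  have key : ∀ i j, ‖star v i * (X i j * v j)‖ ≤ ‖X i j‖ * S := by
    intro i j
    have h1 : ‖v i‖ ^ 2 ≤ S := by
      rw [Complex.sq_norm]
      exact Finset.single_le_sum (fun k _ => Complex.normSq_nonneg (v k)) (Finset.mem_univ i)
    have h2 : ‖v j‖ ^ 2 ≤ S := by
      rw [Complex.sq_norm]
      exact Finset.single_le_sum (fun k _ => Complex.normSq_nonneg (v k)) (Finset.mem_univ j)
    have ha := norm_nonneg (v i)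
    have hb := norm_nonneg (v j)
    have hvv : ‖v i‖ * ‖v j‖ ≤ S := by nlinarith
    simp only [Pi.star_apply, Complex.star_def, norm_mul, Complex.norm_conj]
    nlinarith [hvv, norm_nonneg (X i j), ha, hb, hS0]
  calc |(star v ⬝ᵥ X *ᵥ v).re| ≤ ‖star v ⬝ᵥ X *ᵥ v‖ := Complex.abs_re_le_norm _
    _ ≤ ∑ i, ∑ j, ‖star v i * (X i j * v j)‖ := by
        simp only [dotProduct, mulVec, Finset.mul_sum, dotProduct]
        exact le_trans (norm_sum_le _ _)
          (Finset.sum_le_sum fun i _ => norm_sum_le _ _)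
    _ ≤ ∑ i, ∑ j, ‖X i j‖ * S :=
        Finset.sum_le_sum fun i _ => Finset.sum_le_sum fun j _ => key i j
    _ = (∑ i, ∑ j, ‖X i j‖) * S := by rw [Finset.sum_mul]; simp [Finset.sum_mul]

lemma smul_one_sub_posSemidef {X : Matrix (Fin n) (Fin n) ℂ} (hX : Xᴴ = X)
    {c : ℝ} (hc : ∑ i, ∑ j, ‖X i j‖ ≤ c) :
    ((c : ℝ) • (1 : Matrix (Fin n) (Fin n) ℂ) - X).PosSemidef := by
  refine Matrix.PosSemidef.of_dotProduct_mulVec_nonneg ?_ ?_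
  · unfold Matrix.IsHermitian
    rw [Matrix.conjTranspose_sub, Matrix.conjTranspose_smul, hX, Matrix.conjTranspose_one,
      star_trivial]
  · intro v
    have hsplit : star v ⬝ᵥ ((c : ℝ) • (1 : Matrix (Fin n) (Fin n) ℂ) - X) *ᵥ v
        = (c : ℂ) * (star v ⬝ᵥ v) - star v ⬝ᵥ X *ᵥ v := by
      rw [Matrix.sub_mulVec, dotProduct_sub]
      congr 1
      rw [Matrix.smul_mulVec, Matrix.one_mulVec, dotProduct_smul]
      simp [Complex.real_smul]
    have hvv : (star v ⬝ᵥ v) = ((∑ i, Complex.normSq (v i) : ℝ) : ℂ) := by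
      simp only [dotProduct, Pi.star_apply]
      push_cast
      refine Finset.sum_congr rfl fun i _ => ?_
      rw [mul_comm, Complex.star_def, Complex.mul_conj]
    rw [hsplit, hvv]
    set S := ∑ i, Complex.normSq (v i) with hSdef
    have hS0 : 0 ≤ S := Finset.sum_nonneg fun i _ => Complex.normSq_nonneg _
    have him := quad_conj hX v
    have hre := quad_re_bound X v
    rw [Complex.le_def]
    constructor
    · simp only [Complex.sub_re, Complex.mul_re, Complex.ofReal_re, Complex.ofReal_im,
        Complex.zero_re]
      have h1 : (star v ⬝ᵥ X *ᵥ v).re ≤ c * S := by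
        have : (star v ⬝ᵥ X *ᵥ v).re ≤ (∑ i, ∑ j, ‖X i j‖) * S :=
          le_trans (le_abs_self _) hre
        exact le_trans this (mul_le_mul_of_nonneg_right hc hS0)
      simp only [hSdef] at h1 ⊢
      nlinarith
    · simp [him, Complex.mul_im]

lemma phi_inner' {X : Matrix (Fin n) (Fin n) ℂ} (hX : Xᴴ = X) (B : Matrix (Fin n) (Fin n) ℂ) :
    (inner ℝ (phi n X) (phi n B) : ℝ) = ((X * B).trace).re := by
  rw [phi_inner, hX]

lemma phi_inner_self (A : Matrix (Fin n) (Fin n) ℂ) :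
    (inner ℝ (phi n A) (phi n A) : ℝ) = ∑ p : Fin n × Fin n, Complex.normSq (A p.1 p.2) := by
  simp only [PiLp.inner_apply, RCLike.inner_apply', starRingEnd_apply, star_trivial,
    Fintype.sum_prod_type]
  refine Finset.sum_congr rfl fun i _ => ?_
  refine Finset.sum_congr rfl fun j _ => ?_
  rw [Fin.sum_univ_two]
  simp [phi, Complex.normSq_apply]; rfl

lemma eq_zero_of_herm_trace {X : Matrix (Fin n) (Fin n) ℂ} (hX : Xᴴ = X)
    (h : ((X * X).trace).re = 0) : X = 0 := by
  have h2 : (inner ℝ (phi n X) (phi n X) : ℝ) = 0 := by rw [phi_inner' hX]; exact h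
  have : phi n X = 0 := inner_self_eq_zero.mp h2
  simpa using congrArg (phi n).symm this

noncomputable def hermPart (R : Submodule ℝ (Matrix (Fin n) (Fin n) ℂ)) :
    Submodule ℝ (Matrix (Fin n) (Fin n) ℂ) where
  carrier := {A | A ∈ R ∧ Aᴴ = A}
  add_mem' := fun ha hb => ⟨R.add_mem ha.1 hb.1, by rw [Matrix.conjTranspose_add, ha.2, hb.2]⟩
  zero_mem' := ⟨R.zero_mem, by simp⟩
  smul_mem' := fun c A ha =>
    ⟨R.smul_mem c ha.1, by rw [Matrix.conjTranspose_smul, star_trivial, ha.2]⟩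

lemma mem_hermPart {R : Submodule ℝ (Matrix (Fin n) (Fin n) ℂ)}
    {A : Matrix (Fin n) (Fin n) ℂ} : A ∈ hermPart R ↔ A ∈ R ∧ Aᴴ = A := Iff.rfl

-- trace of hermitian is real
lemma herm_trace_im {X : Matrix (Fin n) (Fin n) ℂ} (hX : Xᴴ = X) : (X.trace).im = 0 := by
  rw [Matrix.trace]
  rw [Complex.im_sum]
  refine Finset.sum_eq_zero fun i _ => ?_
  have := congrFun (congrFun hX i) i
  simp only [Matrix.conjTranspose_apply] at this
  rw [Matrix.diag_apply, ← Complex.conj_eq_iff_im]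
  exact this

-- dualCone closure properties
lemma dualCone_add {R : Submodule ℝ (Matrix (Fin n) (Fin n) ℂ)}
    {X Y : Matrix (Fin n) (Fin n) ℂ} (hX : X ∈ dualCone n R) (hY : Y ∈ dualCone n R) :
    X + Y ∈ dualCone n R := by
  refine ⟨R.add_mem hX.1 hY.1, by rw [Matrix.conjTranspose_add, hX.2.1, hY.2.1], ?_⟩
  intro B hB hBp
  rw [Matrix.add_mul, Matrix.trace_add, Complex.add_re]
  exact add_nonneg (hX.2.2 B hB hBp) (hY.2.2 B hB hBp)

lemma dualCone_smul {R : Submodule ℝ (Matrix (Fin n) (Fin n) ℂ)}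
    {X : Matrix (Fin n) (Fin n) ℂ} (hX : X ∈ dualCone n R) {c : ℝ} (hc : 0 ≤ c) :
    c • X ∈ dualCone n R := by
  refine ⟨R.smul_mem c hX.1, by rw [Matrix.conjTranspose_smul, star_trivial, hX.2.1], ?_⟩
  intro B hB hBp
  rw [Matrix.smul_mul, Matrix.trace_smul]
  have : ((c • ((X * B).trace) : ℂ)).re = c * ((X * B).trace).re := by
    simp [Complex.real_smul, Complex.mul_re]
  rw [this]
  exact mul_nonneg hc (hX.2.2 B hB hBp)

lemma dualCone_zero {R : Submodule ℝ (Matrix (Fin n) (Fin n) ℂ)} :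
    (0 : Matrix (Fin n) (Fin n) ℂ) ∈ dualCone n R :=
  ⟨R.zero_mem, by simp, fun B _ _ => by simp⟩

-- the norm bound: ‖φ X‖ ≤ n * Re tr X for X in the dual cone
lemma dualCone_norm_bound {R : Submodule ℝ (Matrix (Fin n) (Fin n) ℂ)}
    (h1R : (1 : Matrix (Fin n) (Fin n) ℂ) ∈ R)
    {X : Matrix (Fin n) (Fin n) ℂ} (hX : X ∈ dualCone n R) :
    ‖phi n X‖ ≤ (n : ℝ) * (X.trace).re := by
  by_cases hX0 : X = 0
  · simp [hX0]
  set F := ‖phi n X‖ with hFdef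
  have hF0 : 0 < F := by
    rw [hFdef, norm_pos_iff]
    intro h
    exact hX0 (by simpa using congrArg (phi n).symm h)
  set N := ∑ i, ∑ j, ‖X i j‖ with hNdef
  have hN0 : 0 ≤ N := Finset.sum_nonneg fun i _ => Finset.sum_nonneg fun j _ =>
    norm_nonneg _
  set t := (X.trace).re with htdef
  -- F^2 = Re tr (X * X)
  have hF2 : F ^ 2 = ((X * X).trace).re := by
    rw [hFdef, ← real_inner_self_eq_norm_sq, phi_inner' hX.2.1]
  -- F^2 ≤ N * t
  have hkey : F ^ 2 ≤ N * t := by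
    have hB : ((N : ℝ) • (1 : Matrix (Fin n) (Fin n) ℂ) - X).PosSemidef :=
      smul_one_sub_posSemidef hX.2.1 le_rfl
    have hBm : ((N : ℝ) • (1 : Matrix (Fin n) (Fin n) ℂ) - X) ∈ R :=
      R.sub_mem (R.smul_mem N h1R) hX.1
    have := hX.2.2 _ hBm hB
    have hexp : X * ((N : ℝ) • (1 : Matrix (Fin n) (Fin n) ℂ) - X) = N • X - X * X := by
      rw [Matrix.mul_sub, Matrix.mul_smul, Matrix.mul_one]
    rw [hexp, Matrix.trace_sub, Matrix.trace_smul, Complex.sub_re] at this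
    have hsm : ((N • (X.trace) : ℂ)).re = N * t := by
      simp [Complex.real_smul, Complex.mul_re, ← htdef]
    rw [hsm] at this
    rw [hF2]
    linarith
  -- N ≤ n * F
  have hNF : N ≤ (n : ℝ) * F := by
    have hFsum : ∑ p : Fin n × Fin n, ‖X p.1 p.2‖ ^ 2 = F ^ 2 := by
      rw [hFdef, ← real_inner_self_eq_norm_sq, phi_inner_self]
      exact Finset.sum_congr rfl fun p _ => Complex.sq_norm _
    have hN' : N = ∑ p : Fin n × Fin n, ‖X p.1 p.2‖ := by
      rw [hNdef]; exact (Fintype.sum_prod_type (fun p : Fin n × Fin n => ‖X p.1 p.2‖)).symm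
    have hsq : N ^ 2 ≤ ((n : ℝ) * F) ^ 2 := by
      calc N ^ 2 = (∑ p : Fin n × Fin n, ‖X p.1 p.2‖) ^ 2 := by rw [hN']
        _ ≤ ((Finset.univ : Finset (Fin n × Fin n)).card : ℝ)
            * ∑ p : Fin n × Fin n, ‖X p.1 p.2‖ ^ 2 := by
              exact_mod_cast sq_sum_le_card_mul_sum_sq (s := (Finset.univ : Finset (Fin n × Fin n))) (f := fun p => ‖X p.1 p.2‖)
        _ = ((n : ℝ) * n) * (F ^ 2) := by
              rw [hFsum]; simp [Finset.card_univ]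
        _ = ((n : ℝ) * F) ^ 2 := by ring
    have hnF0 : 0 ≤ (n : ℝ) * F := mul_nonneg (Nat.cast_nonneg n) hF0.le
    exact le_of_pow_le_pow_left₀ two_ne_zero hnF0 hsq
  -- conclude
  have hFF : 0 < F ^ 2 := pow_pos hF0 2
  have hN0' : 0 < N := by
    rcases lt_or_eq_of_le hN0 with h | h
    · exact h
    · exfalso
      rw [← h, zero_mul] at hkey
      linarith
  have ht0 : 0 < t := by nlinarith [hkey, hFF, hN0']
  nlinarith [hkey, mul_le_mul_of_nonneg_right hNF ht0.le, hFF, mul_pos hF0 ht0]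

lemma isClosed_nonnegC : IsClosed {z : ℂ | 0 ≤ z} := by
  have : {z : ℂ | 0 ≤ z} = Complex.re ⁻¹' (Set.Ici 0) ∩ Complex.im ⁻¹' {0} := by
    ext z
    simp only [Set.mem_setOf_eq, Complex.le_def, Complex.zero_re, Complex.zero_im,
      Set.mem_inter_iff, Set.mem_preimage, Set.mem_Ici, Set.mem_singleton_iff]
    tauto
  rw [this]
  exact (isClosed_Ici.preimage Complex.continuous_re).inter
    (isClosed_singleton.preimage Complex.continuous_im)

lemma psd_real_smul {B : Matrix (Fin n) (Fin n) ℂ} (hB : B.PosSemidef) {c : ℝ} (hc : 0 ≤ c) :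
    (c • B).PosSemidef := by
  refine Matrix.PosSemidef.of_dotProduct_mulVec_nonneg ?_ ?_
  · unfold Matrix.IsHermitian
    rw [Matrix.conjTranspose_smul, star_trivial]
    rw [hB.1]
  · intro v
    have : star v ⬝ᵥ (c • B) *ᵥ v = c • (star v ⬝ᵥ B *ᵥ v) := by
      rw [Matrix.smul_mulVec, dotProduct_smul]
    rw [this]
    have h := hB.dotProduct_mulVec_nonneg v
    rw [Complex.le_def] at h ⊢
    simp only [Complex.real_smul, Complex.mul_re, Complex.mul_im, Complex.ofReal_re,
      Complex.ofReal_im, Complex.zero_re, Complex.zero_im] at h ⊢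
    constructor
    · nlinarith [h.1]
    · simp [← h.2]

lemma crux {R₁ R₂ : Submodule ℝ (Matrix (Fin n) (Fin n) ℂ)}
    (h21 : (R₂ : Set (Matrix (Fin n) (Fin n) ℂ)) ⊆ R₁)
    (h1R₁ : (1 : Matrix (Fin n) (Fin n) ℂ) ∈ R₁)
    (h1R₂ : (1 : Matrix (Fin n) (Fin n) ℂ) ∈ R₂)
    (π : Matrix (Fin n) (Fin n) ℂ → Matrix (Fin n) (Fin n) ℂ)
    (hπmem : ∀ A, A ∈ R₁ → Aᴴ = A → π A ∈ R₂ ∧ (π A)ᴴ = π A)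
    (hπorth : ∀ A, A ∈ R₁ → Aᴴ = A →
      ∀ B ∈ R₂, Bᴴ = B → (((A - π A) * B).trace).re = 0)
    {A : Matrix (Fin n) (Fin n) ℂ} (hA : A ∈ dualCone n (R₂ : Set (Matrix (Fin n) (Fin n) ℂ))) :
    ∃ X ∈ dualCone n (R₁ : Set (Matrix (Fin n) (Fin n) ℂ)), π X = A := by
  classical
  set S₁ : Submodule ℝ (Esp n) := (hermPart R₁).map (phi n).toLinearMap with hS₁
  set S₂ : Submodule ℝ (Esp n) := (hermPart R₂).map (phi n).toLinearMap with hS₂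
  set Pc : Esp n →L[ℝ] Esp n := S₂.subtypeL.comp (S₂.orthogonalProjection) with hPc
  have hPcval : ∀ x, Pc x = (S₂.orthogonalProjection x : Esp n) := fun x => rfl
  have hPcmem : ∀ x, Pc x ∈ S₂ := fun x => (S₂.orthogonalProjection x).2
  -- bridge : orthogonal projection is φ ∘ π
  have hbridge : ∀ X, X ∈ R₁ → Xᴴ = X → Pc (phi n X) = phi n (π X) := by
    intro X hX1 hXh
    show S₂.starProjection (phi n X) = _
    apply Submodule.eq_starProjection_of_mem_of_inner_eq_zero
    · exact Submodule.mem_map_of_mem ⟨(hπmem X hX1 hXh).1, (hπmem X hX1 hXh).2⟩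
    · rintro w ⟨B, hB, rfl⟩
      have hsub : (phi n) X - (phi n) (π X) = phi n (X - π X) := (map_sub (phi n) X (π X)).symm
      have hherm : (X - π X)ᴴ = X - π X := by
        rw [Matrix.conjTranspose_sub, hXh, (hπmem X hX1 hXh).2]
      rw [hsub]
      show (inner ℝ (phi n (X - π X)) ((phi n).toLinearMap B) : ℝ) = 0
      rw [LinearEquiv.coe_coe, phi_inner' hherm]
      exact hπorth X hX1 hXh B hB.1 hB.2
  -- the cone K' in E
  set K' : Set (Esp n) := phi n '' (dualCone n (R₁ : Set (Matrix (Fin n) (Fin n) ℂ))) with hK'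
  -- K' is closed
  have hK'closed : IsClosed K' := by
    have heq : K' = (S₁ : Set (Esp n)) ∩
        (ProperCone.innerDual (phi n '' {B | B ∈ R₁ ∧ B.PosSemidef}) : Set (Esp n)) := by
      ext x
      constructor
      · rintro ⟨X, hX, rfl⟩
        refine ⟨Submodule.mem_map_of_mem ⟨hX.1, hX.2.1⟩, ?_⟩
        rw [SetLike.mem_coe, ProperCone.mem_innerDual]
        rintro y ⟨B, hB, rfl⟩
        rw [real_inner_comm, phi_inner' hX.2.1]
        exact hX.2.2 B hB.1 hB.2
      · rintro ⟨h1, h2⟩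
        obtain ⟨X, hX, rfl⟩ := h1
        refine ⟨X, ⟨hX.1, hX.2, ?_⟩, rfl⟩
        intro B hB hBp
        rw [SetLike.mem_coe, ProperCone.mem_innerDual] at h2
        have h3 := @h2 (phi n B) ⟨B, ⟨hB, hBp⟩, rfl⟩
        simp only [LinearEquiv.coe_coe] at h3
        rwa [real_inner_comm, phi_inner' hX.2] at h3
    rw [heq]
    exact (Submodule.closed_of_finiteDimensional S₁).inter (ProperCone.innerDual _).isClosed
  -- the trace functional
  have h1herm : (1 : Matrix (Fin n) (Fin n) ℂ)ᴴ = 1 := Matrix.conjTranspose_one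
  have h1S₂ : phi n 1 ∈ S₂ := Submodule.mem_map_of_mem ⟨h1R₂, h1herm⟩
  have htr : ∀ x : Esp n, (inner ℝ (Pc x) (phi n 1) : ℝ) = inner ℝ x (phi n 1) := by
    intro x
    have horth := Submodule.sub_starProjection_mem_orthogonal (K := S₂) x
    have := (Submodule.mem_orthogonal S₂ _).1 horth (phi n 1) h1S₂
    have h2 : (inner ℝ (x - Pc x) (phi n 1) : ℝ) = 0 := by
      rw [real_inner_comm]; exact this
    rw [inner_sub_left] at h2
    linarith
  -- T = Pc '' K' is closed
  have hTclosed : IsClosed (Pc '' K') := by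
    refine IsSeqClosed.isClosed ?_
    intro g b hg hgb
    choose x hxK hPx using hg
    have htend : Filter.Tendsto (fun k => (inner ℝ (g k) (phi n 1) : ℝ)) Filter.atTop
        (nhds (inner ℝ b (phi n 1) : ℝ)) := by
      exact ((continuous_id.inner continuous_const).tendsto b).comp hgb
    obtain ⟨C, hC⟩ := htend.bddAbove_range
    have hxball : ∀ k, x k ∈ Metric.closedBall (0 : Esp n) ((n : ℝ) * C) := by
      intro k
      rw [Metric.mem_closedBall, dist_zero_right]
      obtain ⟨X, hX, hphiX⟩ := hxK k
      have hb1 : ‖phi n X‖ ≤ (n : ℝ) * (X.trace).re := dualCone_norm_bound h1R₁ hX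
      have hb2 : (X.trace).re = (inner ℝ (g k) (phi n 1) : ℝ) := by
        rw [← hPx k, ← hphiX, htr, phi_inner' hX.2.1, Matrix.mul_one]
      have hb3 : (inner ℝ (g k) (phi n 1) : ℝ) ≤ C := hC (Set.mem_range_self k)
      rw [← hphiX]
      calc ‖phi n X‖ ≤ (n : ℝ) * (X.trace).re := hb1
        _ ≤ (n : ℝ) * C := by
            rw [hb2]; exact mul_le_mul_of_nonneg_left hb3 (Nat.cast_nonneg n)
    have hcpt : IsCompact (K' ∩ Metric.closedBall (0 : Esp n) ((n : ℝ) * C)) :=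
      (isCompact_closedBall _ _).inter_left hK'closed
    obtain ⟨a, ha, σ, hσ, hconv⟩ := hcpt.tendsto_subseq (fun k => ⟨hxK k, hxball k⟩)
    have hl1 : Filter.Tendsto (fun j => Pc (x (σ j))) Filter.atTop (nhds (Pc a)) :=
      (Pc.continuous.tendsto a).comp hconv
    have hl2 : Filter.Tendsto (fun j => Pc (x (σ j))) Filter.atTop (nhds b) := by
      have he : (fun j => Pc (x (σ j))) = g ∘ σ := funext fun j => hPx (σ j)
      rw [he]
      exact hgb.comp hσ.tendsto_atTop
    exact ⟨a, ha.1, tendsto_nhds_unique hl1 hl2⟩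
  -- main claim : φ A ∈ Pc '' K'
  have hAS₂ : phi n A ∈ S₂ := Submodule.mem_map_of_mem ⟨hA.1, hA.2.1⟩
  have hmain : phi n A ∈ Pc '' K' := by
    by_contra hnot
    -- set up the cone in the subtype
    set Tc : ConvexCone ℝ S₂ :=
      { carrier := {y : S₂ | (y : Esp n) ∈ Pc '' K'}
        smul_mem' := by
          rintro c hc y ⟨x, hx, hpx⟩
          obtain ⟨X, hX, rfl⟩ := hx
          refine ⟨c • phi n X, ⟨c • X, dualCone_smul hX hc.le, _root_.map_smul _ _ _⟩, ?_⟩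
          rw [_root_.map_smul, hpx]
          simp
        add_mem' := by
          rintro y ⟨x, hx, hpx⟩ z ⟨w, hw, hpw⟩
          obtain ⟨X, hX, rfl⟩ := hx
          obtain ⟨W, hW, rfl⟩ := hw
          refine ⟨phi n X + phi n W, ⟨X + W, dualCone_add hX hW, _root_.map_add _ _ _⟩, ?_⟩
          rw [_root_.map_add, hpx, hpw]
          simp } with hTc
    have hTcne : (Tc : Set S₂).Nonempty := by
      refine ⟨0, ?_⟩
      show ((0 : S₂) : Esp n) ∈ Pc '' K'
      refine ⟨0, ⟨0, dualCone_zero, map_zero _⟩, ?_⟩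
      simp
    have hTcclosed : IsClosed (Tc : Set S₂) := by
      have : (Tc : Set S₂) = Subtype.val ⁻¹' (Pc '' K') := rfl
      rw [this]
      exact hTclosed.preimage continuous_subtype_val
    have hb₀ : (⟨phi n A, hAS₂⟩ : S₂) ∉ Tc := hnot
    obtain ⟨y, hy1, hy2⟩ := ProperCone.hyperplane_separation' (x₀ := (⟨phi n A, hAS₂⟩ : S₂))
      ({ carrier := (Tc : Set S₂)
         add_mem' := fun ha hb => Tc.add_mem ha hb
         zero_mem' := by
           show ((0 : S₂) : Esp n) ∈ Pc '' K'
           exact ⟨0, ⟨0, dualCone_zero, map_zero _⟩, by simp⟩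
         smul_mem' := by
           rintro ⟨c, hc⟩ x hx
           rcases hc.eq_or_lt with h | h
           · subst h
             show (((0 : ℝ) • x : S₂) : Esp n) ∈ Pc '' K'
             exact ⟨0, ⟨0, dualCone_zero, map_zero _⟩, by simp⟩
           · exact Tc.smul_mem h hx
         isClosed' := hTcclosed } : ProperCone ℝ S₂) hb₀
    obtain ⟨Cm, hCm, hyCm⟩ := y.2
    have hyCm' : phi n Cm = (y : Esp n) := hyCm
    -- key property : ∀ X ∈ dualCone R₁, 0 ≤ Re tr (X * Cm)
    have hprop : ∀ X ∈ dualCone n (R₁ : Set (Matrix (Fin n) (Fin n) ℂ)),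
        0 ≤ ((X * Cm).trace).re := by
      intro X hX
      have hx' : (⟨Pc (phi n X), hPcmem _⟩ : S₂) ∈ Tc :=
        Set.mem_image_of_mem _ ⟨X, hX, rfl⟩
      have h0 := hy1 ⟨Pc (phi n X), hPcmem _⟩ hx'
      rw [Submodule.coe_inner] at h0
      have hPX : Pc (phi n X) = phi n (π X) := hbridge X hX.1 hX.2.1
      have h0' : (0 : ℝ) ≤ inner ℝ (Pc (phi n X)) (y : Esp n) := h0
      rw [hPX, ← hyCm'] at h0'
      have hπh := (hπmem X hX.1 hX.2.1).2
      rw [phi_inner' hπh] at h0'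
      replace h0 := h0'
      have horthX := hπorth X hX.1 hX.2.1 Cm hCm.1 hCm.2
      rw [Matrix.sub_mul, Matrix.trace_sub, Complex.sub_re] at horthX
      linarith
    -- bipolar argument : Cm is PSD
    have hCmPSD : Cm.PosSemidef := by
      set K₁s : Set (Esp n) := phi n '' {B | B ∈ R₁ ∧ B.PosSemidef} with hK₁s
      set K₁cone : ConvexCone ℝ (Esp n) :=
        { carrier := K₁s
          smul_mem' := by
            rintro c hc x ⟨B, hB, rfl⟩
            exact ⟨c • B, ⟨R₁.smul_mem c hB.1, psd_real_smul hB.2 hc.le⟩, map_smul _ _ _⟩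
          add_mem' := by
            rintro x ⟨B, hB, rfl⟩ z ⟨D, hD, rfl⟩
            exact ⟨B + D, ⟨R₁.add_mem hB.1 hD.1, hB.2.add hD.2⟩, map_add _ _ _⟩ } with hK₁cone
      have hK₁ne : (K₁cone : Set (Esp n)).Nonempty :=
        ⟨0, ⟨0, ⟨R₁.zero_mem, Matrix.PosSemidef.zero⟩, map_zero _⟩⟩
      have hK₁closed : IsClosed (K₁cone : Set (Esp n)) := by
        have heq : (K₁cone : Set (Esp n)) = (S₁ : Set (Esp n)) ∩
            (⋂ v : Fin n → ℂ, {x : Esp n | 0 ≤ star v ⬝ᵥ ((phi n).symm x) *ᵥ v}) := by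
          ext x
          constructor
          · rintro ⟨B, hB, rfl⟩
            refine ⟨Submodule.mem_map_of_mem ⟨hB.1, hB.2.1⟩, ?_⟩
            rw [Set.mem_iInter]
            intro v
            rw [Set.mem_setOf_eq, LinearEquiv.symm_apply_apply]
            exact hB.2.dotProduct_mulVec_nonneg v
          · rintro ⟨h1, h2⟩
            obtain ⟨X, hX, rfl⟩ := h1
            rw [Set.mem_iInter] at h2
            refine ⟨X, ⟨hX.1, Matrix.PosSemidef.of_dotProduct_mulVec_nonneg hX.2 fun v => ?_⟩, rfl⟩
            have h3 := h2 v
            simp only [Set.mem_setOf_eq, LinearEquiv.coe_coe,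
              LinearEquiv.symm_apply_apply] at h3
            exact h3
        rw [heq]
        refine (Submodule.closed_of_finiteDimensional S₁).inter (isClosed_iInter fun v => ?_)
        let f : Esp n →ₗ[ℝ] ℂ :=
          { toFun := fun x => star v ⬝ᵥ ((phi n).symm x) *ᵥ v
            map_add' := by
              intro a b
              rw [_root_.map_add, Matrix.add_mulVec, dotProduct_add]
            map_smul' := by
              intro c a
              dsimp only [RingHom.id_apply]
              rw [_root_.map_smul, Matrix.smul_mulVec, dotProduct_smul] }
        have : {x : Esp n | 0 ≤ star v ⬝ᵥ ((phi n).symm x) *ᵥ v} = f ⁻¹' {z : ℂ | 0 ≤ z} := rfl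
        rw [this]
        exact isClosed_nonnegC.preimage f.continuous_of_finiteDimensional
      set P : ProperCone ℝ (Esp n) :=
        { carrier := K₁s
          add_mem' := by
            rintro x z ⟨B, hB, rfl⟩ ⟨D, hD, rfl⟩
            exact ⟨B + D, ⟨R₁.add_mem hB.1 hD.1, hB.2.add hD.2⟩, map_add _ _ _⟩
          zero_mem' := ⟨0, ⟨R₁.zero_mem, Matrix.PosSemidef.zero⟩, map_zero _⟩
          smul_mem' := by
            rintro ⟨c, hc⟩ x ⟨B, hB, rfl⟩
            exact ⟨c • B, ⟨R₁.smul_mem c hB.1, psd_real_smul hB.2 hc⟩, map_smul _ _ _⟩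
          isClosed' := hK₁closed } with hP
      have hbipolar := ProperCone.innerDual_innerDual P
      -- φ Cm lies in the double dual
      have hCmS₁ : phi n Cm ∈ S₁ := Submodule.mem_map_of_mem ⟨h21 hCm.1, hCm.2⟩
      have hdd : phi n Cm ∈
          ProperCone.innerDual (ProperCone.innerDual (P : Set (Esp n)) : Set (Esp n)) := by
        rw [ProperCone.mem_innerDual]
        intro w hw
        set w' : Esp n := S₁.starProjection w with hw'
        have hw'S₁ : w' ∈ S₁ := (S₁.orthogonalProjection w).2
        obtain ⟨W, hW, hphiW⟩ := hw'S₁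
        have hphiW' : phi n W = w' := hphiW
        have horth := Submodule.sub_starProjection_mem_orthogonal (K := S₁) w
        have hinner_eq : ∀ u ∈ S₁, (inner ℝ u w : ℝ) = inner ℝ u w' := by
          intro u hu
          have := (Submodule.mem_orthogonal S₁ _).1 horth u hu
          rw [inner_sub_right] at this
          linarith
        have hWdual : W ∈ dualCone n (R₁ : Set (Matrix (Fin n) (Fin n) ℂ)) := by
          refine ⟨hW.1, hW.2, fun B hB hBp => ?_⟩
          have hBS₁ : phi n B ∈ S₁ := Submodule.mem_map_of_mem ⟨hB, hBp.1⟩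
          have h2 : 0 ≤ (inner ℝ (phi n B) w : ℝ) := ProperCone.mem_innerDual.1 hw ⟨B, ⟨hB, hBp⟩, rfl⟩
          rw [hinner_eq _ hBS₁, ← hphiW', real_inner_comm, phi_inner' hW.2] at h2
          exact h2
        have h3 : (inner ℝ w (phi n Cm) : ℝ) = inner ℝ w' (phi n Cm) := by
          rw [real_inner_comm, hinner_eq _ hCmS₁, real_inner_comm]
        rw [h3, ← hphiW', phi_inner' hW.2]
        exact hprop W hWdual
      rw [hbipolar] at hdd
      obtain ⟨B, hB, hphiB⟩ : phi n Cm ∈ K₁s := hdd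
      have : B = Cm := (phi n).injective hphiB
      rw [← this]
      exact hB.2
    -- final contradiction
    have hfin := hA.2.2 Cm hCm.1 hCmPSD
    rw [Submodule.coe_inner] at hy2
    have hy2' : (inner ℝ (phi n Cm) (phi n A) : ℝ) < 0 := by
      rw [hyCm', real_inner_comm]
      exact hy2
    rw [phi_inner' hCm.2, Matrix.trace_mul_comm] at hy2'
    linarith
  -- unpack
  obtain ⟨x, hxK', hPx⟩ := hmain
  obtain ⟨X, hX, rfl⟩ := hxK'
  rw [hbridge X hX.1 hX.2.1] at hPx
  exact ⟨X, hX, (phi n).injective hPx⟩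

/-- For nested real matrix systems `R₂ ⊆ R₁` on `ℂ^n`, the orthogonal projection
`π : H(R₁) → H(R₂)` satisfies `π(C(R₁)^∨) = C(R₂)^∨` and `π(D(R₁)) = D(R₂)`. -/
theorem dualCone_dmat_projection (n : ℕ)
    (R₁ R₂ : Submodule ℝ (Matrix (Fin n) (Fin n) ℂ))
    (h21 : (R₂ : Set (Matrix (Fin n) (Fin n) ℂ)) ⊆ R₁)
    (h1R₁ : (1 : Matrix (Fin n) (Fin n) ℂ) ∈ R₁)
    (hstar₁ : ∀ A ∈ R₁, Aᴴ ∈ R₁)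
    (h1R₂ : (1 : Matrix (Fin n) (Fin n) ℂ) ∈ R₂)
    (hstar₂ : ∀ A ∈ R₂, Aᴴ ∈ R₂)
    (π : Matrix (Fin n) (Fin n) ℂ → Matrix (Fin n) (Fin n) ℂ)
    (hπmem : ∀ A, A ∈ R₁ → Aᴴ = A → π A ∈ R₂ ∧ (π A)ᴴ = π A)
    (hπorth : ∀ A, A ∈ R₁ → Aᴴ = A →
      ∀ B ∈ R₂, Bᴴ = B → (((A - π A) * B).trace).re = 0) :
    π '' dualCone n (R₁ : Set (Matrix (Fin n) (Fin n) ℂ)) =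
      dualCone n (R₂ : Set (Matrix (Fin n) (Fin n) ℂ)) ∧
    π '' dmat n (R₁ : Set (Matrix (Fin n) (Fin n) ℂ)) =
      dmat n (R₂ : Set (Matrix (Fin n) (Fin n) ℂ)) := by
  have hforward : ∀ X ∈ dualCone n (R₁ : Set (Matrix (Fin n) (Fin n) ℂ)),
      π X ∈ dualCone n (R₂ : Set (Matrix (Fin n) (Fin n) ℂ)) := by
    intro X hX
    refine ⟨(hπmem X hX.1 hX.2.1).1, (hπmem X hX.1 hX.2.1).2, ?_⟩
    intro B hB hBp
    have h0 := hπorth X hX.1 hX.2.1 B hB hBp.1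
    rw [Matrix.sub_mul, Matrix.trace_sub, Complex.sub_re] at h0
    have h1 := hX.2.2 B (h21 hB) hBp
    linarith
  have htrace : ∀ X, X ∈ R₁ → Xᴴ = X → (π X).trace = X.trace := by
    intro X hX1 hXh
    have h0 := hπorth X hX1 hXh 1 h1R₂ Matrix.conjTranspose_one
    rw [Matrix.mul_one, Matrix.trace_sub, Complex.sub_re] at h0
    apply Complex.ext
    · linarith
    · rw [herm_trace_im (hπmem X hX1 hXh).2, herm_trace_im hXh]
  constructor
  · ext Z
    constructor
    · rintro ⟨X, hX, rfl⟩
      exact hforward X hX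
    · intro hZ
      obtain ⟨X, hX, hXZ⟩ := crux h21 h1R₁ h1R₂ π hπmem hπorth hZ
      exact ⟨X, hX, hXZ⟩
  · ext Z
    constructor
    · rintro ⟨X, ⟨hX, hXtr⟩, rfl⟩
      exact ⟨hforward X hX, by rw [htrace X hX.1 hX.2.1, hXtr]⟩
    · rintro ⟨hZ, hZtr⟩
      obtain ⟨X, hX, hXZ⟩ := crux h21 h1R₁ h1R₂ π hπmem hπorth hZ
      refine ⟨X, ⟨hX, ?_⟩, hXZ⟩
      rw [← htrace X hX.1 hX.2.1, hXZ, hZtr]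
end

section
/- Let R be a real matrix system on ℂ^n whose set of density matrices D(R) is stable and invariant under an orthogonal transformation γ : R → R generating a finite cyclic group, and let A = {A ∈ R : γ(A) = A} be a real *-subalgebra of M_n. Then the orthogonal projection D(R) → D(A) is open. -/
open Matrix ComplexOrder Polynomial

/-- `f` is an open map from the subspace `S` onto the subspace `T`. -/
def RelOpenMap {X Y : Type*} [TopologicalSpace X] [TopologicalSpace Y]
    (f : X → Y) (S : Set X) (T : Set Y) : Prop :=
  ∀ U : Set X, IsOpen U → ∃ V : Set Y, IsOpen V ∧ f '' (U ∩ S) = V ∩ T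

section Helpers

lemma psd_trace_re_nonneg {n : ℕ} {A : Matrix (Fin n) (Fin n) ℂ} (hA : A.PosSemidef) :
    0 ≤ (A.trace).re := by
  have h : ∀ i, 0 ≤ (A i i).re := by
    intro i
    have := hA.re_dotProduct_nonneg (Pi.single i 1)
    simpa [dotProduct, Pi.single_apply, mulVec, Finset.sum_ite_eq] using this
  rw [Matrix.trace, Complex.re_sum]
  exact Finset.sum_nonneg fun i _ => h i

lemma psd_trace_mul_re_nonneg {n : ℕ} {A B : Matrix (Fin n) (Fin n) ℂ}
    (hA : A.PosSemidef) (hB : B.PosSemidef) : 0 ≤ ((A * B).trace).re := by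
  have hB' : B ∈ AddSubmonoid.closure
      (Set.range fun s : Matrix (Fin n) (Fin n) ℂ => star s * s) := by
    open scoped MatrixOrder in
    exact StarOrderedRing.nonneg_iff.mp (Matrix.nonneg_iff_posSemidef.mpr hB)
  clear hB
  induction hB' using AddSubmonoid.closure_induction with
  | mem x hx =>
    obtain ⟨C, rfl⟩ := hx
    show 0 ≤ (A * (Cᴴ * C)).trace.re
    have h1 : (A * (Cᴴ * C)).trace = (C * A * Cᴴ).trace := by
      rw [← mul_assoc, Matrix.trace_mul_comm, ← mul_assoc]
    rw [h1]
    exact psd_trace_re_nonneg (hA.mul_mul_conjTranspose_same C)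
  | zero => simp
  | add x y _ _ hx hy =>
    rw [mul_add, Matrix.trace_add, Complex.add_re]
    exact add_nonneg hx hy

lemma aeval_herm {n : ℕ} {ρ : Matrix (Fin n) (Fin n) ℂ} (hρ : ρ.IsHermitian)
    (p : ℝ[X]) :
    Polynomial.aeval ρ p =
      (hρ.eigenvectorUnitary : Matrix (Fin n) (Fin n) ℂ) *
        diagonal (fun i => ((p.eval (hρ.eigenvalues i) : ℝ) : ℂ)) *
        star (hρ.eigenvectorUnitary : Matrix (Fin n) (Fin n) ℂ) := by
  set U : Matrix (Fin n) (Fin n) ℂ := (hρ.eigenvectorUnitary : Matrix (Fin n) (Fin n) ℂ)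
  have hU1 : U * star U = 1 := (Matrix.mem_unitaryGroup_iff).mp hρ.eigenvectorUnitary.2
  have hU1' : star U * U = 1 := (Matrix.mem_unitaryGroup_iff').mp hρ.eigenvectorUnitary.2
  have hpow : ∀ m : ℕ, ρ ^ m =
      U * diagonal (fun i => ((hρ.eigenvalues i : ℝ) : ℂ) ^ m) * star U := by
    intro m
    induction m with
    | zero => simp [pow_zero, hU1]
    | succ m ih =>
      have hspec := hρ.spectral_theorem
      calc ρ ^ (m+1) = ρ ^ m * ρ := by rw [pow_succ]
        _ = (U * diagonal (fun i => ((hρ.eigenvalues i : ℝ) : ℂ) ^ m) * star U) *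
            (U * diagonal (RCLike.ofReal ∘ hρ.eigenvalues) * star U) := by
              rw [← ih]; congr 1
        _ = U * ((diagonal (fun i => ((hρ.eigenvalues i : ℝ) : ℂ) ^ m) * (star U * U)) *
              diagonal (RCLike.ofReal ∘ hρ.eigenvalues)) * star U := by
            simp only [mul_assoc]
        _ = U * diagonal (fun i => ((hρ.eigenvalues i : ℝ) : ℂ) ^ (m+1)) * star U := by
            rw [hU1', mul_one, diagonal_mul_diagonal]
            congr 2
  induction p using Polynomial.induction_on' with
  | add p q hp hq =>
    rw [map_add, hp, hq]
    simp only [eval_add, Complex.ofReal_add, ← diagonal_add]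
    rw [← add_mul, ← mul_add]
  | monomial m a =>
    rw [Polynomial.aeval_monomial, hpow m]
    have halg : (algebraMap ℝ (Matrix (Fin n) (Fin n) ℂ)) a
        = (a : ℂ) • (1 : Matrix (Fin n) (Fin n) ℂ) := by
      rw [Algebra.algebraMap_eq_smul_one, Complex.coe_smul]
    have hd : (fun i => ((Polynomial.eval (hρ.eigenvalues i) ((monomial m) a) : ℝ) : ℂ))
        = (a : ℂ) • fun i => ((hρ.eigenvalues i : ℝ) : ℂ) ^ m := by
      funext i
      simp only [Pi.smul_apply, Polynomial.eval_monomial, smul_eq_mul]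
      push_cast
      ring
    rw [halg, smul_mul_assoc, one_mul, hd, diagonal_smul, Matrix.mul_smul,
      Matrix.smul_mul]

lemma dual_psd {n : ℕ} {ρ : Matrix (Fin n) (Fin n) ℂ} (hρ : ρ.IsHermitian)
    (Asub : Submodule ℝ (Matrix (Fin n) (Fin n) ℂ))
    (h1 : (1 : Matrix (Fin n) (Fin n) ℂ) ∈ Asub)
    (hmul : ∀ X ∈ Asub, ∀ Y ∈ Asub, X * Y ∈ Asub)
    (hρA : ρ ∈ Asub)
    (hdual : ∀ B ∈ Asub, B.PosSemidef → 0 ≤ ((ρ * B).trace).re) :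
    ρ.PosSemidef := by
  classical
  set U : Matrix (Fin n) (Fin n) ℂ := (hρ.eigenvectorUnitary : Matrix (Fin n) (Fin n) ℂ) with hU
  have hU1 : U * star U = 1 := (Matrix.mem_unitaryGroup_iff).mp hρ.eigenvectorUnitary.2
  have hU1' : star U * U = 1 := (Matrix.mem_unitaryGroup_iff').mp hρ.eigenvectorUnitary.2
  set ev : Fin n → ℝ := hρ.eigenvalues with hevdef
  set s : Finset ℝ := Finset.image ev Finset.univ with hs
  set p : ℝ[X] := Lagrange.interpolate s id (fun t => max (-t) 0) with hp
  have hev : ∀ i, p.eval (ev i) = max (-(ev i)) 0 := by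
    intro i
    have h := Lagrange.eval_interpolate_at_node (fun t => max (-t) 0)
      (Set.injOn_id _) (Finset.mem_image_of_mem ev (Finset.mem_univ i))
    simpa [hp] using h
  set g : Fin n → ℝ := fun i => max (-(ev i)) 0 with hg
  set N : Matrix (Fin n) (Fin n) ℂ := Polynomial.aeval ρ p with hN
  have hfun : (fun i => ((p.eval (hρ.eigenvalues i) : ℝ) : ℂ))
      = fun i => ((g i : ℝ) : ℂ) := by
    funext i
    have := hev i
    rw [show (ev i) = hρ.eigenvalues i from rfl] at this
    rw [this]
  have hNdiag : N = U * diagonal (fun i => ((g i : ℝ) : ℂ)) * star U := by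
    rw [hN, aeval_herm hρ p, hfun]
  have hpowmem : ∀ m : ℕ, ρ ^ m ∈ Asub := by
    intro m
    induction m with
    | zero => simpa using h1
    | succ m ih => rw [pow_succ]; exact hmul _ ih _ hρA
  have hNmem : N ∈ Asub := by
    rw [hN, Polynomial.aeval_eq_sum_range]
    exact Submodule.sum_mem _ fun i _ => Submodule.smul_mem _ _ (hpowmem i)
  have hNpsd : N.PosSemidef := by
    rw [hNdiag, Matrix.star_eq_conjTranspose]
    apply Matrix.PosSemidef.mul_mul_conjTranspose_same
    refine Matrix.posSemidef_diagonal_iff.mpr fun i => ?_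
    rw [Complex.zero_le_real]
    exact le_max_right _ _
  have htr : ((ρ * N).trace).re = ∑ i, ev i * g i := by
    have hdd : ρ * N = U * diagonal (fun i => ((ev i : ℝ) : ℂ) * ((g i : ℝ) : ℂ)) * star U := by
      conv_lhs => rw [hρ.spectral_theorem, hNdiag]
      calc (U * diagonal (RCLike.ofReal ∘ ev) * star U) *
            (U * diagonal (fun i => ((g i : ℝ) : ℂ)) * star U)
          = U * (diagonal (RCLike.ofReal ∘ ev) * (star U * U) *
              diagonal (fun i => ((g i : ℝ) : ℂ))) * star U := by
            simp only [mul_assoc]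
        _ = U * diagonal (fun i => ((ev i : ℝ) : ℂ) * ((g i : ℝ) : ℂ)) * star U := by
            rw [hU1', mul_one, diagonal_mul_diagonal]
            rfl
    rw [hdd, Matrix.trace_mul_cycle, hU1', one_mul, Matrix.trace_diagonal, Complex.re_sum]
    exact Finset.sum_congr rfl fun i _ => by rw [← Complex.ofReal_mul, Complex.ofReal_re]
  have hsum : 0 ≤ ∑ i, ev i * g i := htr ▸ hdual N hNmem hNpsd
  have hterm : ∀ i, ev i * g i = -(g i * g i) := by
    intro i
    rcases le_or_gt 0 (ev i) with h | h
    · have : g i = 0 := by rw [hg]; simp; linarith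
      rw [this]; ring
    · have : g i = -(ev i) := by rw [hg]; simp; linarith
      rw [this]; ring
  have hgz : ∀ i, g i = 0 := by
    have hsum' : ∑ i, g i * g i ≤ 0 := by
      have : ∑ i, ev i * g i = -∑ i, g i * g i := by
        rw [← Finset.sum_neg_distrib]
        exact Finset.sum_congr rfl fun i _ => hterm i
      linarith [this ▸ hsum]
    intro i
    have hnn : ∀ j ∈ Finset.univ, (0:ℝ) ≤ g j * g j := fun j _ => mul_self_nonneg _
    have := Finset.sum_nonneg hnn
    have hz : ∑ i, g i * g i = 0 := le_antisymm hsum' this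
    have := (Finset.sum_eq_zero_iff_of_nonneg hnn).mp hz i (Finset.mem_univ i)
    exact (mul_self_eq_zero).mp this
  refine hρ.posSemidef_iff_eigenvalues_nonneg.mpr (Pi.le_def.mpr fun i => ?_)
  have h0 : max (-(hρ.eigenvalues i)) 0 = 0 := hgz i
  have h1' : -(hρ.eigenvalues i) ≤ 0 := max_eq_right_iff.mp h0
  simp only [Pi.zero_apply]
  linarith

lemma herm_mul_self_trace_eq_zero {n : ℕ} {d : Matrix (Fin n) (Fin n) ℂ} (hd : dᴴ = d)
    (h : ((d * d).trace).re = 0) : d = 0 := by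
  have key : (d * d).trace = ((∑ i, ∑ j, Complex.normSq (d i j) : ℝ) : ℂ) := by
    push_cast
    rw [Matrix.trace]
    apply Finset.sum_congr rfl
    intro i _
    rw [Matrix.diag_apply, Matrix.mul_apply]
    apply Finset.sum_congr rfl
    intro j _
    have hji : d j i = star (d i j) := by
      conv_lhs => rw [← hd]
      rfl
    rw [hji]
    exact (Complex.mul_conj (d i j))
  rw [key, Complex.ofReal_re] at h
  have hall : ∀ i ∈ Finset.univ, (0:ℝ) ≤ ∑ j, Complex.normSq (d i j) :=
    fun i _ => Finset.sum_nonneg fun j _ => Complex.normSq_nonneg _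
  ext i j
  have hi := (Finset.sum_eq_zero_iff_of_nonneg hall).mp h i (Finset.mem_univ i)
  have hj := (Finset.sum_eq_zero_iff_of_nonneg
    (fun j _ => Complex.normSq_nonneg (d i j))).mp hi j (Finset.mem_univ j)
  simpa [Complex.normSq_eq_zero] using hj

lemma box_open {M : Type*} [TopologicalSpace M] [AddCommGroup M] [Module ℝ M]
    (D : Set M)
    (hstable : ∀ U V : Set M, IsOpen U → IsOpen V →
      ∃ W : Set M, IsOpen W ∧
        {z | ∃ x ∈ U ∩ D, ∃ y ∈ V ∩ D, z = (2⁻¹ : ℝ) • (x + y)} = W ∩ D) :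
    ∀ m : ℕ, ∀ O : ℕ → Set M, (∀ i, IsOpen (O i)) →
      ∃ W : Set M, IsOpen W ∧
        {z | ∃ u : ℕ → M, (∀ i < 2 ^ m, u i ∈ O i ∩ D) ∧
          z = ((2 ^ m : ℝ))⁻¹ • ∑ i ∈ Finset.range (2 ^ m), u i} = W ∩ D := by
  intro m
  induction m with
  | zero =>
    intro O hO
    refine ⟨O 0, hO 0, ?_⟩
    ext z
    constructor
    · rintro ⟨u, hu, rfl⟩
      have h0 := hu 0 (by norm_num)
      simpa using h0
    · rintro ⟨hz, hzD⟩
      exact ⟨fun _ => z, by intro i hi; interval_cases i; exact ⟨hz, hzD⟩, by simp⟩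
  | succ m ih =>
    intro O hO
    have hpos : 0 < 2 ^ m := Nat.two_pow_pos m
    have h2 : 2 ^ (m + 1) = 2 ^ m + 2 ^ m := by rw [pow_succ, mul_two]
    obtain ⟨W₁, hW₁, hset₁⟩ := ih O hO
    obtain ⟨W₂, hW₂, hset₂⟩ := ih (fun i => O (2 ^ m + i)) (fun i => hO _)
    obtain ⟨W, hW, hset⟩ := hstable W₁ W₂ hW₁ hW₂
    refine ⟨W, hW, ?_⟩
    rw [← hset]
    ext z
    simp only [Set.mem_setOf_eq]
    constructor
    · rintro ⟨u, hu, rfl⟩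
      refine ⟨((2 ^ m : ℝ))⁻¹ • ∑ i ∈ Finset.range (2 ^ m), u i, ?_,
              ((2 ^ m : ℝ))⁻¹ • ∑ i ∈ Finset.range (2 ^ m), u (2 ^ m + i), ?_, ?_⟩
      · rw [← hset₁]
        exact ⟨u, fun i hi => hu i (by omega), rfl⟩
      · rw [← hset₂]
        exact ⟨fun i => u (2 ^ m + i), fun i hi => hu _ (by omega), rfl⟩
      · have hsplit : ∑ i ∈ Finset.range (2 ^ (m + 1)), u i
            = ∑ i ∈ Finset.range (2 ^ m), u i
              + ∑ i ∈ Finset.range (2 ^ m), u (2 ^ m + i) := by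
          rw [← Finset.sum_range_add_sum_Ico u (by omega : 2 ^ m ≤ 2 ^ (m + 1)),
            Finset.sum_Ico_eq_sum_range, (by omega : 2 ^ (m + 1) - 2 ^ m = 2 ^ m)]
        rw [hsplit]
        match_scalars <;> simp only [mul_one, pow_succ, mul_inv] <;> ring
    · rintro ⟨x, hx, y, hy, rfl⟩
      rw [← hset₁] at hx
      rw [← hset₂] at hy
      obtain ⟨u, hu, rfl⟩ := hx
      obtain ⟨v, hv, rfl⟩ := hy
      refine ⟨fun i => if i < 2 ^ m then u i else v (i - 2 ^ m), fun i hi => ?_, ?_⟩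
      · by_cases h : i < 2 ^ m
        · simpa [h] using hu i h
        · have hlt : i - 2 ^ m < 2 ^ m := by omega
          have hmem := hv (i - 2 ^ m) hlt
          simp only [if_neg h]
          rwa [(by omega : 2 ^ m + (i - 2 ^ m) = i)] at hmem
      · have hsplit : ∑ i ∈ Finset.range (2 ^ (m + 1)),
            (fun i => if i < 2 ^ m then u i else v (i - 2 ^ m)) i
            = ∑ i ∈ Finset.range (2 ^ m), u i
              + ∑ i ∈ Finset.range (2 ^ m), v i := by
          rw [← Finset.sum_range_add_sum_Ico _ (by omega : 2 ^ m ≤ 2 ^ (m + 1)),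
            Finset.sum_Ico_eq_sum_range, (by omega : 2 ^ (m + 1) - 2 ^ m = 2 ^ m)]
          congr 1
          · exact Finset.sum_congr rfl fun i hi => by
              simp [Finset.mem_range.mp hi]
          · exact Finset.sum_congr rfl fun i hi => by simp
        rw [hsplit]
        match_scalars <;> simp only [mul_one, pow_succ, mul_inv] <;> ring

lemma sum_mod_count {M : Type*} [AddCommMonoid M] (f : ℕ → M) (k q : ℕ) (hk : 0 < k) :
    ∑ i ∈ Finset.range (q * k), f (i % k) = q • ∑ d ∈ Finset.range k, f d := by
  induction q with
  | zero => simp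
  | succ q ih =>
    have h : (q + 1) * k = q * k + k := by ring
    rw [h, ← Finset.sum_range_add_sum_Ico _ (Nat.le_add_right _ _), ih,
      Finset.sum_Ico_eq_sum_range, Nat.add_sub_cancel_left, succ_nsmul]
    congr 1
    apply Finset.sum_congr rfl
    intro j hj
    rw [add_comm, Nat.add_mul_mod_self_right, Nat.mod_eq_of_lt (Finset.mem_range.mp hj)]

lemma exists_convex_open {n : ℕ} (x : Matrix (Fin n) (Fin n) ℂ)
    (S : Set (Matrix (Fin n) (Fin n) ℂ)) (hS : S ∈ nhds x) :
    ∃ B, IsOpen B ∧ Convex ℝ B ∧ x ∈ B ∧ B ⊆ S := by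
  haveI : LocallyConvexSpace ℝ (Matrix (Fin n) (Fin n) ℂ) :=
    inferInstanceAs (LocallyConvexSpace ℝ (Fin n → Fin n → ℂ))
  obtain ⟨sC, ⟨hs𝓝, hsconv⟩, hs_sub⟩ :=
    (LocallyConvexSpace.convex_basis (𝕜 := ℝ) x).mem_iff.mp hS
  exact ⟨interior sC, isOpen_interior, hsconv.interior,
    mem_interior_iff_mem_nhds.mpr hs𝓝, interior_subset.trans hs_sub⟩

end Helpers

/-- Let `R` be a real matrix system on `ℂ^n` whose set of density matrices
`D(R)` is stable (the midpoint map is open) and invariant under an orthogonal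
transformation `γ` of `R` generating a finite cyclic group, and let
`A = {X ∈ R : γX = X}` be a real *-subalgebra. Then the orthogonal projection
`D(R) → D(A)` is open. -/
theorem fixedPointAlgebra_projection_open (n : ℕ)
    (R : Submodule ℝ (Matrix (Fin n) (Fin n) ℂ))
    (h1 : (1 : Matrix (Fin n) (Fin n) ℂ) ∈ R)
    (hstar : ∀ X ∈ R, Xᴴ ∈ R)
    (γ : Module.End ℝ (Matrix (Fin n) (Fin n) ℂ))
    (hγR : ∀ X ∈ R, γ X ∈ R)
    (hγorth : ∀ X ∈ R, ∀ Y ∈ R, (((γ X)ᴴ * γ Y).trace).re = ((Xᴴ * Y).trace).re)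
    (k : ℕ) (hk : 0 < k) (hγk : ∀ X ∈ R, (γ ^ k) X = X)
    (Aset : Set (Matrix (Fin n) (Fin n) ℂ))
    (hAset : Aset = {X | X ∈ R ∧ γ X = X})
    (hA1 : (1 : Matrix (Fin n) (Fin n) ℂ) ∈ Aset)
    (hAstar : ∀ X ∈ Aset, Xᴴ ∈ Aset)
    (hAmul : ∀ X ∈ Aset, ∀ Y ∈ Aset, X * Y ∈ Aset)
    (hDinv : Set.MapsTo γ (dmat n (R : Set (Matrix (Fin n) (Fin n) ℂ)))
      (dmat n (R : Set (Matrix (Fin n) (Fin n) ℂ))))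
    (hstable : ∀ U V : Set (Matrix (Fin n) (Fin n) ℂ), IsOpen U → IsOpen V →
      ∃ W : Set (Matrix (Fin n) (Fin n) ℂ), IsOpen W ∧
        {z | ∃ x ∈ U ∩ dmat n (R : Set (Matrix (Fin n) (Fin n) ℂ)),
             ∃ y ∈ V ∩ dmat n (R : Set (Matrix (Fin n) (Fin n) ℂ)),
             z = (2⁻¹ : ℝ) • (x + y)}
          = W ∩ dmat n (R : Set (Matrix (Fin n) (Fin n) ℂ)))
    (π : Matrix (Fin n) (Fin n) ℂ → Matrix (Fin n) (Fin n) ℂ)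
    (hπmem : ∀ X ∈ R, Xᴴ = X → π X ∈ Aset ∧ (π X)ᴴ = π X)
    (hπorth : ∀ X ∈ R, Xᴴ = X →
      ∀ B ∈ Aset, Bᴴ = B → (((X - π X) * B).trace).re = 0) :
    RelOpenMap π (dmat n (R : Set (Matrix (Fin n) (Fin n) ℂ))) (dmat n Aset) := by
  classical
  set D : Set (Matrix (Fin n) (Fin n) ℂ) := dmat n (R : Set (Matrix (Fin n) (Fin n) ℂ)) with hD
  haveI : LocallyConvexSpace ℝ (Matrix (Fin n) (Fin n) ℂ) :=
    inferInstanceAs (LocallyConvexSpace ℝ (Fin n → Fin n → ℂ))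
  have hγcont : ∀ j : ℕ, Continuous ⇑(γ ^ j) := fun j =>
    LinearMap.continuous_of_finiteDimensional _
  have hpow_apply : ∀ (j : ℕ) (z : Matrix (Fin n) (Fin n) ℂ),
      (γ ^ (j + 1)) z = (γ ^ j) (γ z) := by
    intro j z
    rw [pow_succ, Module.End.mul_apply]
  have hpow_apply' : ∀ (j : ℕ) (z : Matrix (Fin n) (Fin n) ℂ),
      (γ ^ (j + 1)) z = γ ((γ ^ j) z) := by
    intro j z
    rw [pow_succ', Module.End.mul_apply]
  have hγRj : ∀ j : ℕ, ∀ X ∈ R, (γ ^ j) X ∈ R := by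
    intro j
    induction j with
    | zero => intro X hX; simpa using hX
    | succ j ih => intro X hX; rw [hpow_apply']; exact hγR _ (ih X hX)
  have hγDj : ∀ j : ℕ, ∀ X ∈ D, (γ ^ j) X ∈ D := by
    intro j
    induction j with
    | zero => intro X hX; simpa using hX
    | succ j ih => intro X hX; rw [hpow_apply']; exact hDinv (ih X hX)
  have hγjk : ∀ j : ℕ, ∀ X ∈ R, (γ ^ (j * k)) X = X := by
    intro j
    induction j with
    | zero => intro X hX; simp
    | succ j ih =>
      intro X hX
      have : (j + 1) * k = j * k + k := by ring
      rw [this, pow_add, Module.End.mul_apply, hγk X hX, ih X hX]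
  have hAR : Aset ⊆ (R : Set (Matrix (Fin n) (Fin n) ℂ)) := by
    rw [hAset]; intro X hX; exact hX.1
  have hAfix : ∀ X ∈ Aset, γ X = X := by
    rw [hAset]; intro X hX; exact hX.2
  have hAfixj : ∀ j : ℕ, ∀ X ∈ Aset, (γ ^ j) X = X := by
    intro j
    induction j with
    | zero => intro X _; simp
    | succ j ih => intro X hX; rw [hpow_apply', ih X hX, hAfix X hX]
  have hsmulH : ∀ (r : ℝ) (A : Matrix (Fin n) (Fin n) ℂ), (r • A)ᴴ = r • Aᴴ := by
    intro r A
    rw [Matrix.conjTranspose_smul, star_trivial]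
  have hDmem : ∀ z ∈ D, z ∈ R ∧ zᴴ = z ∧
      (∀ B ∈ R, B.PosSemidef → 0 ≤ ((z * B).trace).re) ∧ z.trace = 1 := by
    intro z hz
    exact ⟨hz.1.1, hz.1.2.1, hz.1.2.2, hz.2⟩
  have hkR : (k : ℝ) ≠ 0 := Nat.cast_ne_zero.mpr (Nat.pos_iff_ne_zero.mp hk)
  have hshift : ∀ z ∈ R, ∑ e ∈ Finset.range k, (γ ^ e) (γ z)
      = ∑ e ∈ Finset.range k, (γ ^ e) z := by
    intro z hz
    have e1 := Finset.sum_range_succ' (fun e => (γ ^ e) z) k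
    have e2 := Finset.sum_range_succ (fun e => (γ ^ e) z) k
    have f0 : (γ ^ 0) z = z := by simp
    have fk : (γ ^ k) z = z := hγk z hz
    have hcongr : ∑ e ∈ Finset.range k, (γ ^ e) (γ z)
        = ∑ e ∈ Finset.range k, (γ ^ (e + 1)) z :=
      Finset.sum_congr rfl fun e _ => (hpow_apply e z).symm
    rw [hcongr]
    have := e1.symm.trans e2
    rw [f0, fk] at this
    exact add_right_cancel this
  have horbit : ∀ (c : ℕ), ∀ z ∈ R, ∑ e ∈ Finset.range k, (γ ^ e) ((γ ^ c) z)
      = ∑ e ∈ Finset.range k, (γ ^ e) z := by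
    intro c
    induction c with
    | zero => intro z hz; simp
    | succ c ih =>
      intro z hz
      have h1 : ∀ e : ℕ, (γ ^ e) ((γ ^ (c+1)) z) = (γ ^ e) ((γ ^ c) (γ z)) := by
        intro e
        rw [hpow_apply c z]
      calc ∑ e ∈ Finset.range k, (γ ^ e) ((γ ^ (c+1)) z)
          = ∑ e ∈ Finset.range k, (γ ^ e) ((γ ^ c) (γ z)) :=
            Finset.sum_congr rfl fun e _ => h1 e
        _ = ∑ e ∈ Finset.range k, (γ ^ e) (γ z) := ih (γ z) (hγR z hz)
        _ = ∑ e ∈ Finset.range k, (γ ^ e) z := hshift z hz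
  have hsum_fix : ∀ y ∈ Aset, (k:ℝ)⁻¹ • ∑ e ∈ Finset.range k, (γ ^ e) y = y := by
    intro y hy
    have : ∑ e ∈ Finset.range k, (γ ^ e) y = k • y := by
      rw [Finset.sum_congr rfl fun e _ => hAfixj e y hy, Finset.sum_const,
        Finset.card_range]
    rw [this, ← Nat.cast_smul_eq_nsmul ℝ, smul_smul, inv_mul_cancel₀ hkR, one_smul]
  have hsmul_re : ∀ (r : ℝ) (c : ℂ), (r • c).re = r * c.re := by
    intro r c
    rw [Complex.real_smul]
    simp [Complex.mul_re]
  -- the explicit formula for π on D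
  have hπeq : ∀ z ∈ D, π z = (k:ℝ)⁻¹ • ∑ e ∈ Finset.range k, (γ ^ e) z := by
    intro z hz
    obtain ⟨hzR, hzH, hzdual, hztr⟩ := hDmem z hz
    set p : Matrix (Fin n) (Fin n) ℂ := (k:ℝ)⁻¹ • ∑ e ∈ Finset.range k, (γ ^ e) z with hp
    have hγeD : ∀ e : ℕ, (γ ^ e) z ∈ D := fun e => hγDj e z hz
    have hγeH : ∀ e : ℕ, ((γ ^ e) z)ᴴ = (γ ^ e) z := fun e => (hDmem _ (hγeD e)).2.1
    have hpR : p ∈ R :=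
      Submodule.smul_mem _ _ (Submodule.sum_mem _ fun e _ => hγRj e z hzR)
    have hpH : pᴴ = p := by
      rw [hp, hsmulH, Matrix.conjTranspose_sum]
      congr 2
      funext e
      exact hγeH e
    have hpγ : γ p = p := by
      rw [hp, _root_.map_smul, map_sum]
      congr 1
      calc ∑ e ∈ Finset.range k, γ ((γ ^ e) z)
          = ∑ e ∈ Finset.range k, (γ ^ e) (γ z) :=
            Finset.sum_congr rfl fun e _ => by
              rw [← hpow_apply' e z, hpow_apply e z]
        _ = ∑ e ∈ Finset.range k, (γ ^ e) z := hshift z hzR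
    have hpA : p ∈ Aset := by rw [hAset]; exact ⟨hpR, hpγ⟩
    have htr_e : ∀ (B : Matrix (Fin n) (Fin n) ℂ), B ∈ Aset → ∀ e : ℕ,
        ((((γ ^ e) z) * B).trace).re = ((z * B).trace).re := by
      intro B hB e
      have hBR : B ∈ R := hAR hB
      induction e with
      | zero => simp
      | succ e ih =>
        have horth := hγorth ((γ ^ e) z) (hγRj e z hzR) ((γ ^ e) B) (hγRj e B hBR)
        rw [hAfixj e B hB, hAfix B hB, ← hpow_apply' e z, hγeH (e+1), hγeH e] at horth
        exact horth.trans ih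
    have horthp : ∀ B ∈ Aset, Bᴴ = B → (((z - p) * B).trace).re = 0 := by
      intro B hB _
      have hsum : ((p * B).trace).re = ((z * B).trace).re := by
        rw [hp, Matrix.smul_mul, Matrix.trace_smul, hsmul_re, Finset.sum_mul,
          Matrix.trace_sum, Complex.re_sum,
          Finset.sum_congr rfl fun e _ => htr_e B hB e,
          Finset.sum_const, Finset.card_range, nsmul_eq_mul]
        field_simp
      rw [sub_mul, Matrix.trace_sub, Complex.sub_re, hsum, sub_self]
    obtain ⟨hqA, hqH⟩ := hπmem z hzR hzH
    have hqorth := hπorth z hzR hzH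
    set d : Matrix (Fin n) (Fin n) ℂ := p - π z with hd
    have hdA : d ∈ Aset := by
      rw [hAset]
      refine ⟨Submodule.sub_mem _ hpR (hAR hqA), ?_⟩
      show γ (p - π z) = p - π z
      rw [map_sub, hpγ, hAfix _ hqA]
    have hdH : dᴴ = d := by rw [hd, Matrix.conjTranspose_sub, hpH, hqH]
    have h1d : (((z - p) * d).trace).re = 0 := horthp d hdA hdH
    have h2d : (((z - π z) * d).trace).re = 0 := hqorth d hdA hdH
    have hdd : d * d = (z - π z) * d - (z - p) * d := by
      rw [hd]; noncomm_ring
    have h3 : ((d * d).trace).re = 0 := by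
      rw [hdd, Matrix.trace_sub, Complex.sub_re, h2d, h1d, sub_zero]
    have hzero := herm_mul_self_trace_eq_zero hdH h3
    rw [hd, sub_eq_zero] at hzero
    exact hzero.symm
  -- π maps D into dmat n Aset
  have hπD : ∀ z ∈ D, π z ∈ dmat n Aset := by
    intro z hz
    obtain ⟨hzR, hzH, hzdual, hztr⟩ := hDmem z hz
    obtain ⟨hqA, hqH⟩ := hπmem z hzR hzH
    have hγeD : ∀ e : ℕ, (γ ^ e) z ∈ D := fun e => hγDj e z hz
    refine ⟨⟨hqA, hqH, ?_⟩, ?_⟩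
    · intro B hB hBpsd
      rw [hπeq z hz, Matrix.smul_mul, Matrix.trace_smul, hsmul_re, Finset.sum_mul,
        Matrix.trace_sum, Complex.re_sum]
      apply mul_nonneg (by positivity)
      apply Finset.sum_nonneg
      intro e _
      exact (hDmem _ (hγeD e)).2.2.1 B (hAR hB) hBpsd
    · have hts : ∑ e ∈ Finset.range k, ((γ ^ e) z).trace = (k : ℂ) := by
        rw [Finset.sum_congr rfl fun e _ => (hDmem _ (hγeD e)).2.2.2,
          Finset.sum_const, Finset.card_range, nsmul_eq_mul, mul_one]
      rw [hπeq z hz, Matrix.trace_smul, Matrix.trace_sum, hts, Complex.real_smul]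
      push_cast
      field_simp
  -- the submodule structure on Aset
  have hAset' : ∀ X, X ∈ Aset ↔ X ∈ R ∧ γ X = X := by
    intro X; rw [hAset]; rfl
  set Asub : Submodule ℝ (Matrix (Fin n) (Fin n) ℂ) :=
    { carrier := Aset
      zero_mem' := (hAset' 0).mpr ⟨Submodule.zero_mem R, map_zero γ⟩
      add_mem' := by
        intro a b ha hb
        rw [hAset'] at ha hb ⊢
        exact ⟨Submodule.add_mem _ ha.1 hb.1, by rw [map_add, ha.2, hb.2]⟩
      smul_mem' := by
        intro c a ha
        rw [hAset'] at ha ⊢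
        exact ⟨Submodule.smul_mem _ _ ha.1, by rw [_root_.map_smul, ha.2]⟩ } with hAsub
  have hAsubmem : ∀ X, X ∈ Asub ↔ X ∈ Aset := fun X => Iff.rfl
  -- dmat n Aset ⊆ D
  have hDA : dmat n Aset ⊆ D := by
    intro y hy
    obtain ⟨⟨hyA, hyH, hydual⟩, hytr⟩ := hy
    have hypsd : y.PosSemidef :=
      dual_psd hyH Asub hA1 hAmul hyA (fun B hB hBpsd => hydual B hB hBpsd)
    exact ⟨⟨hAR hyA, hyH, fun B _ hBpsd => psd_trace_mul_re_nonneg hypsd hBpsd⟩, hytr⟩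
  -- averages of elements of D lie in D
  have havg : ∀ (N : ℕ), 0 < N → ∀ w : ℕ → Matrix (Fin n) (Fin n) ℂ,
      (∀ i < N, w i ∈ D) → ((N:ℝ))⁻¹ • ∑ i ∈ Finset.range N, w i ∈ D := by
    intro N hN w hw
    have hNR : (N : ℝ) ≠ 0 := Nat.cast_ne_zero.mpr (Nat.pos_iff_ne_zero.mp hN)
    have hwm : ∀ i ∈ Finset.range N, w i ∈ D := fun i hi => hw i (Finset.mem_range.mp hi)
    refine ⟨⟨?_, ?_, ?_⟩, ?_⟩
    · exact Submodule.smul_mem _ _ (Submodule.sum_mem _ fun i hi => (hDmem _ (hwm i hi)).1)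
    · rw [hsmulH, Matrix.conjTranspose_sum]
      congr 1
      exact Finset.sum_congr rfl fun i hi => (hDmem _ (hwm i hi)).2.1
    · intro B hB hBpsd
      rw [Matrix.smul_mul, Matrix.trace_smul, hsmul_re, Finset.sum_mul,
        Matrix.trace_sum, Complex.re_sum]
      apply mul_nonneg (by positivity)
      exact Finset.sum_nonneg fun i hi => (hDmem _ (hwm i hi)).2.2.1 B hB hBpsd
    · have hts : ∑ i ∈ Finset.range N, (w i).trace = (N : ℂ) := by
        rw [Finset.sum_congr rfl fun i hi => (hDmem _ (hwm i hi)).2.2.2,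
          Finset.sum_const, Finset.card_range, nsmul_eq_mul, mul_one]
      rw [Matrix.trace_smul, Matrix.trace_sum, hts, Complex.real_smul]
      push_cast
      field_simp
  -- main construction
  intro U hUopen
  have key : ∀ x ∈ U ∩ D, ∃ W : Set (Matrix (Fin n) (Fin n) ℂ),
      IsOpen W ∧ π x ∈ W ∧ W ∩ dmat n Aset ⊆ π '' (U ∩ D) := by
    rintro x ⟨hxU, hxD⟩
    have hxR : x ∈ R := (hDmem x hxD).1
    have hπxA : π x ∈ dmat n Aset := hπD x hxD
    have hπxD : π x ∈ D := hDA hπxA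
    set G : ℝ × (Matrix (Fin n) (Fin n) ℂ × Matrix (Fin n) (Fin n) ℂ) →
        Matrix (Fin n) (Fin n) ℂ :=
      fun t => (1 - t.1) • t.2.1 + t.1 • t.2.2 with hG
    have hGcont : Continuous G := by
      apply Continuous.add
      · exact (continuous_const.sub continuous_fst).smul
          (continuous_fst.comp continuous_snd)
      · exact continuous_fst.smul (continuous_snd.comp continuous_snd)
    have hG0 : G (0, (x, π x)) = x := by simp [hG]
    have hGU : G ⁻¹' U ∈ nhds (0, (x, π x)) :=
      hGcont.continuousAt.preimage_mem_nhds (by rw [hG0]; exact hUopen.mem_nhds hxU)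
    obtain ⟨I, hI, P, hP, hIP⟩ := mem_nhds_prod_iff.mp hGU
    obtain ⟨B₁, hB₁, V₁, hV₁, hBV⟩ := mem_nhds_prod_iff.mp hP
    obtain ⟨a, ha, haI⟩ := Metric.mem_nhds_iff.mp hI
    obtain ⟨B, hBopen, hBconv, hxB, hBsub⟩ :=
      exists_convex_open x (B₁ ∩ U) (Filter.inter_mem hB₁ (hUopen.mem_nhds hxU))
    obtain ⟨V, hVopen, hVconv, hπxV, hVsub⟩ := exists_convex_open (π x) V₁ hV₁
    -- choose the dyadic size
    obtain ⟨m, hmk, hma⟩ : ∃ m : ℕ, k ≤ 2 ^ m ∧ (k : ℝ) < a * 2 ^ m := by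
      obtain ⟨m₁, hm₁⟩ := pow_unbounded_of_one_lt ((k : ℝ) / a) (one_lt_two)
      refine ⟨max m₁ k, ?_, ?_⟩
      · calc k ≤ 2 ^ k := (Nat.lt_two_pow_self).le
          _ ≤ 2 ^ max m₁ k := Nat.pow_le_pow_right (by norm_num) (le_max_right _ _)
      · have h2 : (2:ℝ) ^ m₁ ≤ 2 ^ max m₁ k :=
          pow_le_pow_right₀ (by norm_num) (le_max_left _ _)
        have hk2 : (k : ℝ) / a < 2 ^ max m₁ k := lt_of_lt_of_le hm₁ h2
        rw [div_lt_iff₀ ha] at hk2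
        calc (k : ℝ) < 2 ^ max m₁ k * a := hk2
          _ = a * 2 ^ max m₁ k := mul_comm _ _
    set N := 2 ^ m with hNdef
    set q := N / k with hqdef
    set r := N % k with hrdef
    have hN0 : 0 < N := Nat.two_pow_pos m
    have hqk : q * k + r = N := by rw [mul_comm]; exact Nat.div_add_mod N k
    have hrk : r < k := Nat.mod_lt _ hk
    have hq1 : 1 ≤ q := (Nat.one_le_div_iff hk).mpr hmk
    have hqk0 : 0 < q * k := Nat.mul_pos hq1 hk
    have hNR : (N : ℝ) ≠ 0 := Nat.cast_ne_zero.mpr (Nat.pos_iff_ne_zero.mp hN0)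
    have hN2 : ((N : ℕ) : ℝ) = (2 : ℝ) ^ m := by rw [hNdef]; push_cast; ring
    have hqkR : ((q * k : ℕ) : ℝ) ≠ 0 := Nat.cast_ne_zero.mpr (Nat.pos_iff_ne_zero.mp hqk0)
    set O : ℕ → Set (Matrix (Fin n) (Fin n) ℂ) := fun i =>
      if i < q * k then (fun z => (γ ^ ((i % k) * (k - 1))) z) ⁻¹' B else V with hOdef
    have hOopen : ∀ i, IsOpen (O i) := by
      intro i
      rw [hOdef]
      by_cases h : i < q * k
      · simp only [if_pos h]
        exact hBopen.preimage (hγcont _)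
      · simp only [if_neg h]
        exact hVopen
    obtain ⟨W, hWopen, hWeq⟩ := box_open D hstable m O hOopen
    have harith : ∀ i : ℕ, (i % k) * (k - 1) + (i % k) = (i % k) * k := by
      intro i
      calc (i % k) * (k - 1) + (i % k) = (i % k) * ((k - 1) + 1) := by rw [Nat.mul_succ]
        _ = (i % k) * k := by congr 1; omega
    have hcomp : ∀ (z : Matrix (Fin n) (Fin n) ℂ), z ∈ R → ∀ i : ℕ,
        (γ ^ ((i % k) * (k - 1))) ((γ ^ (i % k)) z) = (γ ^ ((i % k) * k)) z := by
      intro z hz i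
      rw [← harith i, pow_add, Module.End.mul_apply]
    refine ⟨W, hWopen, ?_, ?_⟩
    · -- base point : π x ∈ W
      have hbase : π x ∈ {z | ∃ u : ℕ → Matrix (Fin n) (Fin n) ℂ,
          (∀ i < 2 ^ m, u i ∈ O i ∩ D) ∧
          z = ((2 ^ m : ℝ))⁻¹ • ∑ i ∈ Finset.range (2 ^ m), u i} := by
        refine ⟨fun i => if i < q * k then (γ ^ (i % k)) x else π x, ?_, ?_⟩
        · intro i hi
          by_cases h : i < q * k
          · simp only [hOdef, h, if_true]
            constructor
            · show (γ ^ ((i % k) * (k - 1))) ((γ ^ (i % k)) x) ∈ B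
              rw [hcomp x hxR i, hγjk (i % k) x hxR]
              exact hxB
            · exact hγDj (i % k) x hxD
          · simp only [hOdef, h, if_false]
            exact ⟨hπxV, hπxD⟩
        · rw [← hN2, ← hNdef]
          have hS1 : ∑ i ∈ Finset.range (q * k),
              (if i < q * k then (γ ^ (i % k)) x else π x)
              = q • ∑ d ∈ Finset.range k, (γ ^ d) x := by
            rw [Finset.sum_congr rfl (fun i hi => if_pos (Finset.mem_range.mp hi))]
            exact sum_mod_count (fun d => (γ ^ d) x) k q hk
          have hS2 : ∑ i ∈ Finset.Ico (q * k) N,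
              (if i < q * k then (γ ^ (i % k)) x else π x)
              = (N - q * k) • π x := by
            rw [Finset.sum_congr rfl (fun i hi => if_neg (by
              have := (Finset.mem_Ico.mp hi).1; omega))]
            rw [Finset.sum_const, Nat.card_Ico]
          have hSd : (k : ℝ) • π x = ∑ d ∈ Finset.range k, (γ ^ d) x := by
            rw [hπeq x hxD, smul_smul, mul_inv_cancel₀ hkR, one_smul]
          have hqkN : q * k ≤ N := by omega
          rw [← Finset.sum_range_add_sum_Ico _ hqkN, hS1, hS2,
            ← Nat.cast_smul_eq_nsmul ℝ q, ← Nat.cast_smul_eq_nsmul ℝ (N - q * k),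
            ← hSd]
          have hsub : ((N - q * k : ℕ) : ℝ) = (N : ℝ) - (q : ℝ) * (k : ℝ) := by
            push_cast [Nat.cast_sub hqkN]
            ring
          rw [smul_smul, smul_add, smul_smul, smul_smul, ← add_smul]
          have hone : ((N:ℝ))⁻¹ * ((q : ℝ) * (k:ℝ)) + ((N:ℝ))⁻¹ * ((N - q * k : ℕ) : ℝ) = 1 := by
            rw [hsub]
            field_simp
            ring
          rw [hone, one_smul]
      have := hWeq ▸ hbase
      exact this.1
    · -- the hard inclusion
      rintro y ⟨hyW, hyA⟩
      have hyD : y ∈ D := hDA hyA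
      have hyAset : y ∈ Aset := hyA.1.1
      have hyL : y ∈ {z | ∃ u : ℕ → Matrix (Fin n) (Fin n) ℂ,
          (∀ i < 2 ^ m, u i ∈ O i ∩ D) ∧
          z = ((2 ^ m : ℝ))⁻¹ • ∑ i ∈ Finset.range (2 ^ m), u i} := by
        rw [hWeq]; exact ⟨hyW, hyD⟩
      obtain ⟨u, hu, hy⟩ := hyL
      rw [← hN2, ← hNdef] at hy
      have huD : ∀ i < N, u i ∈ D := fun i hi => (hu i hi).2
      have huR : ∀ i < N, u i ∈ R := fun i hi => (hDmem _ (huD i hi)).1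
      have huB : ∀ i, i < q * k → (γ ^ ((i % k) * (k - 1))) (u i) ∈ B := by
        intro i hi
        have h := (hu i (by omega)).1
        rw [hOdef] at h
        simpa only [if_pos hi, Set.mem_preimage] using h
      have huV : ∀ i, q * k ≤ i → i < N → u i ∈ V := by
        intro i h1 h2
        have h := (hu i h2).1
        rw [hOdef] at h
        simpa only [if_neg (not_lt.mpr h1)] using h
      set w : ℕ → Matrix (Fin n) (Fin n) ℂ := fun i =>
        if i < q * k then (γ ^ ((i % k) * (k - 1))) (u i) else u i with hwdef
      have hwD : ∀ i < N, w i ∈ D := by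
        intro i hi
        rw [hwdef]
        by_cases h : i < q * k
        · simp only [if_pos h]
          exact hγDj _ (u i) (huD i hi)
        · simp only [if_neg h]
          exact huD i hi
      set ρ : Matrix (Fin n) (Fin n) ℂ :=
        ((N : ℝ))⁻¹ • ∑ i ∈ Finset.range N, w i with hρdef
      have hρD : ρ ∈ D := havg N hN0 w hwD
      have hsplitw : ∑ i ∈ Finset.range N, w i
          = ∑ i ∈ Finset.range (q * k), w i + ∑ i ∈ Finset.Ico (q * k) N, w i :=
        (Finset.sum_range_add_sum_Ico _ (by omega)).symm
      have hcB : ((q * k : ℕ) : ℝ)⁻¹ • ∑ i ∈ Finset.range (q * k), w i ∈ B := by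
        rw [Finset.smul_sum]
        apply hBconv.sum_mem
        · intro i _; positivity
        · rw [Finset.sum_const, Finset.card_range, nsmul_eq_mul, mul_inv_cancel₀ hqkR]
        · intro i hi
          have hi' := Finset.mem_range.mp hi
          rw [hwdef]
          simp only [if_pos hi']
          exact huB i hi'
      have hρU : ρ ∈ U := by
        by_cases hr : r = 0
        · have hNqk : N = q * k := by omega
          have hIco : Finset.Ico (q * k) N = ∅ := by rw [hNqk]; simp
          have hmem : ρ ∈ B := by
            rw [hρdef, hsplitw, hIco, Finset.sum_empty, add_zero, hNqk]
            exact hcB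
          exact (hBsub hmem).2
        · have hr0 : 0 < r := Nat.pos_of_ne_zero hr
          have hrR : ((r : ℕ) : ℝ) ≠ 0 := Nat.cast_ne_zero.mpr hr
          have hvV : ((r : ℕ) : ℝ)⁻¹ • ∑ i ∈ Finset.Ico (q * k) N, w i ∈ V := by
            rw [Finset.smul_sum]
            apply hVconv.sum_mem
            · intro i _; positivity
            · rw [Finset.sum_const, Nat.card_Ico, (by omega : N - q * k = r),
                nsmul_eq_mul, mul_inv_cancel₀ hrR]
            · intro i hi
              obtain ⟨h1, h2⟩ := Finset.mem_Ico.mp hi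
              rw [hwdef]
              simp only [if_neg (not_lt.mpr h1)]
              exact huV i h1 h2
          have hρG : ρ = G ((r : ℝ) / (N : ℝ),
              (((q * k : ℕ) : ℝ)⁻¹ • ∑ i ∈ Finset.range (q * k), w i,
               ((r : ℕ) : ℝ)⁻¹ • ∑ i ∈ Finset.Ico (q * k) N, w i)) := by
            show ρ = (1 - (r : ℝ) / (N : ℝ)) •
                (((q * k : ℕ) : ℝ)⁻¹ • ∑ i ∈ Finset.range (q * k), w i)
              + ((r : ℝ) / (N : ℝ)) •
                (((r : ℕ) : ℝ)⁻¹ • ∑ i ∈ Finset.Ico (q * k) N, w i)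
            rw [hρdef, hsplitw, smul_add, smul_smul, smul_smul]
            have hcast : ((q * k : ℕ) : ℝ) + (r : ℝ) = (N : ℝ) := by
              exact_mod_cast congrArg (Nat.cast : ℕ → ℝ) hqk
            congr 1
            · congr 1
              field_simp
              push_cast at hcast ⊢
              linarith
            · congr 1
              field_simp
          have hsI : (r : ℝ) / (N : ℝ) ∈ I := by
            apply haI
            rw [Metric.mem_ball, Real.dist_eq, sub_zero, abs_of_nonneg (by positivity)]
            rw [div_lt_iff₀ (by exact_mod_cast hN0)]
            calc (r : ℝ) < (k : ℝ) := by exact_mod_cast hrk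
              _ < a * 2 ^ m := hma
              _ = a * (N : ℝ) := by rw [hNdef]; push_cast; ring
          have hmemP : (((q * k : ℕ) : ℝ)⁻¹ • ∑ i ∈ Finset.range (q * k), w i,
              ((r : ℕ) : ℝ)⁻¹ • ∑ i ∈ Finset.Ico (q * k) N, w i) ∈ P :=
            hBV ⟨(hBsub hcB).1, hVsub hvV⟩
          have := hIP (Set.mk_mem_prod hsI hmemP)
          rw [Set.mem_preimage] at this
          rw [hρG]
          exact this
      -- π ρ = y
      have hlw : ∀ vv : ℕ → Matrix (Fin n) (Fin n) ℂ,
          ∑ e ∈ Finset.range k, (γ ^ e) (((N : ℝ))⁻¹ • ∑ i ∈ Finset.range N, vv i)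
          = ((N : ℝ))⁻¹ • ∑ i ∈ Finset.range N, ∑ e ∈ Finset.range k, (γ ^ e) (vv i) := by
        intro vv
        calc ∑ e ∈ Finset.range k, (γ ^ e) (((N : ℝ))⁻¹ • ∑ i ∈ Finset.range N, vv i)
            = ∑ e ∈ Finset.range k, ((N : ℝ))⁻¹ • ∑ i ∈ Finset.range N, (γ ^ e) (vv i) :=
              Finset.sum_congr rfl fun e _ => by rw [_root_.map_smul, map_sum]
          _ = ((N : ℝ))⁻¹ • ∑ e ∈ Finset.range k, ∑ i ∈ Finset.range N, (γ ^ e) (vv i) :=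
              (Finset.smul_sum).symm
          _ = ((N : ℝ))⁻¹ • ∑ i ∈ Finset.range N, ∑ e ∈ Finset.range k, (γ ^ e) (vv i) := by
              rw [Finset.sum_comm]
      have hπρ : π ρ = y := by
        rw [hπeq ρ hρD]
        have hsum : ∑ e ∈ Finset.range k, (γ ^ e) ρ
            = ∑ e ∈ Finset.range k, (γ ^ e) y := by
          rw [hρdef, hy, hlw w, hlw u]
          congr 1
          apply Finset.sum_congr rfl
          intro i hi
          have hiN := Finset.mem_range.mp hi
          rw [hwdef]
          by_cases h : i < q * k
          · simp only [if_pos h]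
            exact horbit _ (u i) (huR i hiN)
          · simp only [if_neg h]
        rw [hsum]
        exact hsum_fix y hyAset
      exact ⟨ρ, ⟨hρU, hρD⟩, hπρ⟩
  choose Wf hWopen' hWmem' hWsub' using key
  refine ⟨⋃ x, ⋃ (hx : x ∈ U ∩ D), Wf x hx, ?_, ?_⟩
  · exact isOpen_iUnion fun x => isOpen_iUnion fun hx => hWopen' x hx
  · ext y
    constructor
    · rintro ⟨x, hx, rfl⟩
      refine ⟨?_, hπD x hx.2⟩
      exact Set.mem_iUnion.mpr ⟨x, Set.mem_iUnion.mpr ⟨hx, hWmem' x hx⟩⟩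
    · rintro ⟨hy1, hy2⟩
      obtain ⟨x, hx2⟩ := Set.mem_iUnion.mp hy1
      obtain ⟨hx, hyW⟩ := Set.mem_iUnion.mp hx2
      exact hWsub' x hx ⟨hyW, hy2⟩
end

section
/- For any partition n = n₁ + … + n_k, the block-diagonal pinching map D(M_n) → D(M_{n₁} ⊕ … ⊕ M_{n_k}) (orthogonal projection onto block-diagonal matrices) is open. -/
open Matrix ComplexOrder Filter Topology

set_option linter.unusedSectionVars false
set_option maxHeartbeats 1000000

namespace Matrix.PosSemidef

variable {ι : Type*} [Fintype ι] [DecidableEq ι] {A : Matrix ι ι ℂ}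

/-- The positive semidefinite square root, via the spectral decomposition. -/
noncomputable def sqrt (hA : A.PosSemidef) : Matrix ι ι ℂ :=
  (hA.1.eigenvectorUnitary : Matrix ι ι ℂ) *
    diagonal (fun x => (Real.sqrt (hA.1.eigenvalues x) : ℂ)) *
    (star hA.1.eigenvectorUnitary : Matrix ι ι ℂ)

open scoped MatrixOrder in
lemma sqrt_eq_cfc (hA : A.PosSemidef) : hA.sqrt = CFC.sqrt A := by
  have h0 : 0 ≤ A := Matrix.nonneg_iff_posSemidef.mpr hA
  rw [CFC.sqrt_eq_real_sqrt A h0, cfcₙ_eq_cfc (hf0 := by simp), hA.1.cfc_eq, IsHermitian.cfc,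
    Unitary.conjStarAlgAut_apply]
  rfl

open scoped MatrixOrder in
lemma posSemidef_sqrt (hA : A.PosSemidef) : hA.sqrt.PosSemidef := by
  rw [sqrt_eq_cfc]; exact Matrix.nonneg_iff_posSemidef.mp (CFC.sqrt_nonneg A)

open scoped MatrixOrder in
lemma sqrt_mul_self (hA : A.PosSemidef) : hA.sqrt * hA.sqrt = A := by
  rw [sqrt_eq_cfc]; exact CFC.sqrt_mul_sqrt_self A (Matrix.nonneg_iff_posSemidef.mpr hA)

open scoped MatrixOrder in
lemma eq_sqrt_of_sq_eq {B : Matrix ι ι ℂ} (hB : B.PosSemidef) (hA : A.PosSemidef)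
    (h : B ^ 2 = A) : B = hA.sqrt := by
  rw [sqrt_eq_cfc]
  exact (CFC.sqrt_unique (by rw [← h, pow_two]) (Matrix.nonneg_iff_posSemidef.mpr hB)).symm

end Matrix.PosSemidef

namespace PinchOpenAux

variable {ι : Type*} [Fintype ι] [DecidableEq ι]





/-- Positive semidefinite matrices form a closed set. -/
lemma isClosed_posSemidef : IsClosed {A : Matrix ι ι ℂ | A.PosSemidef} := by
  have : {A : Matrix ι ι ℂ | A.PosSemidef} =
      {A : Matrix ι ι ℂ | Aᴴ = A} ∩
        ⋂ x : ι → ℂ, {A : Matrix ι ι ℂ | 0 ≤ dotProduct (star x) (A *ᵥ x)} := by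
    ext A
    simp only [Set.mem_setOf_eq, Set.mem_inter_iff, Set.mem_iInter]
    exact Matrix.posSemidef_iff_dotProduct_mulVec
  rw [this]
  refine IsClosed.inter (isClosed_eq (continuous_id.matrix_conjTranspose) continuous_id) ?_
  refine isClosed_iInter fun x => ?_
  have hc : Continuous fun A : Matrix ι ι ℂ => dotProduct (star x) (A *ᵥ x) := by
    unfold dotProduct Matrix.mulVec
    refine continuous_finset_sum _ fun i _ => Continuous.mul continuous_const ?_
    exact continuous_finset_sum _ fun j _ => ((continuous_apply_apply i j).mul continuous_const)
  exact isClosed_le continuous_const hc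

open scoped Classical in
/-- A global version of the positive semidefinite square root. -/
noncomputable def sqrtD (A : Matrix ι ι ℂ) : Matrix ι ι ℂ :=
  if h : A.PosSemidef then h.sqrt else 0

lemma sqrtD_eq {A : Matrix ι ι ℂ} (h : A.PosSemidef) : sqrtD A = h.sqrt := by
  rw [sqrtD, dif_pos h]


lemma sqrtD_mul_self {A : Matrix ι ι ℂ} (h : A.PosSemidef) : sqrtD A * sqrtD A = A := by
  rw [sqrtD_eq h]; exact h.sqrt_mul_self

lemma posSemidef_sqrtD {A : Matrix ι ι ℂ} (h : A.PosSemidef) : (sqrtD A).PosSemidef := by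
  rw [sqrtD_eq h]; exact h.posSemidef_sqrt

/-- entrywise bound for the square root. -/
lemma sqrt_entry_bound {A : Matrix ι ι ℂ} (h : A.PosSemidef) (a b : ι) :
    ‖sqrtD A a b‖ ^ 2 ≤ (A b b).re := by
  have hH : (sqrtD A)ᴴ = sqrtD A := (posSemidef_sqrtD h).1
  have h1 : A b b = ∑ x : ι, ((Complex.normSq (sqrtD A x b) : ℝ) : ℂ) := by
    conv_lhs => rw [← sqrtD_mul_self h]
    rw [Matrix.mul_apply]
    refine Finset.sum_congr rfl fun x _ => ?_
    have hbx : sqrtD A b x = starRingEnd ℂ (sqrtD A x b) := by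
      conv_lhs => rw [← hH]
      rfl
    rw [hbx, ← Complex.normSq_eq_conj_mul_self]
  have h2 : (A b b).re = ∑ x : ι, Complex.normSq (sqrtD A x b) := by
    rw [h1, Complex.re_sum]
    exact Finset.sum_congr rfl fun x _ => Complex.ofReal_re _
  rw [h2, Complex.sq_norm]
  exact Finset.single_le_sum (f := fun x => Complex.normSq (sqrtD A x b))
    (fun x _ => Complex.normSq_nonneg _) (Finset.mem_univ a)







lemma continuousWithinAt_sqrtD {σ : Matrix ι ι ℂ} (hσ : σ.PosSemidef) :
    ContinuousWithinAt sqrtD {A : Matrix ι ι ℂ | A.PosSemidef} σ := by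
  set s : Set (Matrix ι ι ℂ) := {A | A.PosSemidef}
  haveI : FirstCountableTopology (Matrix ι ι ℂ) :=
    inferInstanceAs (FirstCountableTopology (ι → ι → ℂ))
  rw [ContinuousWithinAt]
  apply tendsto_of_subseq_tendsto
  intro x hx
  rw [tendsto_nhdsWithin_iff] at hx
  obtain ⟨hx1, hx2⟩ := hx
  -- the uniform entry bound
  set c0 : ℝ := 1 + ∑ b : ι, ‖σ b b‖ with hc0
  set c : ℝ := Real.sqrt c0 with hc
  have hbound : ∀ᶠ m in atTop, (x m).PosSemidef ∧ ∀ a b : ι, ‖sqrtD (x m) a b‖ ≤ c := by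
    have hev : ∀ᶠ m in atTop, ∀ b : ι, ‖x m b b - σ b b‖ < 1 := by
      rw [eventually_all]
      intro b
      have ht : Tendsto (fun m => x m b b) atTop (𝓝 (σ b b)) :=
        (tendsto_pi_nhds.mp (tendsto_pi_nhds.mp hx1 b) b)
      have : {z : ℂ | ‖z - σ b b‖ < 1} ∈ 𝓝 (σ b b) := by
        have : Metric.ball (σ b b) 1 ∈ 𝓝 (σ b b) := Metric.ball_mem_nhds _ one_pos
        simpa [Metric.ball, Complex.dist_eq] using this
      exact ht.eventually this
    filter_upwards [hx2, hev] with m hm1 hm2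
    refine ⟨hm1, fun a b => ?_⟩
    have h1 : ‖sqrtD (x m) a b‖ ^ 2 ≤ (x m b b).re := sqrt_entry_bound hm1 a b
    have h2 : (x m b b).re ≤ c0 := by
      have h3 : (x m b b).re ≤ ‖x m b b‖ := Complex.re_le_norm _
      have h4 : ‖x m b b‖ ≤ ‖x m b b - σ b b‖ + ‖σ b b‖ := by
        simpa using norm_add_le (x m b b - σ b b) (σ b b)
      have h5 : ‖σ b b‖ ≤ ∑ b' : ι, ‖σ b' b'‖ :=
        Finset.single_le_sum (f := fun b' => ‖σ b' b'‖)
          (fun _ _ => norm_nonneg _) (Finset.mem_univ b)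
      have := hm2 b
      simp only [hc0]
      linarith
    rw [hc, ← Real.sqrt_sq (norm_nonneg _)]
    exact Real.sqrt_le_sqrt (le_trans h1 h2)
  obtain ⟨M, hM⟩ := eventually_atTop.mp hbound
  set w : ℕ → Matrix ι ι ℂ := fun m => sqrtD (x (m + M)) with hw
  have hwP : ∀ m, (x (m + M)).PosSemidef := fun m => (hM _ (Nat.le_add_left M m)).1
  -- compactness
  set K : Set (Matrix ι ι ℂ) :=
      (Set.univ : Set ι).pi fun _ => (Set.univ : Set ι).pi fun _ => Metric.closedBall (0 : ℂ) c
    with hK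
  have hKc : IsCompact K :=
    isCompact_univ_pi fun _ => isCompact_univ_pi fun _ => isCompact_closedBall (0 : ℂ) c
  have hwK : ∀ m, w m ∈ K := by
    intro m
    rw [hK]; refine Set.mem_univ_pi.mpr ?_
    intro a
    rw [Set.mem_univ_pi]
    intro b
    rw [Metric.mem_closedBall, dist_zero_right]
    show ‖sqrtD (x (m + M)) a b‖ ≤ c
    exact (hM _ (Nat.le_add_left M m)).2 a b
  obtain ⟨L, _, φ, hφ, hLt⟩ := hKc.tendsto_subseq hwK
  -- identify the limit
  have hLP : L.PosSemidef := by
    have : ∀ m, w (φ m) ∈ s := fun m => posSemidef_sqrtD (hwP (φ m))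
    exact isClosed_posSemidef.mem_of_tendsto hLt (Eventually.of_forall this)
  have hsq : L * L = σ := by
    have h1 : Tendsto (fun m => w (φ m) * w (φ m)) atTop (𝓝 (L * L)) := hLt.mul hLt
    have h2 : (fun m => w (φ m) * w (φ m)) = fun m => x (φ m + M) := by
      funext m; exact sqrtD_mul_self (hwP (φ m))
    rw [h2] at h1
    have h3 : Tendsto (fun m => x (φ m + M)) atTop (𝓝 σ) := by
      refine hx1.comp ?_
      exact tendsto_atTop_mono (fun m => Nat.le_add_right _ _) hφ.tendsto_atTop
    exact tendsto_nhds_unique h1 h3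
  have hLσ : L = sqrtD σ := by
    rw [sqrtD_eq hσ]
    exact hLP.eq_sqrt_of_sq_eq hσ (by rw [pow_two, hsq])
  exact ⟨fun m => φ m + M, by rwa [hLσ] at hLt⟩

variable {σ : Matrix ι ι ℂ} (hσ : σ.PosSemidef)

/-- Apply a real function to a positive semidefinite matrix via its spectral decomposition. -/
noncomputable def Phi (hσ : σ.PosSemidef) (f : ℝ → ℝ) : Matrix ι ι ℂ :=
  (hσ.1.eigenvectorUnitary : Matrix ι ι ℂ) *
    diagonal (fun x => (f (hσ.1.eigenvalues x) : ℂ)) *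
    (star hσ.1.eigenvectorUnitary : Matrix ι ι ℂ)

lemma star_U_mul_U :
    (star hσ.1.eigenvectorUnitary : Matrix ι ι ℂ) * (hσ.1.eigenvectorUnitary : Matrix ι ι ℂ)
      = 1 := by
  exact mem_unitaryGroup_iff'.mp hσ.1.eigenvectorUnitary.2

lemma U_mul_star_U :
    (hσ.1.eigenvectorUnitary : Matrix ι ι ℂ) * (star hσ.1.eigenvectorUnitary : Matrix ι ι ℂ)
      = 1 := by
  exact mem_unitaryGroup_iff.mp hσ.1.eigenvectorUnitary.2

lemma Phi_mul (f g : ℝ → ℝ) :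
    Phi hσ f * Phi hσ g = Phi hσ (fun x => f x * g x) := by
  unfold Phi
  have h := star_U_mul_U hσ
  simp only [mul_assoc]
  rw [← mul_assoc (star hσ.1.eigenvectorUnitary : Matrix ι ι ℂ)
      (hσ.1.eigenvectorUnitary : Matrix ι ι ℂ), h, one_mul,
    ← mul_assoc (diagonal _) (diagonal _), diagonal_mul_diagonal]
  congr 2
  funext x
  push_cast
  ring

lemma Phi_herm (f : ℝ → ℝ) : (Phi hσ f)ᴴ = Phi hσ f := by
  unfold Phi
  rw [conjTranspose_mul, conjTranspose_mul, diagonal_conjTranspose]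
  have h1 : (star hσ.1.eigenvectorUnitary : Matrix ι ι ℂ)ᴴ
      = (hσ.1.eigenvectorUnitary : Matrix ι ι ℂ) := by
    rw [← star_eq_conjTranspose, star_star]
  have h2 : (hσ.1.eigenvectorUnitary : Matrix ι ι ℂ)ᴴ
      = (star hσ.1.eigenvectorUnitary : Matrix ι ι ℂ) := rfl
  rw [h1, h2, mul_assoc]
  congr 2
  funext x
  simp [Pi.star_def, Complex.conj_ofReal]

lemma Phi_posSemidef (f : ℝ → ℝ) (hf : ∀ x : ι, 0 ≤ f (hσ.1.eigenvalues x)) :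
    (Phi hσ f).PosSemidef := by
  unfold Phi
  have hd : (diagonal (fun x => (f (hσ.1.eigenvalues x) : ℂ))).PosSemidef := by
    refine posSemidef_diagonal_iff.mpr fun x => ?_
    rw [Complex.zero_le_real]
    exact hf x
  have := hd.mul_mul_conjTranspose_same (hσ.1.eigenvectorUnitary : Matrix ι ι ℂ)
  rwa [← star_eq_conjTranspose] at this
  

lemma Phi_id : Phi hσ (fun x => x) = σ := by
  have := hσ.1.spectral_theorem
  rw [Unitary.conjStarAlgAut_apply] at this
  unfold Phi
  exact this.symm

lemma Phi_one : Phi hσ (fun _ => 1) = 1 := by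
  unfold Phi
  have : (diagonal (fun _ : ι => ((1 : ℝ) : ℂ))) = 1 := by
    simp
  rw [this, mul_one, U_mul_star_U hσ]

lemma Phi_sub (f g : ℝ → ℝ) :
    Phi hσ f - Phi hσ g = Phi hσ (fun x => f x - g x) := by
  unfold Phi
  rw [← sub_mul, ← mul_sub, diagonal_sub]
  congr 2
  funext x
  push_cast
  ring

lemma Phi_congr {f g : ℝ → ℝ} (h : ∀ x : ι, f (hσ.1.eigenvalues x) = g (hσ.1.eigenvalues x)) :
    Phi hσ f = Phi hσ g := by
  have h2 : (fun x => ((f (hσ.1.eigenvalues x) : ℝ) : ℂ))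
      = fun x => ((g (hσ.1.eigenvalues x) : ℝ) : ℂ) := funext fun x => by rw [h x]
  unfold Phi
  rw [h2]

lemma Phi_sqrt : Phi hσ Real.sqrt = hσ.sqrt := rfl

lemma Phi_zero : Phi hσ (fun _ => 0) = 0 := by
  unfold Phi
  have : (diagonal (fun _ : ι => ((0 : ℝ) : ℂ))) = 0 := by simp
  rw [this, mul_zero, zero_mul]


/-- Uniqueness of the Moore–Penrose pseudoinverse. -/
lemma mp_unique {A X Y : Matrix ι ι ℂ}
    (hX1 : A * X * A = A) (hX2 : X * A * X = X)
    (hX3 : (A * X)ᴴ = A * X) (hX4 : (X * A)ᴴ = X * A)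
    (hY1 : A * Y * A = A) (hY2 : Y * A * Y = Y)
    (hY3 : (A * Y)ᴴ = A * Y) (hY4 : (Y * A)ᴴ = Y * A) :
    X = Y := by
  have e1 : X * Xᴴ * Aᴴ = X := by
    calc X * Xᴴ * Aᴴ = X * (A * X)ᴴ := by rw [conjTranspose_mul, mul_assoc]
    _ = X * (A * X) := by rw [hX3]
    _ = X := by rw [← mul_assoc, hX2]
  have e2 : X = X * A * Y := by
    conv_lhs => rw [← e1, ← hY1]
    calc X * Xᴴ * (A * Y * A)ᴴ = X * Xᴴ * (Aᴴ * Yᴴ * Aᴴ) := by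
          rw [conjTranspose_mul, conjTranspose_mul]; noncomm_ring
    _ = X * Xᴴ * Aᴴ * (Yᴴ * Aᴴ) := by noncomm_ring
    _ = X * (A * Y)ᴴ := by rw [e1, conjTranspose_mul]
    _ = X * (A * Y) := by rw [hY3]
    _ = X * A * Y := by rw [mul_assoc]
  have e3 : Aᴴ * Yᴴ * Y = Y := by
    calc Aᴴ * Yᴴ * Y = (Y * A)ᴴ * Y := by rw [conjTranspose_mul]
    _ = (Y * A) * Y := by rw [hY4]
    _ = Y := hY2
  have e4 : Y = X * A * Y := by
    conv_lhs => rw [← e3, ← hX1]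
    calc (A * X * A)ᴴ * Yᴴ * Y = Aᴴ * Xᴴ * Aᴴ * Yᴴ * Y := by
          rw [conjTranspose_mul, conjTranspose_mul]; noncomm_ring
    _ = Aᴴ * Xᴴ * (Aᴴ * Yᴴ * Y) := by noncomm_ring
    _ = (X * A)ᴴ * Y := by rw [e3, conjTranspose_mul]
    _ = X * A * Y := by rw [hX4]
  rw [e2, ← e4]



/-- If a Hermitian involution commutes with a PSD matrix, it commutes with its square root. -/
lemma sqrt_commute_involution {W : Matrix ι ι ℂ} (hW : Wᴴ = W) (hW2 : W * W = 1)
    (hc : W * σ = σ * W) : W * hσ.sqrt = hσ.sqrt * W := by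
  have hBpsd : (W * hσ.sqrt * W).PosSemidef := by
    have := hσ.posSemidef_sqrt.mul_mul_conjTranspose_same W
    rwa [hW] at this
  have hBsq : (W * hσ.sqrt * W) ^ 2 = σ := by
    rw [pow_two]
    calc W * hσ.sqrt * W * (W * hσ.sqrt * W)
        = W * hσ.sqrt * (W * W) * hσ.sqrt * W := by noncomm_ring
    _ = W * (hσ.sqrt * hσ.sqrt) * W := by rw [hW2]; noncomm_ring
    _ = W * σ * W := by rw [hσ.sqrt_mul_self]
    _ = σ * (W * W) := by rw [← mul_assoc, ← hc, mul_assoc]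
    _ = σ := by rw [hW2, mul_one]
  have hBeq : W * hσ.sqrt * W = hσ.sqrt := hBpsd.eq_sqrt_of_sq_eq hσ hBsq
  calc W * hσ.sqrt = W * (W * hσ.sqrt * W) := by rw [hBeq]
  _ = (W * W) * hσ.sqrt * W := by noncomm_ring
  _ = hσ.sqrt * W := by rw [hW2, one_mul]

/-- pseudo-inverse of the square root of `σ`. -/
noncomputable def Nmat (hσ : σ.PosSemidef) : Matrix ι ι ℂ :=
  Phi hσ fun x => if x = 0 then 0 else (Real.sqrt x)⁻¹

/-- orthogonal projection onto the range of `σ`. -/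
noncomputable def Pmat (hσ : σ.PosSemidef) : Matrix ι ι ℂ :=
  Phi hσ fun x => if x = 0 then 0 else 1

lemma N_herm : (Nmat hσ)ᴴ = Nmat hσ := Phi_herm hσ _

lemma P_herm : (Pmat hσ)ᴴ = Pmat hσ := Phi_herm hσ _

lemma sqrt_mul_N : hσ.sqrt * Nmat hσ = Pmat hσ := by
  rw [← Phi_sqrt, Nmat, Phi_mul, Pmat]
  refine Phi_congr hσ fun x => ?_
  by_cases h : hσ.1.eigenvalues x = 0
  · simp [h]
  · have hpos : 0 < hσ.1.eigenvalues x := lt_of_le_of_ne (hσ.eigenvalues_nonneg x) (Ne.symm h)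
    have hs : Real.sqrt (hσ.1.eigenvalues x) ≠ 0 := (Real.sqrt_ne_zero'.mpr hpos)
    simp [h, mul_inv_cancel₀ hs]

lemma N_mul_sqrt : Nmat hσ * hσ.sqrt = Pmat hσ := by
  rw [← Phi_sqrt, Nmat, Phi_mul, Pmat]
  refine Phi_congr hσ fun x => ?_
  by_cases h : hσ.1.eigenvalues x = 0
  · simp [h]
  · have hpos : 0 < hσ.1.eigenvalues x := lt_of_le_of_ne (hσ.eigenvalues_nonneg x) (Ne.symm h)
    have hs : Real.sqrt (hσ.1.eigenvalues x) ≠ 0 := (Real.sqrt_ne_zero'.mpr hpos)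
    simp [h, inv_mul_cancel₀ hs]

lemma N_mul_sigma_mul_N : Nmat hσ * σ * Nmat hσ = Pmat hσ := by
  have h : Nmat hσ * Phi hσ (fun x => x) * Nmat hσ = Pmat hσ := by
    rw [Nmat, Phi_mul, Phi_mul, Pmat]
    refine Phi_congr hσ fun x => ?_
    by_cases h : hσ.1.eigenvalues x = 0
    · simp [h]
    · have hpos : 0 < hσ.1.eigenvalues x := lt_of_le_of_ne (hσ.eigenvalues_nonneg x) (Ne.symm h)
      have hs : Real.sqrt (hσ.1.eigenvalues x) ≠ 0 := (Real.sqrt_ne_zero'.mpr hpos)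
      have hss : Real.sqrt (hσ.1.eigenvalues x) * Real.sqrt (hσ.1.eigenvalues x)
          = hσ.1.eigenvalues x := Real.mul_self_sqrt (le_of_lt hpos)
      simp only [if_neg h]
      field_simp
      rw [Real.sq_sqrt hpos.le]
  rwa [Phi_id] at h

lemma one_sub_P_eq : (1 : Matrix ι ι ℂ) - Pmat hσ
    = Phi hσ (fun x => 1 - (if x = 0 then 0 else 1)) := by
  rw [← Phi_one hσ, Pmat, Phi_sub]

lemma one_sub_P_posSemidef : ((1 : Matrix ι ι ℂ) - Pmat hσ).PosSemidef := by
  rw [one_sub_P_eq]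
  refine Phi_posSemidef hσ _ fun x => ?_
  by_cases h : hσ.1.eigenvalues x = 0 <;> simp [h]

lemma one_sub_P_herm : ((1 : Matrix ι ι ℂ) - Pmat hσ)ᴴ = 1 - Pmat hσ := (one_sub_P_posSemidef hσ).1

lemma sqrt_mul_one_sub_P_mul_sqrt : hσ.sqrt * ((1 : Matrix ι ι ℂ) - Pmat hσ) * hσ.sqrt = 0 := by
  rw [one_sub_P_eq, ← Phi_sqrt, Phi_mul, Phi_mul, ← Phi_zero hσ]
  refine Phi_congr hσ fun x => ?_
  by_cases h : hσ.1.eigenvalues x = 0 <;> simp [h]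

lemma one_sub_P_conj_sigma : ((1 : Matrix ι ι ℂ) - Pmat hσ) * σ * ((1 : Matrix ι ι ℂ) - Pmat hσ)
    = 0 := by
  have h : ((1 : Matrix ι ι ℂ) - Pmat hσ) * Phi hσ (fun x => x)
      * ((1 : Matrix ι ι ℂ) - Pmat hσ) = 0 := by
    rw [one_sub_P_eq, Phi_mul, Phi_mul, ← Phi_zero hσ]
    refine Phi_congr hσ fun x => ?_
    by_cases h : hσ.1.eigenvalues x = 0 <;> simp [h]
  rwa [Phi_id] at h

lemma sqrt_N_mp_1 : hσ.sqrt * Nmat hσ * hσ.sqrt = hσ.sqrt := by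
  rw [sqrt_mul_N, ← Phi_sqrt, Pmat, Phi_mul]
  refine Phi_congr hσ fun x => ?_
  by_cases h : hσ.1.eigenvalues x = 0 <;> simp [h]

lemma sqrt_N_mp_2 : Nmat hσ * hσ.sqrt * Nmat hσ = Nmat hσ := by
  rw [N_mul_sqrt, Pmat, Nmat, Phi_mul]
  refine Phi_congr hσ fun x => ?_
  by_cases h : hσ.1.eigenvalues x = 0 <;> simp [h]

/-- pure algebra: an involution commuting with `A` commutes with its MP pseudoinverse. -/
lemma commute_involution_of_mp {A N W : Matrix ι ι ℂ} (hW : Wᴴ = W) (hW2 : W * W = 1)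
    (hcA : W * A = A * W) (c1 : A * N * A = A) (c2 : N * A * N = N)
    (c3 : (A * N)ᴴ = A * N) (c4 : (N * A)ᴴ = N * A) : W * N = N * W := by
  have hWAW : W * A * W = A := by rw [hcA, mul_assoc, hW2, mul_one]
  have hWW : ∀ X Y : Matrix ι ι ℂ, (W * X * W) * (W * Y * W) = W * (X * Y) * W := by
    intro X Y
    have h1 : (W * X * W) * (W * Y * W) = W * X * (W * W) * (Y * W) := by
      simp only [mul_assoc]
    rw [h1, hW2, mul_one]
    simp only [mul_assoc]
  have d1 : A * (W * N * W) * A = A := by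
    conv_lhs => rw [← hWAW]
    rw [hWW, hWW, c1, hWAW]
  have d2 : (W * N * W) * A * (W * N * W) = W * N * W := by
    conv_lhs => rw [← hWAW]
    rw [hWW, hWW, c2]
  have h1 : A * (W * N * W) = W * (A * N) * W := by
    conv_lhs => rw [← hWAW]
    rw [hWW]
  have h2 : (W * N * W) * A = W * (N * A) * W := by
    conv_lhs => rw [← hWAW]
    rw [hWW]
  have d3 : (A * (W * N * W))ᴴ = A * (W * N * W) := by
    rw [h1, conjTranspose_mul, conjTranspose_mul, hW, c3]
    simp only [mul_assoc]
  have d4 : ((W * N * W) * A)ᴴ = (W * N * W) * A := by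
    rw [h2, conjTranspose_mul, conjTranspose_mul, hW, c4]
    simp only [mul_assoc]
  have hWNWN : W * N * W = N := mp_unique d1 d2 d3 d4 c1 c2 c3 c4
  calc W * N = W * N * (W * W) := by rw [hW2, mul_one]
  _ = (W * N * W) * W := by simp only [mul_assoc]
  _ = N * W := by rw [hWNWN]

/-- If a Hermitian involution commutes with `σ`, it commutes with `Nmat hσ`. -/
lemma N_commute_involution {W : Matrix ι ι ℂ} (hW : Wᴴ = W) (hW2 : W * W = 1)
    (hc : W * σ = σ * W) : W * Nmat hσ = Nmat hσ * W := by
  have hcA : W * hσ.sqrt = hσ.sqrt * W := sqrt_commute_involution hσ hW hW2 hc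
  exact commute_involution_of_mp hW hW2 hcA (sqrt_N_mp_1 hσ) (sqrt_N_mp_2 hσ)
    (by rw [sqrt_mul_N]; exact P_herm hσ) (by rw [N_mul_sqrt]; exact P_herm hσ)

/-- A positive semidefinite matrix with zero trace is zero. -/
lemma psd_trace_zero {M : Matrix ι ι ℂ} (hM : M.PosSemidef) (ht : M.trace = 0) : M = 0 := by
  have hB : M = (hM.sqrt)ᴴ * hM.sqrt := by
    conv_lhs => rw [← hM.sqrt_mul_self]
    rw [hM.posSemidef_sqrt.1]
  suffices h : hM.sqrt = 0 by
    rw [hB, h]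
    simp
  rw [hB] at ht
  have h1 : ((hM.sqrt)ᴴ * hM.sqrt).trace
      = ((∑ j : ι, ∑ i : ι, Complex.normSq (hM.sqrt i j) : ℝ) : ℂ) := by
    rw [Matrix.trace]
    push_cast
    refine Finset.sum_congr rfl fun j _ => ?_
    rw [Matrix.diag, Matrix.mul_apply]
    refine Finset.sum_congr rfl fun i _ => ?_
    rw [conjTranspose_apply, Complex.star_def, ← Complex.normSq_eq_conj_mul_self]
  rw [h1] at ht
  have h2 : (∑ j : ι, ∑ i : ι, Complex.normSq (hM.sqrt i j) : ℝ) = 0 := by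
    exact_mod_cast ht
  have h3 : ∀ j ∈ Finset.univ, ∀ i ∈ Finset.univ, Complex.normSq (hM.sqrt i j) = 0 := by
    intro j hj
    have hj0 := (Finset.sum_eq_zero_iff_of_nonneg
      (fun j _ => Finset.sum_nonneg fun i _ => Complex.normSq_nonneg _)).mp h2 j hj
    intro i hi
    exact (Finset.sum_eq_zero_iff_of_nonneg fun i _ => Complex.normSq_nonneg _).mp hj0 i hi
  ext i j
  simpa using Complex.normSq_eq_zero.mp (h3 j (Finset.mem_univ j) i (Finset.mem_univ i))

/-- If `Q ρ Q = 0` with `ρ` PSD and `Q` Hermitian then `ρ Q = 0`. -/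
lemma mul_eq_zero_of_conj_eq_zero {ρ Q : Matrix ι ι ℂ} (hρ : ρ.PosSemidef) (hQ : Qᴴ = Q)
    (h : Q * ρ * Q = 0) : ρ * Q = 0 := by
  have hB : (hρ.sqrt * Q)ᴴ * (hρ.sqrt * Q) = 0 := by
    rw [conjTranspose_mul, hρ.posSemidef_sqrt.1, hQ]
    calc Q * hρ.sqrt * (hρ.sqrt * Q) = Q * (hρ.sqrt * hρ.sqrt) * Q := by noncomm_ring
    _ = Q * ρ * Q := by rw [hρ.sqrt_mul_self]
    _ = 0 := h
  have hB0 : hρ.sqrt * Q = 0 := conjTranspose_mul_self_eq_zero.mp hB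
  calc ρ * Q = hρ.sqrt * (hρ.sqrt * Q) := by rw [← mul_assoc, hρ.sqrt_mul_self]
  _ = 0 := by rw [hB0, mul_zero]

section PinchPart

variable {k : ℕ} {n : Fin k → ℕ}

/-- The diagonal projection onto the `i`-th block. -/
def Em (n : Fin k → ℕ) (i : Fin k) : Matrix (Σ i, Fin (n i)) (Σ i, Fin (n i)) ℂ :=
  diagonal fun x => if x.1 = i then 1 else 0

/-- The pinching operation. -/
noncomputable def Pinch (M : Matrix (Σ i, Fin (n i)) (Σ i, Fin (n i)) ℂ) :
    Matrix (Σ i, Fin (n i)) (Σ i, Fin (n i)) ℂ :=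
  ∑ i, Em n i * M * Em n i

lemma Em_herm (i : Fin k) : (Em n i)ᴴ = Em n i := by
  have h : star (fun x : Σ i, Fin (n i) => if x.1 = i then (1:ℂ) else 0)
      = fun x : Σ i, Fin (n i) => if x.1 = i then (1:ℂ) else 0 := by
    funext x
    by_cases h : x.1 = i <;> simp [h]
  rw [Em, diagonal_conjTranspose, h]

lemma Em_mul_Em (i : Fin k) : Em n i * Em n i = Em n i := by
  have h : (fun x : Σ i, Fin (n i) =>
        (if x.1 = i then (1:ℂ) else 0) * (if x.1 = i then (1:ℂ) else 0))
      = fun x : Σ i, Fin (n i) => if x.1 = i then (1:ℂ) else 0 := by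
    funext x
    by_cases h : x.1 = i <;> simp [h]
  rw [Em, diagonal_mul_diagonal, h]

lemma sum_Em : ∑ i, Em n i = 1 := by
  ext x y
  rw [Matrix.sum_apply]
  by_cases h : x = y
  · subst h
    simp only [Em, diagonal_apply_eq, Matrix.one_apply_eq]
    rw [Finset.sum_ite_eq Finset.univ x.1 (fun _ => (1:ℂ))]
    simp
  · simp [Em, diagonal_apply_ne _ h, Matrix.one_apply_ne h]

lemma Pinch_apply (M : Matrix (Σ i, Fin (n i)) (Σ i, Fin (n i)) ℂ)
    (x y : Σ i, Fin (n i)) :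
    Pinch M x y = if x.1 = y.1 then M x y else 0 := by
  rw [Pinch, Matrix.sum_apply]
  simp only [Em, Matrix.diagonal_mul, Matrix.mul_diagonal]
  by_cases h : x.1 = y.1
  · rw [if_pos h]
    calc ∑ i', (if x.1 = i' then (1:ℂ) else 0) * M x y * (if y.1 = i' then 1 else 0)
        = ∑ i', (if x.1 = i' then M x y else 0) := by
          refine Finset.sum_congr rfl fun i' _ => ?_
          by_cases h1 : x.1 = i'
          · simp [h1, h.symm.trans h1]
          · simp [h1]
    _ = M x y := by
          rw [Finset.sum_ite_eq Finset.univ x.1 (fun _ => M x y)]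
          simp
  · rw [if_neg h]
    refine Finset.sum_eq_zero fun i' _ => ?_
    by_cases h1 : x.1 = i'
    · have h2 : ¬ y.1 = i' := fun hy => h (h1.trans hy.symm)
      simp [h2]
    · simp [h1]

/-- block-diagonality expressed through commutation with the block projections. -/
def BD (M : Matrix (Σ i, Fin (n i)) (Σ i, Fin (n i)) ℂ) : Prop :=
  ∀ i, Em n i * M = M * Em n i

lemma offdiag_of_BD {M : Matrix (Σ i, Fin (n i)) (Σ i, Fin (n i)) ℂ} (h : BD M)
    {x y : Σ i, Fin (n i)} (hxy : x.1 ≠ y.1) : M x y = 0 := by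
  have h1 := congrFun (congrFun (h x.1) x) y
  simp only [Em, Matrix.diagonal_mul, Matrix.mul_diagonal] at h1
  rw [if_neg (fun hy : y.1 = x.1 => hxy hy.symm)] at h1
  simpa using h1

lemma BD_of_offdiag {M : Matrix (Σ i, Fin (n i)) (Σ i, Fin (n i)) ℂ}
    (h : ∀ x y : Σ i, Fin (n i), x.1 ≠ y.1 → M x y = 0) : BD M := by
  intro i
  ext x y
  simp only [Em, Matrix.diagonal_mul, Matrix.mul_diagonal]
  by_cases h1 : x.1 = i <;> by_cases h2 : y.1 = i
  · simp [h1, h2]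
  · have : M x y = 0 := h x y (fun hxy => h2 (hxy ▸ h1))
    simp [h1, h2, this]
  · have : M x y = 0 := h x y (fun hxy => h1 (hxy.symm ▸ h2))
    simp [h1, h2, this]
  · simp [h1, h2]

lemma BD_Pinch (M : Matrix (Σ i, Fin (n i)) (Σ i, Fin (n i)) ℂ) : BD (Pinch M) :=
  BD_of_offdiag fun x y hxy => by rw [Pinch_apply, if_neg hxy]

lemma Pinch_eq_self {M : Matrix (Σ i, Fin (n i)) (Σ i, Fin (n i)) ℂ} (h : BD M) :
    Pinch M = M := by
  ext x y
  rw [Pinch_apply]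
  by_cases hxy : x.1 = y.1
  · rw [if_pos hxy]
  · rw [if_neg hxy, offdiag_of_BD h hxy]

lemma Pinch_posSemidef {M : Matrix (Σ i, Fin (n i)) (Σ i, Fin (n i)) ℂ}
    (hM : M.PosSemidef) : (Pinch M).PosSemidef := by
  rw [Pinch]
  refine Finset.sum_induction _ _ (fun a b ha hb => ha.add hb) Matrix.PosSemidef.zero
    fun i _ => ?_
  have := hM.mul_mul_conjTranspose_same (Em n i)
  rwa [Em_herm] at this

lemma trace_Pinch (M : Matrix (Σ i, Fin (n i)) (Σ i, Fin (n i)) ℂ) :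
    (Pinch M).trace = M.trace := by
  rw [Pinch, Matrix.trace_sum]
  have h1 : ∀ i, (Em n i * M * Em n i).trace = (Em n i * M).trace := by
    intro i
    rw [Matrix.trace_mul_cycle, Em_mul_Em]
  rw [Finset.sum_congr rfl fun i _ => h1 i]
  rw [← Matrix.trace_sum, ← Finset.sum_mul, sum_Em, one_mul]

lemma Pinch_conj {T M : Matrix (Σ i, Fin (n i)) (Σ i, Fin (n i)) ℂ} (hT : BD T) :
    Pinch (T * M * Tᴴ) = T * Pinch M * Tᴴ := by
  have hT' : ∀ i, Tᴴ * Em n i = Em n i * Tᴴ := by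
    intro i
    have h0 := congrArg conjTranspose (hT i)
    rw [conjTranspose_mul, conjTranspose_mul, Em_herm] at h0
    exact h0
  rw [Pinch, Pinch, Finset.mul_sum, Finset.sum_mul]
  refine Finset.sum_congr rfl fun i _ => ?_
  have h1 : Em n i * (T * M * Tᴴ) * Em n i = (Em n i * T) * M * (Tᴴ * Em n i) := by
    simp only [mul_assoc]
  rw [h1, hT i, hT' i]
  simp only [mul_assoc]

lemma BD_mul {A B : Matrix (Σ i, Fin (n i)) (Σ i, Fin (n i)) ℂ} (hA : BD A) (hB : BD B) :
    BD (A * B) := by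
  intro i
  rw [← mul_assoc, hA i, mul_assoc, hB i, mul_assoc]

lemma BD_one : BD (1 : Matrix (Σ i, Fin (n i)) (Σ i, Fin (n i)) ℂ) := by
  intro i; rw [one_mul, mul_one]

lemma BD_sub {A B : Matrix (Σ i, Fin (n i)) (Σ i, Fin (n i)) ℂ} (hA : BD A) (hB : BD B) :
    BD (A - B) := by
  intro i; rw [mul_sub, sub_mul, hA i, hB i]

/-- An involution from a block projection. -/
lemma BD_involution_aux (i : Fin k) :
    ((1 : Matrix (Σ i, Fin (n i)) (Σ i, Fin (n i)) ℂ) - 2 * Em n i)ᴴ = 1 - 2 * Em n i ∧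
    ((1 : Matrix (Σ i, Fin (n i)) (Σ i, Fin (n i)) ℂ) - 2 * Em n i) *
      (1 - 2 * Em n i) = 1 := by
  constructor
  · have h2H : ((2 : Matrix (Σ i, Fin (n i)) (Σ i, Fin (n i)) ℂ))ᴴ = 2 := by
      have : ((2 : Matrix (Σ i, Fin (n i)) (Σ i, Fin (n i)) ℂ)) = 1 + 1 := by norm_num
      rw [this, conjTranspose_add, conjTranspose_one]
    have hc : Em n i * (2 : Matrix (Σ i, Fin (n i)) (Σ i, Fin (n i)) ℂ) = 2 * Em n i := by
      noncomm_ring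
    rw [conjTranspose_sub, conjTranspose_one, conjTranspose_mul, Em_herm, h2H, hc]
  · have h1 : ((1 : Matrix (Σ i, Fin (n i)) (Σ i, Fin (n i)) ℂ) - 2 * Em n i) *
        (1 - 2 * Em n i) = 1 - 4 * Em n i + 4 * (Em n i * Em n i) := by
      noncomm_ring
    rw [h1, Em_mul_Em]
    noncomm_ring

lemma BD_commute_W {T : Matrix (Σ i, Fin (n i)) (Σ i, Fin (n i)) ℂ} (i : Fin k)
    (h : ((1 : Matrix (Σ i, Fin (n i)) (Σ i, Fin (n i)) ℂ) - 2 * Em n i) * T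
      = T * (1 - 2 * Em n i)) :
    Em n i * T = T * Em n i := by
  have h1 : T - 2 * (Em n i * T) = T - 2 * (T * Em n i) := by
    calc T - 2 * (Em n i * T) = (1 - 2 * Em n i) * T := by noncomm_ring
    _ = T * (1 - 2 * Em n i) := h
    _ = T - 2 * (T * Em n i) := by noncomm_ring
  have h2 : (2 : Matrix (Σ i, Fin (n i)) (Σ i, Fin (n i)) ℂ) * (Em n i * T)
      = 2 * (T * Em n i) := by
    exact sub_right_injective h1
  have h3 : Em n i * T + Em n i * T = T * Em n i + T * Em n i := by
    rw [← two_mul, ← two_mul, h2]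
  have h4 : (2 : ℂ) • (Em n i * T) = (2 : ℂ) • (T * Em n i) := by
    rw [two_smul, two_smul, h3]
  exact smul_right_injective _ (two_ne_zero) h4

lemma W_commute_BD {T : Matrix (Σ i, Fin (n i)) (Σ i, Fin (n i)) ℂ} (i : Fin k)
    (h : Em n i * T = T * Em n i) :
    ((1 : Matrix (Σ i, Fin (n i)) (Σ i, Fin (n i)) ℂ) - 2 * Em n i) * T
      = T * (1 - 2 * Em n i) := by
  calc (1 - 2 * Em n i) * T = T - 2 * (Em n i * T) := by noncomm_ring
  _ = T - 2 * (T * Em n i) := by rw [h]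
  _ = T * (1 - 2 * Em n i) := by noncomm_ring

lemma BD_sqrt {A : Matrix (Σ i, Fin (n i)) (Σ i, Fin (n i)) ℂ} (hA : A.PosSemidef)
    (h : BD A) : BD hA.sqrt := by
  intro i
  obtain ⟨hW, hW2⟩ := BD_involution_aux (n := n) i
  exact BD_commute_W i (sqrt_commute_involution hA hW hW2 (W_commute_BD i (h i)))

lemma BD_Nmat {A : Matrix (Σ i, Fin (n i)) (Σ i, Fin (n i)) ℂ} (hA : A.PosSemidef)
    (h : BD A) : BD (Nmat hA) := by
  intro i
  obtain ⟨hW, hW2⟩ := BD_involution_aux (n := n) i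
  exact BD_commute_W i (N_commute_involution hA hW hW2 (W_commute_BD i (h i)))

lemma Pinch_add (X Y : Matrix (Σ i, Fin (n i)) (Σ i, Fin (n i)) ℂ) :
    Pinch (X + Y) = Pinch X + Pinch Y := by
  rw [Pinch, Pinch, Pinch, ← Finset.sum_add_distrib]
  refine Finset.sum_congr rfl fun i _ => ?_
  rw [mul_add, add_mul]

/-- The key local statement: near `Pinch ρ0` every block-diagonal state has a preimage
close to `ρ0`. -/
lemma key {U : Set (Matrix (Σ i, Fin (n i)) (Σ i, Fin (n i)) ℂ)} (hU : IsOpen U)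
    {ρ0 : Matrix (Σ i, Fin (n i)) (Σ i, Fin (n i)) ℂ}
    (hρ : ρ0.PosSemidef) (hρU : ρ0 ∈ U) :
    ∃ V : Set (Matrix (Σ i, Fin (n i)) (Σ i, Fin (n i)) ℂ), IsOpen V ∧ Pinch ρ0 ∈ V ∧
      ∀ σ' ∈ V, σ'.PosSemidef → BD σ' →
        ∃ ρ', ρ' ∈ U ∧ ρ'.PosSemidef ∧ ρ'.trace = σ'.trace ∧ Pinch ρ' = σ' := by
  set σ : Matrix (Σ i, Fin (n i)) (Σ i, Fin (n i)) ℂ := Pinch ρ0 with hσdef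
  have hσ : σ.PosSemidef := Pinch_posSemidef hρ
  have hBDσ : BD σ := BD_Pinch ρ0
  set K : Matrix (Σ i, Fin (n i)) (Σ i, Fin (n i)) ℂ :=
    Nmat hσ * ρ0 * Nmat hσ + (1 - Pmat hσ) with hKdef
  set F : Matrix (Σ i, Fin (n i)) (Σ i, Fin (n i)) ℂ →
      Matrix (Σ i, Fin (n i)) (Σ i, Fin (n i)) ℂ :=
    fun X => sqrtD X * K * sqrtD X with hFdef
  -- basic block-diagonality facts
  have hBD_A : BD hσ.sqrt := BD_sqrt hσ hBDσ
  have hBD_N : BD (Nmat hσ) := BD_Nmat hσ hBDσ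
  have hBD_P : BD (Pmat hσ) := by
    have := BD_mul hBD_A hBD_N
    rwa [sqrt_mul_N] at this
  have hBD_Q : BD ((1 : Matrix (Σ i, Fin (n i)) (Σ i, Fin (n i)) ℂ) - Pmat hσ) :=
    BD_sub BD_one hBD_P
  have hQherm := one_sub_P_herm hσ
  -- the support projection fixes ρ0
  have hQρQ0 : ((1 : Matrix (Σ i, Fin (n i)) (Σ i, Fin (n i)) ℂ) - Pmat hσ) * ρ0 *
      ((1 : Matrix (Σ i, Fin (n i)) (Σ i, Fin (n i)) ℂ) - Pmat hσ) = 0 := by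
    have hpsd : (((1 : Matrix (Σ i, Fin (n i)) (Σ i, Fin (n i)) ℂ) - Pmat hσ) * ρ0 *
        ((1 : Matrix (Σ i, Fin (n i)) (Σ i, Fin (n i)) ℂ) - Pmat hσ)).PosSemidef := by
      have := hρ.mul_mul_conjTranspose_same
        ((1 : Matrix (Σ i, Fin (n i)) (Σ i, Fin (n i)) ℂ) - Pmat hσ)
      rwa [hQherm] at this
    refine psd_trace_zero hpsd ?_
    have h1 : Pinch (((1 : Matrix (Σ i, Fin (n i)) (Σ i, Fin (n i)) ℂ) - Pmat hσ) * ρ0 *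
        ((1 : Matrix (Σ i, Fin (n i)) (Σ i, Fin (n i)) ℂ) - Pmat hσ)) = 0 := by
      have h2 := Pinch_conj (M := ρ0) hBD_Q
      rw [hQherm] at h2
      rw [h2, ← hσdef]
      exact one_sub_P_conj_sigma hσ
    rw [← trace_Pinch, h1, Matrix.trace_zero]
  have hρQ : ρ0 * ((1 : Matrix (Σ i, Fin (n i)) (Σ i, Fin (n i)) ℂ) - Pmat hσ) = 0 :=
    mul_eq_zero_of_conj_eq_zero hρ hQherm hQρQ0
  have hρP : ρ0 * Pmat hσ = ρ0 := by
    rw [mul_sub, mul_one] at hρQ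
    exact (sub_eq_zero.mp hρQ).symm
  have hPρ : Pmat hσ * ρ0 = ρ0 := by
    have := congrArg conjTranspose hρP
    rwa [conjTranspose_mul, P_herm, hρ.1.eq] at this
  -- F σ = ρ0
  have hFσ : F σ = ρ0 := by
    rw [hFdef]
    simp only []
    rw [sqrtD_eq hσ, hKdef, mul_add, add_mul, sqrt_mul_one_sub_P_mul_sqrt, add_zero]
    calc hσ.sqrt * (Nmat hσ * ρ0 * Nmat hσ) * hσ.sqrt
        = (hσ.sqrt * Nmat hσ) * ρ0 * (Nmat hσ * hσ.sqrt) := by simp only [mul_assoc]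
    _ = Pmat hσ * ρ0 * Pmat hσ := by rw [sqrt_mul_N, N_mul_sqrt]
    _ = ρ0 := by rw [hPρ, hρP]
  -- continuity
  have hcont : ContinuousWithinAt F {A : Matrix (Σ i, Fin (n i)) (Σ i, Fin (n i)) ℂ |
      A.PosSemidef} σ := by
    have h1 := continuousWithinAt_sqrtD hσ
    exact (h1.mul continuousWithinAt_const).mul h1
  have hnb : F ⁻¹' U ∈ nhdsWithin σ {A : Matrix (Σ i, Fin (n i)) (Σ i, Fin (n i)) ℂ |
      A.PosSemidef} := hcont (hU.mem_nhds (by rw [hFσ]; exact hρU))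
  rw [mem_nhdsWithin] at hnb
  obtain ⟨V, hVo, hVσ, hVsub⟩ := hnb
  refine ⟨V, hVo, hVσ, ?_⟩
  intro σ' hσ'V hσ'psd hBDσ'
  have hs'h : (sqrtD σ')ᴴ = sqrtD σ' := (posSemidef_sqrtD hσ'psd).1
  have hBDs' : BD (sqrtD σ') := by
    rw [sqrtD_eq hσ'psd]
    exact BD_sqrt hσ'psd hBDσ'
  have hKpsd : K.PosSemidef := by
    rw [hKdef]
    refine Matrix.PosSemidef.add ?_ (one_sub_P_posSemidef hσ)
    have := hρ.mul_mul_conjTranspose_same (Nmat hσ)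
    rwa [N_herm] at this
  have hFpsd : (F σ').PosSemidef := by
    rw [hFdef]
    simp only []
    have := hKpsd.mul_mul_conjTranspose_same (sqrtD σ')
    rwa [hs'h] at this
  have hPinchF : Pinch (F σ') = σ' := by
    rw [hFdef]
    simp only []
    rw [hKdef, mul_add, add_mul, Pinch_add]
    have hterm2 : Pinch (sqrtD σ' * ((1 : Matrix (Σ i, Fin (n i)) (Σ i, Fin (n i)) ℂ)
        - Pmat hσ) * sqrtD σ') = sqrtD σ' * ((1 : Matrix (Σ i, Fin (n i)) (Σ i, Fin (n i)) ℂ)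
        - Pmat hσ) * sqrtD σ' :=
      Pinch_eq_self (BD_mul (BD_mul hBDs' hBD_Q) hBDs')
    have hterm1 : Pinch (sqrtD σ' * (Nmat hσ * ρ0 * Nmat hσ) * sqrtD σ')
        = sqrtD σ' * Pmat hσ * sqrtD σ' := by
      have hTH : (sqrtD σ' * Nmat hσ)ᴴ = Nmat hσ * sqrtD σ' := by
        rw [conjTranspose_mul, N_herm, hs'h]
      have e1 : sqrtD σ' * (Nmat hσ * ρ0 * Nmat hσ) * sqrtD σ'
          = (sqrtD σ' * Nmat hσ) * ρ0 * (sqrtD σ' * Nmat hσ)ᴴ := by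
        rw [hTH]
        simp only [mul_assoc]
      rw [e1, Pinch_conj (BD_mul hBDs' hBD_N), hTH, ← hσdef]
      calc (sqrtD σ' * Nmat hσ) * σ * (Nmat hσ * sqrtD σ')
          = sqrtD σ' * (Nmat hσ * σ * Nmat hσ) * sqrtD σ' := by simp only [mul_assoc]
      _ = sqrtD σ' * Pmat hσ * sqrtD σ' := by rw [N_mul_sigma_mul_N]
    rw [hterm1, hterm2]
    have : sqrtD σ' * Pmat hσ * sqrtD σ'
        + sqrtD σ' * ((1 : Matrix (Σ i, Fin (n i)) (Σ i, Fin (n i)) ℂ) - Pmat hσ) * sqrtD σ'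
        = sqrtD σ' * (Pmat hσ + ((1 : Matrix (Σ i, Fin (n i)) (Σ i, Fin (n i)) ℂ)
          - Pmat hσ)) * sqrtD σ' := by
      rw [mul_add, add_mul]
    rw [this]
    have h1 : Pmat hσ + ((1 : Matrix (Σ i, Fin (n i)) (Σ i, Fin (n i)) ℂ) - Pmat hσ) = 1 := by
      abel
    rw [h1, mul_one, sqrtD_mul_self hσ'psd]
  refine ⟨F σ', hVsub ⟨hσ'V, hσ'psd⟩, hFpsd, ?_, hPinchF⟩
  rw [← trace_Pinch (F σ'), hPinchF]


end PinchPart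

end PinchOpenAux

/-- For any partition `n = n₁ + … + n_k`, the block-diagonal pinching map
`D(M_n) → D(M_{n₁} ⊕ … ⊕ M_{n_k})` is open. -/
theorem pinching_blocks_open (k : ℕ) (n : Fin k → ℕ)
    (D : Set (Matrix (Σ i, Fin (n i)) (Σ i, Fin (n i)) ℂ))
    (hD : D = {ρ | ρ.PosSemidef ∧ ρ.trace = 1})
    (Db : Set (Matrix (Σ i, Fin (n i)) (Σ i, Fin (n i)) ℂ))
    (hDb : Db = {ρ | ρ ∈ D ∧ ∀ (i j : Fin k) (a : Fin (n i)) (b : Fin (n j)),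
        i ≠ j → ρ ⟨i, a⟩ ⟨j, b⟩ = 0})
    (pinch : Matrix (Σ i, Fin (n i)) (Σ i, Fin (n i)) ℂ →
      Matrix (Σ i, Fin (n i)) (Σ i, Fin (n i)) ℂ)
    (hpinch : pinch = fun M =>
      Matrix.blockDiagonal' (fun i => Matrix.of fun a b => M ⟨i, a⟩ ⟨i, b⟩)) :
    RelOpenMap pinch D Db := by
  classical
  have hpinch' : pinch = PinchOpenAux.Pinch (n := n) := by
    rw [hpinch]
    funext M
    ext x y
    rcases x with ⟨i, a⟩
    rcases y with ⟨j, b⟩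
    rw [PinchOpenAux.Pinch_apply]
    by_cases h : i = j
    · subst h
      rw [Matrix.blockDiagonal'_apply_eq]
      rw [if_pos rfl]
      rfl
    · rw [Matrix.blockDiagonal'_apply_ne _ _ _ h, if_neg h]
  intro U hU
  -- translate membership of Db
  have hDbChar : ∀ M, M ∈ Db ↔ (M.PosSemidef ∧ M.trace = 1 ∧ PinchOpenAux.BD M) := by
    intro M
    rw [hDb, hD]
    constructor
    · rintro ⟨⟨h1, h2⟩, h3⟩
      refine ⟨h1, h2, PinchOpenAux.BD_of_offdiag ?_⟩
      rintro ⟨i, a⟩ ⟨j, b⟩ hij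
      exact h3 i j a b hij
    · rintro ⟨h1, h2, h3⟩
      refine ⟨⟨h1, h2⟩, fun i j a b hij => ?_⟩
      exact PinchOpenAux.offdiag_of_BD h3 hij
  have hImage : ∀ τ ∈ pinch '' (U ∩ D), τ ∈ Db := by
    rintro τ ⟨ρ0, ⟨hρ0U, hρ0D⟩, rfl⟩
    rw [hD] at hρ0D
    rw [hDbChar, hpinch']
    exact ⟨PinchOpenAux.Pinch_posSemidef hρ0D.1,
      by rw [PinchOpenAux.trace_Pinch]; exact hρ0D.2,
      PinchOpenAux.BD_Pinch ρ0⟩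
  have hloc : ∀ τ ∈ pinch '' (U ∩ D), ∃ V : Set (Matrix (Σ i, Fin (n i)) (Σ i, Fin (n i)) ℂ),
      IsOpen V ∧ τ ∈ V ∧ ∀ σ' ∈ V, σ' ∈ Db → σ' ∈ pinch '' (U ∩ D) := by
    rintro τ ⟨ρ0, ⟨hρ0U, hρ0D⟩, rfl⟩
    rw [hD] at hρ0D
    obtain ⟨V, hVo, hVmem, hVprop⟩ := PinchOpenAux.key hU hρ0D.1 hρ0U
    rw [hpinch']
    refine ⟨V, hVo, hVmem, ?_⟩
    intro σ' hσ'V hσ'Db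
    rw [hDbChar] at hσ'Db
    obtain ⟨ρ', hρ'U, hρ'psd, hρ'tr, hρ'pinch⟩ := hVprop σ' hσ'V hσ'Db.1 hσ'Db.2.2
    refine ⟨ρ', ⟨hρ'U, ?_⟩, hρ'pinch⟩
    rw [hD]
    exact ⟨hρ'psd, by rw [hρ'tr, hσ'Db.2.1]⟩
  choose! V hV1 hV2 hV3 using hloc
  refine ⟨⋃ τ ∈ pinch '' (U ∩ D), V τ, isOpen_biUnion hV1, ?_⟩
  apply Set.Subset.antisymm
  · intro τ hτ
    exact ⟨Set.mem_biUnion hτ (hV2 τ hτ), hImage τ hτ⟩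
  · rintro τ ⟨hτV, hτDb⟩
    rw [Set.mem_iUnion₂] at hτV
    obtain ⟨τ0, hτ0, hmem⟩ := hτV
    exact hV3 τ0 hτ0 τ hmem hτDb
end

section
/- If A is a *-subalgebra of M_n containing the identity, then the orthogonal projection D(M_n) → D(A) with respect to the Frobenius inner product is an open map. -/
open Matrix ComplexOrder

open Finset

namespace ProjOpen

variable {n : ℕ}

/-- Apply a real function to a Hermitian matrix via the spectral theorem. -/
noncomputable def matFun {a : Matrix (Fin n) (Fin n) ℂ} (ha : a.IsHermitian) (f : ℝ → ℝ) :
    Matrix (Fin n) (Fin n) ℂ :=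
  (ha.eigenvectorUnitary : Matrix (Fin n) (Fin n) ℂ) *
    diagonal (fun i => (f (ha.eigenvalues i) : ℂ)) *
    star (ha.eigenvectorUnitary : Matrix (Fin n) (Fin n) ℂ)

variable {a : Matrix (Fin n) (Fin n) ℂ} (ha : a.IsHermitian) (f g : ℝ → ℝ)

lemma star_mul_selfU :
    star (ha.eigenvectorUnitary : Matrix (Fin n) (Fin n) ℂ) *
      (ha.eigenvectorUnitary : Matrix (Fin n) (Fin n) ℂ) = 1 :=
  Unitary.coe_star_mul_self _

lemma mul_star_selfU :
    (ha.eigenvectorUnitary : Matrix (Fin n) (Fin n) ℂ) *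
      star (ha.eigenvectorUnitary : Matrix (Fin n) (Fin n) ℂ) = 1 :=
  Unitary.coe_mul_star_self _

lemma matFun_mul : matFun ha f * matFun ha g = matFun ha (f * g) := by
  unfold matFun
  set U := (ha.eigenvectorUnitary : Matrix (Fin n) (Fin n) ℂ) with hU
  set D1 := diagonal (fun i => (f (ha.eigenvalues i) : ℂ)) with hD1
  set D2 := diagonal (fun i => (g (ha.eigenvalues i) : ℂ)) with hD2
  have h1 : U * D1 * star U * (U * D2 * star U) = U * (D1 * (star U * U) * D2) * star U := by
    noncomm_ring
  rw [h1, star_mul_selfU, mul_one, hD1, hD2, diagonal_mul_diagonal]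
  have h2 : (fun i => (f (ha.eigenvalues i) : ℂ) * (g (ha.eigenvalues i) : ℂ)) =
      fun i => (((f * g) (ha.eigenvalues i) : ℝ) : ℂ) := by
    funext i; rw [Pi.mul_apply, Complex.ofReal_mul]
  rw [h2]

lemma matFun_congr (h : ∀ i, f (ha.eigenvalues i) = g (ha.eigenvalues i)) :
    matFun ha f = matFun ha g := by
  unfold matFun
  rw [show (fun i => (f (ha.eigenvalues i) : ℂ)) = fun i => (g (ha.eigenvalues i) : ℂ) from
    funext fun i => by rw [h i]]

lemma matFun_one : matFun ha 1 = 1 := by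
  unfold matFun
  simp only [Pi.one_apply, Complex.ofReal_one, diagonal_one, mul_one]
  exact mul_star_selfU ha

lemma matFun_zero : matFun ha 0 = 0 := by
  unfold matFun
  simp

lemma matFun_id : matFun ha (fun x => x) = a := by
  have := ha.spectral_theorem
  rw [Unitary.conjStarAlgAut_apply] at this
  unfold matFun
  exact this.symm

lemma matFun_star : star (matFun ha f) = matFun ha f := by
  unfold matFun
  rw [Matrix.star_mul, Matrix.star_mul, star_star]
  have hd : star (diagonal (fun i => (f (ha.eigenvalues i) : ℂ))) =
      diagonal (fun i => (f (ha.eigenvalues i) : ℂ)) := by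
    rw [star_eq_conjTranspose, diagonal_conjTranspose]
    rw [show star (fun i => (f (ha.eigenvalues i) : ℂ)) = fun i => (f (ha.eigenvalues i) : ℂ)
      from funext fun i => by simp [Pi.star_apply, Complex.conj_ofReal]]
  rw [hd, mul_assoc]

lemma matFun_isHermitian : (matFun ha f).IsHermitian := by
  rw [Matrix.IsHermitian, ← star_eq_conjTranspose, matFun_star]

lemma matFun_posSemidef (h : ∀ i, 0 ≤ f (ha.eigenvalues i)) : (matFun ha f).PosSemidef := by
  unfold matFun
  have hd : (diagonal (fun i => (f (ha.eigenvalues i) : ℂ))).PosSemidef := by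
    refine posSemidef_diagonal_iff.mpr fun i => ?_
    exact_mod_cast Complex.zero_le_real.mpr (h i)
  have := hd.mul_mul_conjTranspose_same (ha.eigenvectorUnitary : Matrix (Fin n) (Fin n) ℂ)
  rwa [← star_eq_conjTranspose] at this

lemma matFun_trace : (matFun ha f).trace = ∑ i, (f (ha.eigenvalues i) : ℂ) := by
  unfold matFun
  rw [trace_mul_cycle, star_mul_selfU, one_mul, trace_diagonal]

lemma matFun_pow (k : ℕ) : a ^ k = matFun ha (fun x => x ^ k) := by
  induction k with
  | zero => simpa using (matFun_one ha).symm.trans (matFun_congr ha _ _ (by simp))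
  | succ k ih =>
      have h1 : matFun ha (fun x => x ^ k) * a =
          matFun ha (fun x => x ^ k) * matFun ha (fun x => x) := by rw [matFun_id]
      rw [pow_succ, ih, h1, matFun_mul]
      exact matFun_congr ha _ _ (fun i => (pow_succ _ _).symm)

lemma matFun_add : matFun ha (fun x => f x + g x) = matFun ha f + matFun ha g := by
  unfold matFun
  rw [show (fun i => ((f (ha.eigenvalues i) + g (ha.eigenvalues i) : ℝ) : ℂ)) =
      fun i => (f (ha.eigenvalues i) : ℂ) + (g (ha.eigenvalues i) : ℂ) from
    funext fun i => Complex.ofReal_add _ _]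
  rw [← diagonal_add, mul_add, add_mul]

lemma matFun_sum {ι : Type*} (s : Finset ι) (F : ι → ℝ → ℝ) :
    matFun ha (fun x => ∑ i ∈ s, F i x) = ∑ i ∈ s, matFun ha (F i) := by
  classical
  induction s using Finset.induction with
  | empty => simp only [Finset.sum_empty]; exact matFun_zero ha
  | @insert b s hx ih =>
      rw [Finset.sum_insert hx, ← ih,
        matFun_congr ha _ (fun x => F b x + ∑ i ∈ s, F i x)
          (fun i => by rw [Finset.sum_insert hx]),
        matFun_add]

lemma matFun_smul (c : ℝ) : matFun ha (fun x => c * f x) = (c : ℂ) • matFun ha f := by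
  unfold matFun
  rw [show (fun i => ((c * f (ha.eigenvalues i) : ℝ) : ℂ)) =
      (c : ℂ) • fun i => (f (ha.eigenvalues i) : ℂ) from
    funext fun i => by rw [Pi.smul_apply, smul_eq_mul, Complex.ofReal_mul]]
  rw [diagonal_smul, mul_smul_comm, smul_mul_assoc]

lemma matFun_sub : matFun ha f - matFun ha g = matFun ha (f - g) := by
  unfold matFun
  rw [show (fun i => (((f - g) (ha.eigenvalues i) : ℝ) : ℂ)) =
      fun i => (f (ha.eigenvalues i) : ℂ) - (g (ha.eigenvalues i) : ℂ) from
    funext fun i => by rw [Pi.sub_apply, Complex.ofReal_sub]]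
  rw [← diagonal_sub, mul_sub, sub_mul]

lemma matFun_poly (p : Polynomial ℝ) :
    matFun ha (fun x => p.eval x) =
      ∑ k ∈ range (p.natDegree + 1), ((p.coeff k : ℝ) : ℂ) • a ^ k := by
  have h1 : matFun ha (fun x => p.eval x) =
      matFun ha (fun x => ∑ k ∈ range (p.natDegree + 1), p.coeff k * x ^ k) :=
    matFun_congr ha _ _ (fun i => by rw [Polynomial.eval_eq_sum_range])
  rw [h1, matFun_sum]
  refine Finset.sum_congr rfl fun k _ => ?_
  rw [matFun_smul, matFun_pow ha k]

lemma matFun_mem (A : StarSubalgebra ℂ (Matrix (Fin n) (Fin n) ℂ)) (haA : a ∈ A) :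
    matFun ha f ∈ A := by
  classical
  set s : Finset ℝ := Finset.image ha.eigenvalues Finset.univ with hs
  set p := Lagrange.interpolate s id f with hpdef
  have hp : ∀ i, p.eval (ha.eigenvalues i) = f (ha.eigenvalues i) := by
    intro i
    have := Lagrange.eval_interpolate_at_node f (Set.injOn_id _)
      (Finset.mem_image_of_mem ha.eigenvalues (Finset.mem_univ i))
    exact this
  rw [matFun_congr ha f (fun x => p.eval x) (fun i => (hp i).symm), matFun_poly]
  exact sum_mem fun k _ => SMulMemClass.smul_mem _ (pow_mem haA k)

lemma entry_abs_le_one (i j : Fin n) :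
    ‖(ha.eigenvectorUnitary : Matrix (Fin n) (Fin n) ℂ) i j‖ ≤ 1 := by
  set U := (ha.eigenvectorUnitary : Matrix (Fin n) (Fin n) ℂ) with hUdef
  have h1 : (star U * U) j j = 1 := by rw [star_mul_selfU ha]; simp
  have h2 : (star U * U) j j = ((∑ k, Complex.normSq (U k j) : ℝ) : ℂ) := by
    rw [Matrix.mul_apply]
    push_cast
    refine Finset.sum_congr rfl fun k _ => ?_
    rw [Matrix.star_apply]
    rw [show star (U k j) = (starRingEnd ℂ) (U k j) from rfl, ← Complex.normSq_eq_conj_mul_self]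
  have h3 : (∑ k, Complex.normSq (U k j) : ℝ) = 1 := by
    have := h1.symm.trans h2
    exact_mod_cast this.symm
  have h4 : Complex.normSq (U i j) ≤ 1 := by
    rw [← h3]
    exact Finset.single_le_sum (f := fun k => Complex.normSq (U k j))
      (fun k _ => Complex.normSq_nonneg _) (Finset.mem_univ i)
  have h5 := Complex.sq_norm (U i j)
  nlinarith [norm_nonneg (U i j)]

lemma matFun_entry_abs_le {c : ℝ} (hb : ∀ i, |f (ha.eigenvalues i)| ≤ c) (i j : Fin n) :
    ‖(matFun ha f) i j‖ ≤ n * c := by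
  set U := (ha.eigenvectorUnitary : Matrix (Fin n) (Fin n) ℂ) with hUdef
  have hentry : (matFun ha f) i j =
      ∑ k, U i k * (f (ha.eigenvalues k) : ℂ) * (starRingEnd ℂ) (U j k) := by
    unfold matFun
    rw [Matrix.mul_apply]
    refine Finset.sum_congr rfl fun k _ => ?_
    rw [Matrix.mul_diagonal, Matrix.star_apply]
    rfl
  rw [hentry]
  calc ‖∑ k, U i k * (f (ha.eigenvalues k) : ℂ) * (starRingEnd ℂ) (U j k)‖
      ≤ ∑ k, ‖U i k * (f (ha.eigenvalues k) : ℂ) * (starRingEnd ℂ) (U j k)‖ := by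
        exact norm_sum_le _ _
    _ ≤ ∑ _k : Fin n, c := by
        refine Finset.sum_le_sum fun k _ => ?_
        rw [norm_mul, norm_mul, Complex.norm_real, Real.norm_eq_abs, Complex.norm_conj]
        have h1 := entry_abs_le_one ha i k
        have h2 := entry_abs_le_one ha j k
        have h3 := hb k
        have h0 := norm_nonneg (U i k)
        have h0' := norm_nonneg (U j k)
        have hc : 0 ≤ c := le_trans (abs_nonneg _) h3
        calc ‖U i k‖ * |f (ha.eigenvalues k)| * ‖U j k‖
            ≤ 1 * c * 1 := by
              apply mul_le_mul (mul_le_mul h1 h3 (abs_nonneg _) zero_le_one) h2 h0' (by positivity)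
          _ = c := by ring
    _ = n * c := by rw [Finset.sum_const, Finset.card_univ, Fintype.card_fin, nsmul_eq_mul]


lemma eq_zero_of_trace_conjTranspose_mul_self {X : Matrix (Fin n) (Fin n) ℂ}
    (h : (Xᴴ * X).trace = 0) : X = 0 := by
  have key : (Xᴴ * X).trace = ((∑ j, ∑ k, Complex.normSq (X k j) : ℝ) : ℂ) := by
    rw [Matrix.trace]
    push_cast
    refine Finset.sum_congr rfl fun j _ => ?_
    rw [Matrix.diag_apply, Matrix.mul_apply]
    refine Finset.sum_congr rfl fun k _ => ?_
    rw [Matrix.conjTranspose_apply]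
    rw [show star (X k j) = (starRingEnd ℂ) (X k j) from rfl, ← Complex.normSq_eq_conj_mul_self]
  rw [key] at h
  have h2 : (∑ j, ∑ k, Complex.normSq (X k j) : ℝ) = 0 := by exact_mod_cast h
  have h3 : ∀ j ∈ Finset.univ, ∀ k ∈ Finset.univ, Complex.normSq (X k j) = 0 := by
    intro j hj
    have hrow := (Finset.sum_eq_zero_iff_of_nonneg
      (fun j _ => Finset.sum_nonneg fun k _ => Complex.normSq_nonneg _)).mp h2 j hj
    exact fun k hk => (Finset.sum_eq_zero_iff_of_nonneg
      (fun k _ => Complex.normSq_nonneg _)).mp hrow k hk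
  ext k j
  simpa using Complex.normSq_eq_zero.mp (h3 j (Finset.mem_univ j) k (Finset.mem_univ k))

lemma trace_eq_sum_eigenvalues {σ : Matrix (Fin n) (Fin n) ℂ} (hσ : σ.IsHermitian) :
    σ.trace = ∑ i, (hσ.eigenvalues i : ℂ) := by
  conv_lhs => rw [← matFun_id hσ]
  rw [matFun_trace]

lemma posSemidef_trace_nonneg {σ : Matrix (Fin n) (Fin n) ℂ} (hσ : σ.PosSemidef) :
    0 ≤ σ.trace := by
  rw [trace_eq_sum_eigenvalues hσ.1]
  exact Finset.sum_nonneg fun i _ =>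
    Complex.zero_le_real.mpr (hσ.eigenvalues_nonneg i)

lemma posSemidef_trace_zero {σ : Matrix (Fin n) (Fin n) ℂ} (hσ : σ.PosSemidef)
    (h : σ.trace = 0) : σ = 0 := by
  rw [trace_eq_sum_eigenvalues hσ.1] at h
  have h2 : (∑ i, hσ.1.eigenvalues i : ℝ) = 0 := by exact_mod_cast h
  have h3 : ∀ i ∈ Finset.univ, hσ.1.eigenvalues i = (0:ℝ) :=
    (Finset.sum_eq_zero_iff_of_nonneg (fun i _ => hσ.eigenvalues_nonneg i)).mp h2
  calc σ = matFun hσ.1 (fun x => x) := (matFun_id hσ.1).symm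
    _ = matFun hσ.1 0 := matFun_congr _ _ _ (fun i => h3 i (Finset.mem_univ i))
    _ = 0 := matFun_zero _

lemma eigenvalues_mem_Icc {σ : Matrix (Fin n) (Fin n) ℂ} (hσ : σ.PosSemidef)
    (htr : σ.trace = 1) (i : Fin n) : hσ.1.eigenvalues i ∈ Set.Icc (0:ℝ) 1 := by
  have hsum : (∑ j, hσ.1.eigenvalues j : ℝ) = 1 := by
    have := (trace_eq_sum_eigenvalues hσ.1).symm.trans htr
    exact_mod_cast this
  refine ⟨hσ.eigenvalues_nonneg i, ?_⟩
  rw [← hsum]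
  exact Finset.single_le_sum (fun j _ => hσ.eigenvalues_nonneg j) (Finset.mem_univ i)

open scoped Classical in
/-- Total function: the positive semidefinite square root. -/
noncomputable def msqrt (σ : Matrix (Fin n) (Fin n) ℂ) : Matrix (Fin n) (Fin n) ℂ :=
  if h : σ.PosSemidef then matFun h.1 Real.sqrt else 0

lemma msqrt_of_posSemidef {σ : Matrix (Fin n) (Fin n) ℂ} (h : σ.PosSemidef) :
    msqrt σ = matFun h.1 Real.sqrt := by
  unfold msqrt
  rw [dif_pos h]

lemma msqrt_tendsto (T : Set (Matrix (Fin n) (Fin n) ℂ))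
    (hT : ∀ σ ∈ T, σ.PosSemidef ∧ σ.trace = 1) {τ : Matrix (Fin n) (Fin n) ℂ} (hτT : τ ∈ T) :
    Filter.Tendsto msqrt (nhdsWithin τ T) (nhds (msqrt τ)) := by
  obtain ⟨hτ, hτtr⟩ := hT τ hτT
  rw [show (nhds (msqrt τ)) = @nhds (Matrix (Fin n) (Fin n) ℂ) _ (msqrt τ) from rfl]
  refine tendsto_pi_nhds.mpr fun i => tendsto_pi_nhds.mpr fun j => ?_
  rw [Metric.tendsto_nhds]
  intro ε hε
  -- choose a polynomial approximating sqrt on [0,1]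
  set δ : ℝ := ε / (4 * (n + 1)) with hδdef
  have hδ : 0 < δ := by positivity
  obtain ⟨p, hp⟩ := exists_polynomial_near_of_continuousOn 0 1 Real.sqrt
    Real.continuous_sqrt.continuousOn δ hδ
  set m : ℕ := p.natDegree + 1 with hm
  set PM : Matrix (Fin n) (Fin n) ℂ → Matrix (Fin n) (Fin n) ℂ :=
    fun σ => ∑ k ∈ range m, ((p.coeff k : ℝ) : ℂ) • σ ^ k with hPM
  have hPMcont : Continuous PM :=
    continuous_finset_sum _ fun k _ => (continuous_pow k).const_smul ((p.coeff k : ℝ) : ℂ)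
  -- error bound for matrices in T
  have hkey : ∀ σ ∈ T, ‖(msqrt σ - PM σ) i j‖ ≤ n * δ := by
    intro σ hσT
    obtain ⟨hσ, hσtr⟩ := hT σ hσT
    have h1 : PM σ = matFun hσ.1 (fun x => p.eval x) := (matFun_poly hσ.1 p).symm
    have h2 : msqrt σ - PM σ = matFun hσ.1 (Real.sqrt - fun x => p.eval x) := by
      rw [msqrt_of_posSemidef hσ, h1, matFun_sub]
    rw [h2]
    refine matFun_entry_abs_le hσ.1 _ (fun k => ?_) i j
    have hmem := eigenvalues_mem_Icc hσ hσtr k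
    have := hp _ hmem
    rw [Pi.sub_apply]
    rw [abs_sub_comm]
    exact le_of_lt this
  -- continuity of the polynomial part
  have hPMij : Filter.Tendsto (fun σ => PM σ i j) (nhdsWithin τ T) (nhds (PM τ i j)) :=
    ((hPMcont.matrix_elem i j).continuousAt.tendsto).mono_left nhdsWithin_le_nhds
  have hhalf : (0:ℝ) < ε / 2 := by positivity
  have hev1 : ∀ᶠ σ in nhdsWithin τ T, dist (PM σ i j) (PM τ i j) < ε / 2 :=
    (Metric.tendsto_nhds.mp hPMij) (ε/2) hhalf
  have hev2 : ∀ᶠ σ in nhdsWithin τ T, σ ∈ T := eventually_mem_nhdsWithin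
  filter_upwards [hev1, hev2] with σ hd hσT
  have e1 := hkey σ hσT
  have e2 := hkey τ hτT
  have hn1 : (0:ℝ) < (n:ℝ) + 1 := by positivity
  have hnd : (n:ℝ) * δ ≤ ε / 4 := by
    have h2 : (n:ℝ) / (4*((n:ℝ)+1)) ≤ 1/4 := by
      rw [div_le_div_iff₀ (by positivity) (by norm_num)]
      linarith [Nat.cast_nonneg (α := ℝ) n]
    calc (n:ℝ) * δ = ε * ((n:ℝ)/(4*((n:ℝ)+1))) := by rw [hδdef]; ring
      _ ≤ ε * (1/4) := mul_le_mul_of_nonneg_left h2 (le_of_lt hε)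
      _ = ε/4 := by ring
  have tri : dist (msqrt σ i j) (msqrt τ i j) ≤
      ‖(msqrt σ - PM σ) i j‖ + dist (PM σ i j) (PM τ i j) +
        ‖(msqrt τ - PM τ) i j‖ := by
    rw [Complex.dist_eq, Complex.dist_eq]
    have h4 : msqrt σ i j - msqrt τ i j = ((msqrt σ - PM σ) i j) + (PM σ i j - PM τ i j) -
        ((msqrt τ - PM τ) i j) := by
      simp only [Matrix.sub_apply]
      ring
    rw [h4]
    calc ‖(msqrt σ - PM σ) i j + (PM σ i j - PM τ i j) - (msqrt τ - PM τ) i j‖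
        ≤ ‖(msqrt σ - PM σ) i j + (PM σ i j - PM τ i j)‖ +
            ‖(msqrt τ - PM τ) i j‖ := by
          have h5 := norm_add_le ((msqrt σ - PM σ) i j + (PM σ i j - PM τ i j))
            (-((msqrt τ - PM τ) i j))
          rw [← sub_eq_add_neg, norm_neg] at h5
          exact h5
      _ ≤ _ :=
          add_le_add_left (norm_add_le _ _) _
  have hlt : ‖(msqrt σ - PM σ) i j‖ + dist (PM σ i j) (PM τ i j) +
      ‖(msqrt τ - PM τ) i j‖ < ε := by linarith
  exact lt_of_le_of_lt tri hlt

end ProjOpen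

open ProjOpen in
theorem starSubalgebra_projection_open' (n : ℕ)
    (A : StarSubalgebra ℂ (Matrix (Fin n) (Fin n) ℂ))
    (D : Set (Matrix (Fin n) (Fin n) ℂ))
    (hD : D = {ρ | ρ.PosSemidef ∧ ρ.trace = 1})
    (π : Matrix (Fin n) (Fin n) ℂ → Matrix (Fin n) (Fin n) ℂ)
    (hπmem : ∀ M, π M ∈ A)
    (hπorth : ∀ M, ∀ B ∈ A, (Bᴴ * (M - π M)).trace = 0) :
    ∀ U : Set (Matrix (Fin n) (Fin n) ℂ), IsOpen U → ∃ V, IsOpen V ∧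
      π '' (U ∩ D) = V ∩ (D ∩ (A : Set (Matrix (Fin n) (Fin n) ℂ))) := by
  classical
  intro U hU
  set T : Set (Matrix (Fin n) (Fin n) ℂ) := D ∩ (A : Set (Matrix (Fin n) (Fin n) ℂ)) with hTdef
  -- uniqueness of the orthogonal projection
  have uniq : ∀ (M b : Matrix (Fin n) (Fin n) ℂ), b ∈ A →
      (∀ B ∈ A, (Bᴴ * (M - b)).trace = 0) → π M = b := by
    intro M b hb hOrth
    have hd : π M - b ∈ A := sub_mem (hπmem M) hb
    have h1 := hOrth _ hd
    have h2 := hπorth M _ hd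
    have h3 : ((π M - b)ᴴ * (π M - b)).trace = 0 := by
      have hsplit : (π M - b)ᴴ * (π M - b) =
          (π M - b)ᴴ * (M - b) - (π M - b)ᴴ * (M - π M) := by noncomm_ring
      rw [hsplit, trace_sub, h1, h2, sub_zero]
    exact sub_eq_zero.mp (eq_zero_of_trace_conjTranspose_mul_self h3)
  have projA : ∀ b ∈ A, π b = b := by
    intro b hb
    exact uniq b b hb (by intro B hB; simp)
  have projAdd : ∀ X Y, π (X + Y) = π X + π Y := by
    intro X Y
    refine uniq _ _ (add_mem (hπmem X) (hπmem Y)) ?_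
    intro B hB
    have h1 := hπorth X B hB
    have h2 := hπorth Y B hB
    have h3 : Bᴴ * (X + Y - (π X + π Y)) = Bᴴ * (X - π X) + Bᴴ * (Y - π Y) := by noncomm_ring
    rw [h3, trace_add, h1, h2, add_zero]
  have projConj : ∀ (X G H : Matrix (Fin n) (Fin n) ℂ), G ∈ A → H ∈ A →
      π (G * X * H) = G * π X * H := by
    intro X G H hG hH
    refine uniq _ _ (mul_mem (mul_mem hG (hπmem X)) hH) ?_
    intro B hB
    have hB' : star G * B * star H ∈ A := mul_mem (mul_mem (star_mem hG) hB) (star_mem hH)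
    have h0 := hπorth X _ hB'
    have heq : (star G * B * star H)ᴴ * (X - π X) = H * Bᴴ * G * (X - π X) := by
      simp only [star_eq_conjTranspose, conjTranspose_mul, conjTranspose_conjTranspose]
      noncomm_ring
    rw [heq] at h0
    calc (Bᴴ * (G * X * H - G * π X * H)).trace
        = (Bᴴ * G * (X - π X) * H).trace := by
          rw [show Bᴴ * (G * X * H - G * π X * H) = Bᴴ * G * (X - π X) * H from by noncomm_ring]
      _ = (H * (Bᴴ * G * (X - π X))).trace := trace_mul_comm _ _
      _ = (H * Bᴴ * G * (X - π X)).trace := by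
          rw [show H * (Bᴴ * G * (X - π X)) = H * Bᴴ * G * (X - π X) from by noncomm_ring]
      _ = 0 := h0
  have projStar : ∀ M, π Mᴴ = (π M)ᴴ := by
    intro M
    refine uniq _ _ (by rw [← star_eq_conjTranspose]; exact star_mem (hπmem M)) ?_
    intro B hB
    have h0 := hπorth M _ (star_mem hB)
    have hBB : (star B)ᴴ = B := by rw [← star_eq_conjTranspose, star_star]
    rw [hBB] at h0
    have heq : Bᴴ * (Mᴴ - (π M)ᴴ) = ((M - π M) * B)ᴴ := by
      rw [conjTranspose_mul, ← conjTranspose_sub]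
    rw [heq, trace_conjTranspose]
    have h1 : ((M - π M) * B).trace = 0 := by
      rw [trace_mul_comm]
      exact h0
    rw [h1, star_zero]
  have projTrace : ∀ M, (π M).trace = M.trace := by
    intro M
    have h0 := hπorth M 1 (one_mem A)
    rw [conjTranspose_one, one_mul, trace_sub, sub_eq_zero] at h0
    exact h0.symm
  have projPSD : ∀ M, M.PosSemidef → (π M).PosSemidef := by
    intro M hM
    have hπMh : (π M).IsHermitian := by
      rw [Matrix.IsHermitian, ← projStar M, hM.1.eq]
    set f : ℝ → ℝ := fun x => if x < 0 then 1 else 0 with hf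
    have hqA : matFun hπMh f ∈ A := matFun_mem hπMh f A (hπmem M)
    have hqconjT : (matFun hπMh f)ᴴ = matFun hπMh f := by
      rw [← star_eq_conjTranspose, matFun_star]
    have hqq : matFun hπMh f * matFun hπMh f = matFun hπMh f := by
      rw [matFun_mul]
      refine matFun_congr _ _ _ (fun i => ?_)
      by_cases h : hπMh.eigenvalues i < 0 <;> simp [hf, h]
    have h0 := hπorth M _ hqA
    rw [hqconjT, mul_sub, trace_sub, sub_eq_zero] at h0
    have h1 : 0 ≤ (matFun hπMh f * M).trace := by
      have hpsd0 := hM.conjTranspose_mul_mul_same (matFun hπMh f)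
      rw [hqconjT] at hpsd0
      have htr : (matFun hπMh f * M * matFun hπMh f).trace = (matFun hπMh f * M).trace := by
        rw [trace_mul_cycle, hqq]
      calc (0:ℂ) ≤ (matFun hπMh f * M * matFun hπMh f).trace := posSemidef_trace_nonneg hpsd0
        _ = _ := htr
    have h2 : (matFun hπMh f * π M).trace =
        ((∑ i, f (hπMh.eigenvalues i) * hπMh.eigenvalues i : ℝ) : ℂ) := by
      have e := matFun_mul hπMh f (fun x => x)
      rw [matFun_id hπMh] at e
      rw [e, matFun_trace]
      push_cast
      refine Finset.sum_congr rfl fun i _ => ?_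
      rw [Pi.mul_apply, Complex.ofReal_mul]
    have h3 : 0 ≤ (∑ i, f (hπMh.eigenvalues i) * hπMh.eigenvalues i : ℝ) := by
      have h4 := h1
      rw [h0, h2] at h4
      exact Complex.zero_le_real.mp h4
    have h4 : ∀ i, 0 ≤ hπMh.eigenvalues i := by
      intro i
      by_contra hneg
      push_neg at hneg
      have h5 : (∑ j, f (hπMh.eigenvalues j) * hπMh.eigenvalues j) <
          (∑ _j : Fin n, (0:ℝ)) := by
        refine Finset.sum_lt_sum (fun j _ => ?_) ⟨i, Finset.mem_univ i, ?_⟩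
        · by_cases hj : hπMh.eigenvalues j < 0
          · simp only [hf, if_pos hj, one_mul]
            linarith
          · simp [hf, hj]
        · simp only [hf, if_pos hneg, one_mul]
          linarith
      rw [Finset.sum_const, smul_zero] at h5
      linarith
    exact (Matrix.IsHermitian.posSemidef_iff_eigenvalues_nonneg hπMh).mpr h4
  -- π maps D into T
  have hTfacts : ∀ σ ∈ T, σ.PosSemidef ∧ σ.trace = 1 := by
    intro σ hσ
    have h := hσ.1
    rw [hD] at h
    exact h
  have projD : ∀ ρ ∈ D, π ρ ∈ T := by
    intro ρ hρ
    rw [hD] at hρ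
    refine ⟨?_, hπmem ρ⟩
    rw [hD]
    exact ⟨projPSD ρ hρ.1, by rw [projTrace, hρ.2]⟩
  -- the key local-section step
  have key : ∀ ρ ∈ U ∩ D, ∃ W : Set (Matrix (Fin n) (Fin n) ℂ), IsOpen W ∧ π ρ ∈ W ∧
      ∀ σ ∈ W ∩ T, σ ∈ π '' (U ∩ D) := by
    intro ρ hρ
    obtain ⟨hρU, hρD⟩ := hρ
    have hρD' := hρD
    rw [hD] at hρD'
    obtain ⟨hρpsd, hρtr⟩ := hρD'
    set τ := π ρ with hτdef
    have hτT : τ ∈ T := projD ρ hρD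
    have hτpsd : τ.PosSemidef := (hTfacts τ hτT).1
    have hτtr : τ.trace = 1 := (hTfacts τ hτT).2
    have hτA : τ ∈ A := hπmem ρ
    set ginv : ℝ → ℝ := fun x => if x = 0 then 0 else (Real.sqrt x)⁻¹ with hginv
    set pf : ℝ → ℝ := fun x => if x = 0 then 0 else 1 with hpf
    set Q := matFun hτpsd.1 ginv with hQ
    set P := matFun hτpsd.1 pf with hP
    have hQA : Q ∈ A := matFun_mem hτpsd.1 ginv A hτA
    have hPA : P ∈ A := matFun_mem hτpsd.1 pf A hτA
    have hQconjT : Qᴴ = Q := by rw [hQ, ← star_eq_conjTranspose, matFun_star]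
    have hPconjT : Pᴴ = P := by rw [hP, ← star_eq_conjTranspose, matFun_star]
    have h1mP : (1:Matrix (Fin n) (Fin n) ℂ) - P = matFun hτpsd.1 (1 - pf) := by
      rw [hP, ← matFun_sub, matFun_one]
    set C := Q * ρ * Q + (1 - P) with hC
    have hQτQ : Q * τ * Q = P := by
      have e : matFun hτpsd.1 ginv * matFun hτpsd.1 (fun x => x) * matFun hτpsd.1 ginv =
          matFun hτpsd.1 pf := by
        rw [matFun_mul, matFun_mul]
        refine matFun_congr _ _ _ (fun i => ?_)
        have hnn := hτpsd.eigenvalues_nonneg i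
        by_cases h : hτpsd.1.eigenvalues i = 0
        · simp [hginv, hpf, h]
        · have hpos : 0 < hτpsd.1.eigenvalues i := lt_of_le_of_ne hnn (Ne.symm h)
          have hsq : Real.sqrt (hτpsd.1.eigenvalues i) * Real.sqrt (hτpsd.1.eigenvalues i) =
              hτpsd.1.eigenvalues i := Real.mul_self_sqrt hnn
          have hsne : Real.sqrt (hτpsd.1.eigenvalues i) ≠ 0 :=
            ne_of_gt (Real.sqrt_pos.mpr hpos)
          simp only [Pi.mul_apply, hginv, hpf, if_neg h]
          rw [← hsq]
          field_simp
          rw [Real.sqrt_sq (Real.sqrt_nonneg _)]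
      rw [matFun_id hτpsd.1] at e
      rw [hQ, hP]
      exact e
    have hπC : π C = 1 := by
      rw [hC, projAdd]
      have h1 : π (Q * ρ * Q) = Q * τ * Q := by
        rw [projConj ρ Q Q hQA hQA]
      have h2 : π (1 - P) = 1 - P := projA _ (sub_mem (one_mem A) hPA)
      rw [h1, h2, hQτQ]
      abel
    have hCpsd : C.PosSemidef := by
      rw [hC]
      apply Matrix.PosSemidef.add
      · have h := hρpsd.conjTranspose_mul_mul_same Q
        rwa [hQconjT] at h
      · rw [h1mP]
        refine matFun_posSemidef _ _ (fun i => ?_)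
        by_cases h : hτpsd.1.eigenvalues i = 0 <;> simp [hpf, h]
    -- the local section
    set sfun : Matrix (Fin n) (Fin n) ℂ → Matrix (Fin n) (Fin n) ℂ :=
      fun σ => msqrt σ * C * msqrt σ with hsfun
    have hsτ : msqrt τ * C * msqrt τ = ρ := by
      have hmsq : msqrt τ = matFun hτpsd.1 Real.sqrt := msqrt_of_posSemidef hτpsd
      have hsqQ : msqrt τ * Q = P := by
        rw [hmsq, hQ, hP, matFun_mul]
        refine matFun_congr _ _ _ (fun i => ?_)
        have hnn := hτpsd.eigenvalues_nonneg i
        by_cases h : hτpsd.1.eigenvalues i = 0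
        · simp [hginv, hpf, h]
        · have hpos : 0 < hτpsd.1.eigenvalues i := lt_of_le_of_ne hnn (Ne.symm h)
          have hsne : Real.sqrt (hτpsd.1.eigenvalues i) ≠ 0 :=
            ne_of_gt (Real.sqrt_pos.mpr hpos)
          simp only [Pi.mul_apply, hginv, hpf, if_neg h]
          field_simp
      have hQsq : Q * msqrt τ = P := by
        rw [hmsq, hQ, hP, matFun_mul]
        refine matFun_congr _ _ _ (fun i => ?_)
        have hnn := hτpsd.eigenvalues_nonneg i
        by_cases h : hτpsd.1.eigenvalues i = 0
        · simp [hginv, hpf, h]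
        · have hpos : 0 < hτpsd.1.eigenvalues i := lt_of_le_of_ne hnn (Ne.symm h)
          have hsne : Real.sqrt (hτpsd.1.eigenvalues i) ≠ 0 :=
            ne_of_gt (Real.sqrt_pos.mpr hpos)
          simp only [Pi.mul_apply, hginv, hpf, if_neg h]
          field_simp
      have hsqPsq : msqrt τ * (1 - P) * msqrt τ = 0 := by
        rw [hmsq, h1mP, matFun_mul, matFun_mul]
        rw [show (0 : Matrix (Fin n) (Fin n) ℂ) = matFun hτpsd.1 0 from (matFun_zero _).symm]
        refine matFun_congr _ _ _ (fun i => ?_)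
        by_cases h : hτpsd.1.eigenvalues i = 0
        · simp [hpf, h]
        · simp [hpf, h]
      have hexp : msqrt τ * C * msqrt τ =
          (msqrt τ * Q) * ρ * (Q * msqrt τ) + msqrt τ * (1 - P) * msqrt τ := by
        rw [hC]
        noncomm_ring
      rw [hexp, hsqQ, hQsq, hsqPsq, add_zero]
      -- now : P * ρ * P = ρ
      have h1mPA : (1:Matrix (Fin n) (Fin n) ℂ) - P ∈ A := sub_mem (one_mem A) hPA
      have h1mPconjT : ((1:Matrix (Fin n) (Fin n) ℂ) - P)ᴴ = 1 - P := by
        rw [conjTranspose_sub, conjTranspose_one, hPconjT]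
      have hPP : ((1:Matrix (Fin n) (Fin n) ℂ) - P) * (1 - P) = 1 - P := by
        have hPP0 : P * P = P := by
          rw [hP, matFun_mul]
          refine matFun_congr _ _ _ (fun i => ?_)
          by_cases h : hτpsd.1.eigenvalues i = 0 <;> simp [hpf, h]
        rw [sub_mul, one_mul, mul_sub, mul_one, hPP0, sub_self, sub_zero]
      have htr0 : (((1:Matrix (Fin n) (Fin n) ℂ) - P) * ρ).trace = 0 := by
        have h0 := hπorth ρ _ h1mPA
        rw [h1mPconjT, mul_sub, trace_sub, sub_eq_zero, ← hτdef] at h0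
        rw [h0]
        have e := matFun_mul hτpsd.1 (1 - pf) (fun x => x)
        rw [matFun_id hτpsd.1] at e
        rw [h1mP, e, matFun_trace]
        refine Finset.sum_eq_zero (fun i _ => ?_)
        by_cases h : hτpsd.1.eigenvalues i = 0 <;> simp [hpf, h]
      have hXpsd : (((1:Matrix (Fin n) (Fin n) ℂ) - P) * ρ * (1 - P)).PosSemidef := by
        have h := hρpsd.conjTranspose_mul_mul_same ((1:Matrix (Fin n) (Fin n) ℂ) - P)
        rwa [h1mPconjT] at h
      have hXtr : (((1:Matrix (Fin n) (Fin n) ℂ) - P) * ρ * (1 - P)).trace = 0 := by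
        rw [trace_mul_cycle, hPP, htr0]
      have hX0 : ((1:Matrix (Fin n) (Fin n) ℂ) - P) * ρ * (1 - P) = 0 :=
        posSemidef_trace_zero hXpsd hXtr
      set R := matFun hρpsd.1 Real.sqrt with hR
      have hRR : R * R = ρ := by
        rw [hR, matFun_mul]
        exact (matFun_congr _ _ _ (fun i => Real.mul_self_sqrt (hρpsd.eigenvalues_nonneg i))).trans
          (matFun_id hρpsd.1)
      have hRconjT : Rᴴ = R := by rw [hR, ← star_eq_conjTranspose, matFun_star]
      have h6 : R * (1 - P) = 0 := by
        apply conjTranspose_mul_self_eq_zero.mp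
        rw [conjTranspose_mul, h1mPconjT, hRconjT,
          show ((1:Matrix (Fin n) (Fin n) ℂ) - P) * R * (R * (1 - P)) =
            (1 - P) * (R * R) * (1 - P) from by noncomm_ring, hRR, hX0]
      have h7 : ρ * (1 - P) = 0 := by
        have h8 : R * (R * (1 - P)) = 0 := by rw [h6, mul_zero]
        rwa [← mul_assoc, hRR] at h8
      have h8 : ρ = ρ * P := by
        rw [mul_sub, mul_one] at h7
        exact sub_eq_zero.mp h7
      have h9 : P * ρ = ρ := by
        have h10 := congrArg conjTranspose h8
        rw [conjTranspose_mul, hPconjT, hρpsd.1.eq] at h10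
        exact h10.symm
      rw [mul_assoc, ← h8, h9]
    -- continuity of the section at τ within T
    have hcont : Filter.Tendsto sfun (nhdsWithin τ T) (nhds ρ) := by
      have h1 := msqrt_tendsto T hTfacts hτT
      have h2 : Filter.Tendsto sfun (nhdsWithin τ T) (nhds (msqrt τ * C * msqrt τ)) :=
        (h1.mul tendsto_const_nhds).mul h1
      rwa [hsτ] at h2
    have hev : ∀ᶠ σ in nhdsWithin τ T, sfun σ ∈ U := hcont (hU.mem_nhds hρU)
    rw [eventually_nhdsWithin_iff, eventually_nhds_iff] at hev
    obtain ⟨W, hW1, hWopen, hτW⟩ := hev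
    refine ⟨W, hWopen, hτW, ?_⟩
    rintro σ ⟨hσW, hσT⟩
    have hsσU : sfun σ ∈ U := hW1 σ hσW hσT
    obtain ⟨hσpsd, hσtr⟩ := hTfacts σ hσT
    have hσA : σ ∈ A := hσT.2
    have hmsq : msqrt σ = matFun hσpsd.1 Real.sqrt := msqrt_of_posSemidef hσpsd
    have hsqA : msqrt σ ∈ A := by rw [hmsq]; exact matFun_mem hσpsd.1 Real.sqrt A hσA
    have hsqconjT : (msqrt σ)ᴴ = msqrt σ := by rw [hmsq, ← star_eq_conjTranspose, matFun_star]
    have hsqsq : msqrt σ * msqrt σ = σ := by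
      have e : matFun hσpsd.1 Real.sqrt * matFun hσpsd.1 Real.sqrt =
          matFun hσpsd.1 (fun x => x) := by
        rw [matFun_mul]
        refine matFun_congr _ _ _ (fun i => ?_)
        rw [Pi.mul_apply]
        exact Real.mul_self_sqrt (hσpsd.eigenvalues_nonneg i)
      rw [matFun_id hσpsd.1] at e
      rw [hmsq]
      exact e
    have hπs : π (sfun σ) = σ := by
      show π (msqrt σ * C * msqrt σ) = σ
      rw [projConj C _ _ hsqA hsqA, hπC, mul_one, hsqsq]
    have hsPSD : (sfun σ).PosSemidef := by
      have h := hCpsd.conjTranspose_mul_mul_same (msqrt σ)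
      rwa [hsqconjT] at h
    have hstr : (sfun σ).trace = 1 := by
      have h0 := hπorth C σ hσA
      rw [hσpsd.1.eq, hπC, mul_sub, mul_one, trace_sub, sub_eq_zero] at h0
      calc (sfun σ).trace = (msqrt σ * msqrt σ * C).trace := trace_mul_cycle _ _ _
        _ = (σ * C).trace := by rw [hsqsq]
        _ = σ.trace := h0
        _ = 1 := hσtr
    refine ⟨sfun σ, ⟨hsσU, ?_⟩, hπs⟩
    rw [hD]
    exact ⟨hsPSD, hstr⟩
  -- assemble the open set V
  choose W hWopen hWmem hWsub using key
  refine ⟨⋃ (ρ : Matrix (Fin n) (Fin n) ℂ) (hρ : ρ ∈ U ∩ D), W ρ hρ,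
    isOpen_iUnion fun ρ => isOpen_iUnion fun hρ => hWopen ρ hρ, ?_⟩
  ext σ
  constructor
  · rintro ⟨ρ, hρ, rfl⟩
    exact ⟨Set.mem_iUnion.mpr ⟨ρ, Set.mem_iUnion.mpr ⟨hρ, hWmem ρ hρ⟩⟩, projD ρ hρ.2⟩
  · rintro ⟨hσV, hσT⟩
    obtain ⟨ρ, hρmem⟩ := Set.mem_iUnion.mp hσV
    obtain ⟨hρ, hσW⟩ := Set.mem_iUnion.mp hρmem
    exact hWsub ρ hρ σ ⟨hσW, hσT⟩

/-- If `A` is a *-subalgebra of `M_n` (containing the identity), then the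
orthogonal projection `D(M_n) → D(A) = D(M_n) ∩ A` w.r.t. the Frobenius inner
product is an open map. -/
theorem starSubalgebra_projection_open (n : ℕ)
    (A : StarSubalgebra ℂ (Matrix (Fin n) (Fin n) ℂ))
    (D : Set (Matrix (Fin n) (Fin n) ℂ))
    (hD : D = {ρ | ρ.PosSemidef ∧ ρ.trace = 1})
    (π : Matrix (Fin n) (Fin n) ℂ → Matrix (Fin n) (Fin n) ℂ)
    (hπmem : ∀ M, π M ∈ A)
    (hπorth : ∀ M, ∀ B ∈ A, (Bᴴ * (M - π M)).trace = 0) :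
    RelOpenMap π D (D ∩ (A : Set (Matrix (Fin n) (Fin n) ℂ))) := by
  intro U hU
  exact starSubalgebra_projection_open' n A D hD π hπmem hπorth U hU
end

section
/- For the matrix system R = span_ℂ(1₃, X ⊕ 1, Z ⊕ 0) in M₃ (X, Z Pauli matrices), the restriction map S(M₃) → S(R), ℓ ↦ ℓ|_R, is not open at the state ω_λ represented by the density matrix (1−λ)|+⟩⟨+| ⊕ λ, for every λ ∈ (0,1]. -/
open Matrix ComplexOrder

noncomputable def vrow (t : ℝ) : Matrix (Fin 1) (Fin 3) ℂ :=
  !![(Real.cos t : ℂ), (Real.sin t : ℂ), 0]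

noncomputable def sig (t : ℝ) : Matrix (Fin 3) (Fin 3) ℂ := (vrow t)ᴴ * vrow t

lemma trace_row_psd (u : Matrix (Fin 1) (Fin 3) ℂ) {A : Matrix (Fin 3) (Fin 3) ℂ}
    (hA : A.PosSemidef) : 0 ≤ ((uᴴ * u) * A).trace := by
  have h := (posSemidef_iff_dotProduct_mulVec.mp hA).2 (star (u 0))
  rw [star_star] at h
  refine le_of_le_of_eq h ?_
  simp [Matrix.trace, Matrix.mul_apply, dotProduct, Matrix.mulVec, Fin.sum_univ_three,
    Fin.sum_univ_one, Matrix.conjTranspose_apply, Pi.star_apply]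
  ring

lemma trace_sig (t : ℝ) (B : Matrix (Fin 3) (Fin 3) ℂ) :
    (sig t * B).trace = ((Real.cos t * Real.cos t : ℝ) : ℂ) * B 0 0
      + ((Real.cos t * Real.sin t : ℝ) : ℂ) * (B 0 1 + B 1 0)
      + ((Real.sin t * Real.sin t : ℝ) : ℂ) * B 1 1 := by
  simp [sig, vrow, Matrix.trace, Matrix.mul_apply, Fin.sum_univ_three, Fin.sum_univ_one,
    Matrix.conjTranspose_apply, Complex.star_def, ← Complex.cos_conj, ← Complex.sin_conj,
    Complex.conj_ofReal, Complex.ofReal_mul, Complex.ofReal_cos, Complex.ofReal_sin]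
  ring

lemma Epsd : (!![0,0,0;0,0,0;0,0,(1:ℂ)] : Matrix (Fin 3) (Fin 3) ℂ).PosSemidef := by
  have h := posSemidef_conjTranspose_mul_self (!![0,0,(1:ℂ)] : Matrix (Fin 1) (Fin 3) ℂ)
  have he : (!![0,0,0;0,0,0;0,0,(1:ℂ)] : Matrix (Fin 3) (Fin 3) ℂ)
      = (!![0,0,(1:ℂ)] : Matrix (Fin 1) (Fin 3) ℂ)ᴴ * !![0,0,(1:ℂ)] := by
    ext i j
    fin_cases i <;> fin_cases j <;>
      simp [Matrix.mul_apply, Fin.sum_univ_one, Matrix.conjTranspose_apply,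
        Matrix.vecHead, Matrix.vecTail]
  rw [he]; exact h

lemma key_decomp (c s : ℝ) (hp : s*s + c*c = 1) :
    (2:ℂ) • ((!![(s:ℂ), ((-c:ℝ):ℂ), 0] : Matrix (Fin 1) (Fin 3) ℂ)ᴴ *
      !![(s:ℂ), ((-c:ℝ):ℂ), 0])
    = 1 - ((2*c*s : ℝ):ℂ) • !![0, 1, 0; 1, 0, 0; 0, 0, 1]
      - ((c*c - s*s : ℝ):ℂ) • !![1, 0, 0; 0, -1, 0; 0, 0, 0]
      - ((1-2*c*s : ℝ):ℂ) • !![0,0,0;0,0,0;0,0,(1:ℂ)] := by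
  ext i j
  fin_cases i <;> fin_cases j <;>
    simp [Matrix.mul_apply, Fin.sum_univ_one, Matrix.conjTranspose_apply,
      Matrix.one_apply, Matrix.vecHead, Matrix.vecTail, Complex.star_def,
      Complex.conj_ofReal] <;>
    norm_cast <;> push_cast <;> ring_nf <;> nlinarith [hp]

/-- For the matrix system `R = span_ℂ(1₃, X ⊕ 1, Z ⊕ 0)` in `M₃`, the
restriction map `S(M₃) → S(R)`, `ℓ ↦ ℓ|_R`, is not open at the state `ω_λ`
represented by the density matrix `(1−λ)|+⟩⟨+| ⊕ λ`, for every `λ ∈ (0,1]`: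
there is a neighborhood of `ω_λ` in `S(M₃)` whose image is not a neighborhood
of `ω_λ|_R` in `S(R)`. -/
theorem restriction_not_open_example (lam : ℝ) (h0 : 0 < lam) (h1 : lam ≤ 1)
    (M₁ M₂ : Matrix (Fin 3) (Fin 3) ℂ)
    (hM₁ : M₁ = !![0, 1, 0; 1, 0, 0; 0, 0, 1])
    (hM₂ : M₂ = !![1, 0, 0; 0, -1, 0; 0, 0, 0])
    (R : Submodule ℂ (Matrix (Fin 3) (Fin 3) ℂ))
    (hR : R = Submodule.span ℂ {(1 : Matrix (Fin 3) (Fin 3) ℂ), M₁, M₂})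
    (SM : Set (Matrix (Fin 3) (Fin 3) ℂ → ℂ))
    (hSM : SM = {ℓ | IsLinearMap ℂ ℓ ∧
      (∀ A : Matrix (Fin 3) (Fin 3) ℂ, A.PosSemidef → 0 ≤ ℓ A) ∧ ℓ 1 = 1})
    (SR : Set (↥R → ℂ))
    (hSR : SR = {s | IsLinearMap ℂ s ∧
      (∀ A : ↥R, (A : Matrix (Fin 3) (Fin 3) ℂ).PosSemidef → 0 ≤ s A) ∧
      ∀ h : (1 : Matrix (Fin 3) (Fin 3) ℂ) ∈ R, s ⟨1, h⟩ = 1})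
    (restr : (Matrix (Fin 3) (Fin 3) ℂ → ℂ) → (↥R → ℂ))
    (hrestr : restr = fun ℓ A => ℓ (A : Matrix (Fin 3) (Fin 3) ℂ))
    (ρlam : Matrix (Fin 3) (Fin 3) ℂ)
    (hρ : ρlam = !![(((1 - lam) / 2 : ℝ) : ℂ), (((1 - lam) / 2 : ℝ) : ℂ), 0;
                    (((1 - lam) / 2 : ℝ) : ℂ), (((1 - lam) / 2 : ℝ) : ℂ), 0;
                    0, 0, (lam : ℂ)])
    (ω : Matrix (Fin 3) (Fin 3) ℂ → ℂ)
    (hω : ω = fun B => (ρlam * B).trace) :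
    ∃ N ∈ nhdsWithin ω SM, restr '' (N ∩ SM) ∉ nhdsWithin (restr ω) SR := by
  classical
  have hM1R : M₁ ∈ R := by
    rw [hR]; exact Submodule.subset_span (by simp)
  have hM2R : M₂ ∈ R := by
    rw [hR]; exact Submodule.subset_span (by simp)
  -- the candidate state family
  have hSstate : ∀ t : ℝ,
      (fun A : ↥R => (sig t * (A : Matrix (Fin 3) (Fin 3) ℂ)).trace) ∈ SR := by
    intro t
    rw [hSR]
    refine ⟨⟨?_, ?_⟩, ?_, ?_⟩
    · intro x y
      simp only [Submodule.coe_add, mul_add, trace_add]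
    · intro c x
      simp only [Submodule.coe_smul, mul_smul_comm, trace_smul, smul_eq_mul]
    · intro A hA
      exact trace_row_psd (vrow t) hA
    · intro h
      show (sig t * ((1 : Matrix (Fin 3) (Fin 3) ℂ))).trace = 1
      rw [trace_sig]
      norm_num [Matrix.one_apply]
      norm_cast <;> nlinarith [Real.sin_sq_add_cos_sq t]
  -- restr ω agrees with the family at t = π/4
  have hbase : restr ω = fun A : ↥R =>
      (sig (Real.pi/4) * (A : Matrix (Fin 3) (Fin 3) ℂ)).trace := by
    have key : ∀ B ∈ R, (ρlam * B).trace = (sig (Real.pi/4) * B).trace := by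
      intro B hB
      rw [hR] at hB
      induction hB using Submodule.span_induction with
      | mem x hx =>
        have hc : Real.cos (Real.pi/4) = Real.sqrt 2 / 2 := Real.cos_pi_div_four
        have hs : Real.sin (Real.pi/4) = Real.sqrt 2 / 2 := Real.sin_pi_div_four
        have h2 : Real.sqrt 2 * Real.sqrt 2 = 2 := Real.mul_self_sqrt (by norm_num)
        rcases hx with rfl | rfl | rfl
        · rw [trace_sig, hρ]
          simp [Matrix.trace, Matrix.mul_apply, Fin.sum_univ_three, Matrix.one_apply, hc, hs]
          linear_combination (-1/2:ℂ) * (by exact_mod_cast h2 : (Real.sqrt 2:ℂ) * Real.sqrt 2 = 2)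
        · rw [trace_sig, hρ, hM₁]
          simp [Matrix.trace, Matrix.mul_apply, Fin.sum_univ_three, hc, hs]
          linear_combination (-1/2:ℂ) * (by exact_mod_cast h2 : (Real.sqrt 2:ℂ) * Real.sqrt 2 = 2)
        · rw [trace_sig, hρ, hM₂]
          simp [Matrix.trace, Matrix.mul_apply, Fin.sum_univ_three, hc, hs]
      | zero => simp
      | add x y hx hy ihx ihy => rw [mul_add, mul_add, trace_add, trace_add, ihx, ihy]
      | smul c x hx ih => rw [mul_smul_comm, mul_smul_comm, trace_smul, trace_smul, ih]
    funext A
    rw [hrestr]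
    show ω (A : Matrix (Fin 3) (Fin 3) ℂ) = _
    simp only [hω]
    exact key _ A.2
  -- continuity of the family
  have hcont : Continuous (fun (t : ℝ) (A : ↥R) =>
      (sig t * (A : Matrix (Fin 3) (Fin 3) ℂ)).trace) := by
    apply continuous_pi
    intro A
    have heq : (fun t : ℝ => (sig t * (A : Matrix (Fin 3) (Fin 3) ℂ)).trace) = fun t =>
        ((Real.cos t * Real.cos t : ℝ) : ℂ) * (A : Matrix (Fin 3) (Fin 3) ℂ) 0 0
        + ((Real.cos t * Real.sin t : ℝ) : ℂ)
            * ((A : Matrix (Fin 3) (Fin 3) ℂ) 0 1 + (A : Matrix (Fin 3) (Fin 3) ℂ) 1 0)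
        + ((Real.sin t * Real.sin t : ℝ) : ℂ) * (A : Matrix (Fin 3) (Fin 3) ℂ) 1 1 := by
      funext t; rw [trace_sig]
    rw [heq]
    fun_prop
  set E : Matrix (Fin 3) (Fin 3) ℂ := !![0,0,0;0,0,0;0,0,(1:ℂ)] with hE
  -- the neighborhood N
  refine ⟨(fun ℓ => ℓ E) ⁻¹' Metric.ball (lam : ℂ) (lam/2), ?_, ?_⟩
  · apply mem_nhdsWithin_of_mem_nhds
    apply IsOpen.mem_nhds
    · exact Metric.isOpen_ball.preimage (continuous_apply E)
    · show ω E ∈ Metric.ball (lam : ℂ) (lam/2)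
      have : ω E = (lam : ℂ) := by
        rw [hω, hE, hρ]
        simp [Matrix.trace, Matrix.mul_apply, Fin.sum_univ_three]
      rw [this]
      simpa using by positivity
  · intro hmem
    rw [mem_nhdsWithin] at hmem
    obtain ⟨U, hUo, hU0, hUsub⟩ := hmem
    -- choose t
    have hpre : (fun (t : ℝ) (A : ↥R) =>
        (sig t * (A : Matrix (Fin 3) (Fin 3) ℂ)).trace) ⁻¹' U ∈ nhds (Real.pi/4) :=
      hcont.continuousAt.preimage_mem_nhds (hUo.mem_nhds (hbase ▸ hU0))
    obtain ⟨ε, hε, hball⟩ := Metric.mem_nhds_iff.mp hpre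
    have hπ := Real.pi_pos
    obtain ⟨t, htpos, htlt, htU⟩ : ∃ t : ℝ, 0 < t ∧ t < Real.pi/4 ∧
        (fun A : ↥R => (sig t * (A : Matrix (Fin 3) (Fin 3) ℂ)).trace) ∈ U := by
      refine ⟨Real.pi/4 - min ε (Real.pi/4) / 2, ?_, ?_, ?_⟩
      · have := min_le_right ε (Real.pi/4); linarith
      · have := lt_min hε (by linarith : (0:ℝ) < Real.pi/4); linarith
      · apply hball
        have hd : dist (Real.pi/4 - min ε (Real.pi/4) / 2) (Real.pi/4)
            = min ε (Real.pi/4) / 2 := by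
          rw [Real.dist_eq, abs_of_nonpos (by
            have := lt_min hε (by linarith : (0:ℝ) < Real.pi/4); linarith)]
          ring
        rw [Metric.mem_ball, hd]
        have := min_le_left ε (Real.pi/4)
        linarith
    -- key: 2 cos t sin t < 1
    have hclt : 2 * Real.cos t * Real.sin t < 1 := by
      have hlt : Real.sin (2*t) < Real.sin (Real.pi/2) :=
        Real.sin_lt_sin_of_lt_of_le_pi_div_two (by linarith) (le_refl _) (by linarith)
      rw [Real.sin_two_mul, Real.sin_pi_div_two] at hlt
      linarith
    -- S t is in the image, extract ℓ
    obtain ⟨ℓ, ⟨hℓN, hℓSM⟩, hℓeq⟩ := hUsub ⟨htU, hSstate t⟩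
    rw [hSM] at hℓSM
    obtain ⟨hlin, hpos, hunit⟩ := hℓSM
    have hval : ∀ B (hB : B ∈ R), ℓ B = (sig t * B).trace := by
      intro B hB
      have h := congrFun hℓeq ⟨B, hB⟩
      rw [hrestr] at h
      exact h
    have hpyth : Real.sin t * Real.sin t + Real.cos t * Real.cos t = 1 := by
      nlinarith [Real.sin_sq_add_cos_sq t]
    have hv1 : ℓ M₁ = ((2 * Real.cos t * Real.sin t : ℝ) : ℂ) := by
      rw [hval M₁ hM1R, trace_sig, hM₁]
      simp
      push_cast
      ring
    have hv2 : ℓ M₂ = ((Real.cos t * Real.cos t - Real.sin t * Real.sin t : ℝ) : ℂ) := by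
      rw [hval M₂ hM2R, trace_sig, hM₂]
      simp
      push_cast
      ring
    obtain ⟨c, hc⟩ : ∃ x : ℝ, Real.cos t = x := ⟨_, rfl⟩
    obtain ⟨s, hs⟩ : ∃ x : ℝ, Real.sin t = x := ⟨_, rfl⟩
    rw [hc, hs] at hclt hpyth hv1 hv2
    -- positivity applied to the witness matrix
    have hdec := key_decomp c s hpyth
    have hPnn : 0 ≤ ℓ (1 - ((2*c*s : ℝ):ℂ) • M₁
        - ((c*c - s*s : ℝ):ℂ) • M₂
        - ((1-2*c*s : ℝ):ℂ) • E) := by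
      rw [hM₁, hM₂, hE, ← hdec, hlin.map_smul]
      exact mul_nonneg (by norm_num)
        (hpos _ (posSemidef_conjTranspose_mul_self _))
    have hexp : ℓ (1 - ((2*c*s : ℝ):ℂ) • M₁
        - ((c*c - s*s : ℝ):ℂ) • M₂
        - ((1-2*c*s : ℝ):ℂ) • E)
        = 1 - ((2*c*s : ℝ):ℂ) * ℓ M₁
        - ((c*c - s*s : ℝ):ℂ) * ℓ M₂
        - ((1-2*c*s : ℝ):ℂ) * ℓ E := by
      have e1 := hlin.map_add
      rw [show (1 - ((2*c*s : ℝ):ℂ) • M₁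
        - ((c*c - s*s : ℝ):ℂ) • M₂
        - ((1-2*c*s : ℝ):ℂ) • E)
        = 1 + (-(((2*c*s : ℝ):ℂ)) • M₁
          + (-((c*c - s*s : ℝ):ℂ)) • M₂
          + (-((1-2*c*s : ℝ):ℂ)) • E) from by
        simp only [neg_smul]; abel]
      rw [hlin.map_add, hlin.map_add, hlin.map_add, hlin.map_smul, hlin.map_smul,
        hlin.map_smul, hunit]
      simp only [smul_eq_mul]
      ring
    rw [hexp, hv1, hv2] at hPnn
    -- information about ℓ E
    have hEnn : 0 ≤ ℓ E := hpos E (hE ▸ Epsd)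
    have hEim : (ℓ E).im = 0 := ((Complex.le_def.mp hEnn).2).symm
    have hEre : lam/2 < (ℓ E).re := by
      have hb : ‖ℓ E - (lam : ℂ)‖ < lam/2 := by
        simpa [Metric.mem_ball, Complex.dist_eq] using hℓN
      have hle := Complex.abs_re_le_norm (ℓ E - (lam : ℂ))
      simp only [Complex.sub_re, Complex.ofReal_re] at hle
      have habs := abs_lt.mp (lt_of_le_of_lt hle hb)
      linarith [habs.1]
    -- derive contradiction
    have hre := (Complex.le_def.mp hPnn).1
    have hrec : (1 - ((2*c*s : ℝ):ℂ) * ((2*c*s : ℝ):ℂ)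
        - ((c*c - s*s : ℝ):ℂ)
            * ((c*c - s*s : ℝ):ℂ)
        - ((1-2*c*s : ℝ):ℂ) * ℓ E).re
        = (1 - (2*c*s)*(2*c*s)
          - (c*c - s*s)
              *(c*c - s*s))
          - (1 - 2*c*s) * (ℓ E).re := by
      simp [Complex.sub_re, Complex.mul_re, Complex.ofReal_re, Complex.ofReal_im, hEim]
    rw [hrec] at hre
    simp only [Complex.zero_re] at hre
    have hzero : (1 - (2*c*s)*(2*c*s)
        - (c*c - s*s)
            *(c*c - s*s)) = 0 := by
      linear_combination (-(1 + s*s + c*c)) * hpyth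
    rw [hzero] at hre
    nlinarith [hre, hEre, hclt, h0]
end
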